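/- arXiv:2202.07480 — 2 statements merged into one kernel-verified Lean document; each statement's English description precedes it below -/
import Mathlib

section
/- Let ⟨G, Eℓ⟩ be a two-player game graph with live edges and let C = {C_1, …, C_{2k}} be a parity condition, i.e. the sets C_1, …, C_{2k} ⊆ V are pairwise disjoint and their union is V (C_i is the set of vertices of color i). Define Z* := νY_{2k}. μX_{2k−1}. νY_{2k−2}. μX_{2k−3}. ⋯ νY_2. μX_1. ⋃_{i=1}^{k} [ (C_{2i} ∩ Cpre(Y_{2i})) ∪ ((C_1 ∪ ⋯ ∪ C_{2i−1}) ∩ Apre(Y_{2i}, X_{2i−1})) ]. Then Z* equals the winning region W of Player 0 in the fair adversarial game over ⟨G, Eℓ⟩ for the parity winning condition φ = ⋀_{i∈[1;k]} ( □◇C_{2i−1} → ⋁_{j∈[i;k]} □◇C_{2j} ), i.e. the set of plays along which the maximal color visited infinitely often is even. Moreover, there exists a memoryless Player-0 strategy that wins the fair adversarial game for φ from every vertex of Z*. -/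
/-- Least fixed point of a set transformer (Knaster–Tarski form). -/
def lfpSet {V : Type*} (f : Set V → Set V) : Set V := sInf {X | f X ⊆ X}

/-- Greatest fixed point of a set transformer (Knaster–Tarski form). -/
def gfpSet {V : Type*} (f : Set V → Set V) : Set V := sSup {X | X ⊆ f X}

/-- A two-player game graph with live edges: vertices are partitioned into
Player-0 vertices `V0` and Player-1 vertices `V1`, every vertex has a successor,
and live edges `El` are Player-1 edges. -/
structure LiveGameGraph (V : Type*) where
  V0 : Set V
  V1 : Set V
  E : V → V → Prop
  El : V → V → Prop
  cover : V0 ∪ V1 = Set.univ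
  disj : V0 ∩ V1 = ∅
  succ_nonempty : ∀ v : V, ∃ w, E v w
  live_sub : ∀ v w, El v w → v ∈ V1 ∧ E v w

namespace LiveGameGraph

variable {V : Type*}

/-- Pre∃0(S) -/
def pre0 (Gm : LiveGameGraph V) (S : Set V) : Set V :=
  {v | v ∈ Gm.V0 ∧ ∃ w, Gm.E v w ∧ w ∈ S}

/-- Pre∀1(S) -/
def pre1 (Gm : LiveGameGraph V) (S : Set V) : Set V :=
  {v | v ∈ Gm.V1 ∧ ∀ w, Gm.E v w → w ∈ S}

/-- Cpre(S) -/
def cpre (Gm : LiveGameGraph V) (S : Set V) : Set V := Gm.pre0 S ∪ Gm.pre1 S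

/-- Lpre∃(T) -/
def lpre (Gm : LiveGameGraph V) (T : Set V) : Set V :=
  {v | ∃ w, Gm.El v w ∧ w ∈ T}

/-- Apre(S,T) -/
def apre (Gm : LiveGameGraph V) (S T : Set V) : Set V :=
  Gm.cpre T ∪ (Gm.lpre T ∩ Gm.pre1 S)

end LiveGameGraph

namespace LiveGameGraph

variable {V : Type*}

/-- A play is strongly transition fair if every live edge whose source is visited
infinitely often is itself taken infinitely often. -/
def StronglyFair (Gm : LiveGameGraph V) (π : ℕ → V) : Prop :=
  ∀ v w, Gm.El v w → {i | π i = v}.Infinite → {i | π i = v ∧ π (i + 1) = w}.Infinite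

/-- A Player-0 strategy: given the history (the prefix before the current vertex)
and the current vertex, it chooses an `E`-successor whenever the current vertex
belongs to Player 0. -/
def Strategy0 (Gm : LiveGameGraph V) (ρ : List V → V → V) : Prop :=
  ∀ h v, v ∈ Gm.V0 → Gm.E v (ρ h v)

/-- A Player-1 strategy. -/
def Strategy1 (Gm : LiveGameGraph V) (ρ : List V → V → V) : Prop :=
  ∀ h v, v ∈ Gm.V1 → Gm.E v (ρ h v)

/-- The play compliant with the strategies `ρ0` and `ρ1` starting at `v0`. -/
def Compliant (Gm : LiveGameGraph V) (ρ0 ρ1 : List V → V → V) (v0 : V)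
    (π : ℕ → V) : Prop :=
  π 0 = v0 ∧ ∀ i : ℕ,
    (π i ∈ Gm.V0 → π (i + 1) = ρ0 (List.ofFn fun j : Fin i => π j.1) (π i)) ∧
    (π i ∈ Gm.V1 → π (i + 1) = ρ1 (List.ofFn fun j : Fin i => π j.1) (π i))

/-- Player 0 wins the fair adversarial game for the winning condition `φ`
from `v0` using the strategy `ρ0`. -/
def WinsFrom (Gm : LiveGameGraph V) (φ : (ℕ → V) → Prop)
    (ρ0 : List V → V → V) (v0 : V) : Prop :=
  Gm.Strategy0 ρ0 ∧ ∀ ρ1, Gm.Strategy1 ρ1 → ∀ π, Gm.Compliant ρ0 ρ1 v0 π →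
    (Gm.StronglyFair π → φ π)

/-- The winning region of Player 0 in the fair adversarial game for `φ`. -/
def WinningRegion (Gm : LiveGameGraph V) (φ : (ℕ → V) → Prop) : Set V :=
  {v0 | ∃ ρ0, Gm.WinsFrom φ ρ0 v0}

end LiveGameGraph

namespace LiveGameGraph

variable {V : Type*}

/-- The parity fixpoint νY_{2i}.μX_{2i−1}… peeled off one color pair at a time,
from pair `i` (colors 2i, 2i−1) down to pair 1 (colors 2, 1); `acc` is the union
of the terms for the already-bound pairs (with their bound `Y`/`X` values
substituted in). -/
def parityAux (Gm : LiveGameGraph V) (col : ℕ → Set V) : ℕ → Set V → Set V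
  | 0, acc => acc
  | i + 1, acc =>
      gfpSet fun Y => lfpSet fun X =>
        Gm.parityAux col i
          (acc ∪ ((col (2 * (i + 1)) ∩ Gm.cpre Y) ∪
            ((⋃ j ∈ Finset.Icc 1 (2 * (i + 1) - 1), col j) ∩ Gm.apre Y X)))

/-- The full parity fixpoint Z* = νY_{2k}.μX_{2k−1}. … νY_2.μX_1. ⋃_{i=1}^k
[(C_{2i} ∩ Cpre(Y_{2i})) ∪ ((C_1 ∪ … ∪ C_{2i−1}) ∩ Apre(Y_{2i}, X_{2i−1}))]. -/
def parityZ (Gm : LiveGameGraph V) (col : ℕ → Set V) (k : ℕ) : Set V :=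
  Gm.parityAux col k (∅ : Set V)

end LiveGameGraph

open scoped Classical

section FixpointLemmas

variable {V : Type*} {f g : Set V → Set V}

lemma lfpSet_le {X : Set V} (h : f X ⊆ X) : lfpSet f ⊆ X := sInf_le h

lemma le_gfpSet {X : Set V} (h : X ⊆ f X) : X ⊆ gfpSet f := le_sSup h

lemma lfpSet_fixed (hf : Monotone f) : f (lfpSet f) = lfpSet f := by
  have h1 : f (lfpSet f) ⊆ lfpSet f := by
    refine le_sInf ?_
    intro X hX
    exact (hf (sInf_le hX)).trans hX
  exact le_antisymm h1 (sInf_le (hf h1))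

lemma gfpSet_fixed (hf : Monotone f) : f (gfpSet f) = gfpSet f := by
  have h1 : gfpSet f ⊆ f (gfpSet f) := by
    refine sSup_le ?_
    intro X hX
    exact hX.trans (hf (le_sSup hX))
  exact le_antisymm (le_sSup (hf h1)) h1

lemma lfpSet_mono (h : ∀ X, f X ⊆ g X) : lfpSet f ⊆ lfpSet g := by
  refine le_sInf ?_
  intro X hX
  exact sInf_le ((h X).trans hX)

lemma gfpSet_mono (h : ∀ X, f X ⊆ g X) : gfpSet f ⊆ gfpSet g := by
  refine sSup_le ?_
  intro X hX
  exact le_sSup (hX.trans (h X))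

variable [Fintype V]
set_option linter.unusedSectionVars false

lemma iterate_empty_mono (hf : Monotone f) : Monotone fun n => f^[n] (∅ : Set V) := by
  refine monotone_nat_of_le_succ ?_
  intro n
  induction n with
  | zero => simp
  | succ n ih =>
      simp only [Function.iterate_succ_apply'] at ih ⊢
      exact hf ih

lemma iterate_univ_anti (hf : Monotone f) : Antitone fun n => f^[n] (Set.univ : Set V) := by
  refine antitone_nat_of_succ_le ?_
  intro n
  induction n with
  | zero => simp
  | succ n ih =>
      simp only [Function.iterate_succ_apply'] at ih ⊢
      exact hf ih

lemma iterate_empty_subset_lfpSet (hf : Monotone f) (n : ℕ) : f^[n] (∅ : Set V) ⊆ lfpSet f := by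
  induction n with
  | zero => simp
  | succ n ih =>
      rw [Function.iterate_succ_apply']
      exact le_of_le_of_eq (hf ih) (lfpSet_fixed hf)

lemma gfpSet_subset_iterate_univ (hf : Monotone f) (n : ℕ) :
    gfpSet f ⊆ f^[n] (Set.univ : Set V) := by
  induction n with
  | zero => simp
  | succ n ih =>
      rw [Function.iterate_succ_apply']
      exact le_of_eq_of_le (gfpSet_fixed hf).symm (hf ih)

lemma exists_iterate_stab (hmono : Monotone fun n => f^[n] (∅ : Set V)) :
    ∃ n, f^[n+1] (∅ : Set V) = f^[n] (∅ : Set V) := by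
  by_contra hcon
  push_neg at hcon
  have hcard : ∀ n, n ≤ (f^[n] (∅ : Set V)).ncard := by
    intro n
    induction n with
    | zero => simp
    | succ n ih =>
        have hss : f^[n] (∅ : Set V) ⊂ f^[n+1] (∅ : Set V) :=
          lt_of_le_of_ne (hmono (Nat.le_succ n)) (fun h => hcon n h.symm)
        have := Set.ncard_lt_ncard hss (Set.toFinite _)
        omega
  have h1 := hcard (Fintype.card V + 1)
  have h2 : (f^[Fintype.card V + 1] (∅ : Set V)).ncard ≤ Fintype.card V := by
    have := Set.ncard_le_ncard (Set.subset_univ (f^[Fintype.card V + 1] (∅ : Set V)))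
      (Set.toFinite _)
    simpa [Set.ncard_univ] using this
  omega

lemma exists_iterate_lfpSet (hf : Monotone f) : ∃ N, f^[N] (∅ : Set V) = lfpSet f := by
  obtain ⟨n, hn⟩ := exists_iterate_stab (f := f) (iterate_empty_mono hf)
  refine ⟨n, le_antisymm (iterate_empty_subset_lfpSet hf n) ?_⟩
  refine lfpSet_le ?_
  rw [← Function.iterate_succ_apply' f n ∅, hn]

lemma exists_iterate_stab_univ (hanti : Antitone fun n => f^[n] (Set.univ : Set V)) :
    ∃ n, f^[n+1] (Set.univ : Set V) = f^[n] (Set.univ : Set V) := by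
  by_contra hcon
  push_neg at hcon
  have hcard : ∀ n, (f^[n] (Set.univ : Set V)).ncard + n ≤ Fintype.card V := by
    intro n
    induction n with
    | zero =>
        have : (f^[0] (Set.univ : Set V)).ncard = Fintype.card V := by
          simp [Set.ncard_univ]
        omega
    | succ n ih =>
        have hss : f^[n+1] (Set.univ : Set V) ⊂ f^[n] (Set.univ : Set V) :=
          lt_of_le_of_ne (hanti (Nat.le_succ n)) (hcon n)
        have := Set.ncard_lt_ncard hss (Set.toFinite _)
        omega
  have := hcard (Fintype.card V + 1)
  omega

lemma exists_iterate_gfpSet (hf : Monotone f) : ∃ N, f^[N] (Set.univ : Set V) = gfpSet f := by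
  obtain ⟨n, hn⟩ := exists_iterate_stab_univ (f := f) (iterate_univ_anti hf)
  refine ⟨n, le_antisymm ?_ (gfpSet_subset_iterate_univ hf n)⟩
  refine le_gfpSet ?_
  rw [← Function.iterate_succ_apply' f n Set.univ, hn]

lemma lfpSet_eq_iUnion (hf : Monotone f) : lfpSet f = ⋃ n, f^[n] (∅ : Set V) := by
  obtain ⟨N, hN⟩ := exists_iterate_lfpSet hf
  refine le_antisymm ?_ (Set.iUnion_subset fun n => iterate_empty_subset_lfpSet hf n)
  rw [← hN]
  exact Set.subset_iUnion (fun n => f^[n] (∅ : Set V)) N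

end FixpointLemmas

namespace LiveGameGraph

variable {V : Type*} (Gm : LiveGameGraph V) (col : ℕ → Set V)

lemma pre0_mono {S T : Set V} (h : S ⊆ T) : Gm.pre0 S ⊆ Gm.pre0 T := by
  rintro v ⟨hv, w, hw, hwS⟩; exact ⟨hv, w, hw, h hwS⟩

lemma pre1_mono {S T : Set V} (h : S ⊆ T) : Gm.pre1 S ⊆ Gm.pre1 T := by
  rintro v ⟨hv, hall⟩; exact ⟨hv, fun w hw => h (hall w hw)⟩

lemma cpre_mono {S T : Set V} (h : S ⊆ T) : Gm.cpre S ⊆ Gm.cpre T :=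
  Set.union_subset_union (Gm.pre0_mono h) (Gm.pre1_mono h)

lemma lpre_mono {S T : Set V} (h : S ⊆ T) : Gm.lpre S ⊆ Gm.lpre T := by
  rintro v ⟨w, hw, hwS⟩; exact ⟨w, hw, h hwS⟩

lemma apre_mono {S S' T T' : Set V} (hS : S ⊆ S') (hT : T ⊆ T') :
    Gm.apre S T ⊆ Gm.apre S' T' :=
  Set.union_subset_union (Gm.cpre_mono hT)
    (Set.inter_subset_inter (Gm.lpre_mono hT) (Gm.pre1_mono hS))

lemma cpre_subset_apre {S T : Set V} : Gm.cpre T ⊆ Gm.apre S T := Set.subset_union_left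

/-- The union term at pair `j`. -/
def Tterm (j : ℕ) (Y X : Set V) : Set V :=
  (col (2 * j) ∩ Gm.cpre Y) ∪ ((⋃ c ∈ Finset.Icc 1 (2 * j - 1), col c) ∩ Gm.apre Y X)

lemma Tterm_mono {j : ℕ} {Y Y' X X' : Set V} (hY : Y ⊆ Y') (hX : X ⊆ X') :
    Gm.Tterm col j Y X ⊆ Gm.Tterm col j Y' X' :=
  Set.union_subset_union (Set.inter_subset_inter_right _ (Gm.cpre_mono hY))
    (Set.inter_subset_inter_right _ (Gm.apre_mono hY hX))

lemma parityAux_succ (i : ℕ) (acc : Set V) :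
    Gm.parityAux col (i + 1) acc =
      gfpSet fun Y => lfpSet fun X => Gm.parityAux col i (acc ∪ Gm.Tterm col (i + 1) Y X) := rfl

lemma parityAux_mono (i : ℕ) : Monotone (Gm.parityAux col i) := by
  induction i with
  | zero => intro a b h; exact h
  | succ i ih =>
      intro a b h
      rw [parityAux_succ, parityAux_succ]
      refine gfpSet_mono fun Y => lfpSet_mono fun X => ?_
      exact ih (Set.union_subset_union_left _ h)

lemma parityAux_inner_mono (i : ℕ) (acc Y : Set V) :
    Monotone fun X => Gm.parityAux col i (acc ∪ Gm.Tterm col (i + 1) Y X) := by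
  intro a b h
  exact Gm.parityAux_mono col i
    (Set.union_subset_union_right _ (Gm.Tterm_mono col (Set.Subset.refl Y) h))

lemma parityAux_outer_mono (i : ℕ) (acc : Set V) :
    Monotone fun Y => lfpSet fun X => Gm.parityAux col i (acc ∪ Gm.Tterm col (i + 1) Y X) := by
  intro a b h
  refine lfpSet_mono fun X => ?_
  exact Gm.parityAux_mono col i
    (Set.union_subset_union_right _ (Gm.Tterm_mono col h (Set.Subset.refl X)))

lemma parityAux_gfp_unfold (i : ℕ) (acc : Set V) :
    Gm.parityAux col (i + 1) acc =
      lfpSet fun X => Gm.parityAux col i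
        (acc ∪ Gm.Tterm col (i + 1) (Gm.parityAux col (i + 1) acc) X) := by
  conv_lhs => rw [parityAux_succ]
  rw [← gfpSet_fixed (Gm.parityAux_outer_mono col i acc)]
  rfl

lemma parityAux_diag (i : ℕ) (acc : Set V) :
    Gm.parityAux col (i + 1) acc =
      Gm.parityAux col i (acc ∪ Gm.Tterm col (i + 1)
        (Gm.parityAux col (i + 1) acc) (Gm.parityAux col (i + 1) acc)) := by
  conv_lhs => rw [parityAux_gfp_unfold]
  rw [← lfpSet_fixed (Gm.parityAux_inner_mono col i acc (Gm.parityAux col (i+1) acc))]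
  rw [← parityAux_gfp_unfold]

lemma acc_subset_parityAux (i : ℕ) (acc : Set V) : acc ⊆ Gm.parityAux col i acc := by
  induction i generalizing acc with
  | zero => exact Set.Subset.refl acc
  | succ i ih =>
      rw [parityAux_diag]
      exact (Set.subset_union_left).trans (ih _)

/-- vertices with colors in [1, 2i] -/
def lowcol (i : ℕ) : Set V := ⋃ c ∈ Finset.Icc 1 (2 * i), col c

lemma lowcol_mono {i j : ℕ} (h : i ≤ j) : lowcol col i ⊆ lowcol col j := by
  refine Set.iUnion₂_subset fun c hc => ?_
  simp only [Finset.mem_Icc] at hc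
  refine Set.subset_iUnion₂_of_subset c ?_ (Set.Subset.refl _)
  simp only [Finset.mem_Icc]; omega

lemma Tterm_subset_lowcol (j : ℕ) (hj : 1 ≤ j) (Y X : Set V) :
    Gm.Tterm col j Y X ⊆ lowcol col j := by
  refine Set.union_subset ?_ ?_
  · refine Set.inter_subset_left.trans ?_
    refine Set.subset_iUnion₂_of_subset (2 * j) ?_ (Set.Subset.refl _)
    simp only [Finset.mem_Icc]; omega
  · refine Set.inter_subset_left.trans ?_
    refine Set.iUnion₂_subset fun c hc => ?_
    simp only [Finset.mem_Icc] at hc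
    refine Set.subset_iUnion₂_of_subset c ?_ (Set.Subset.refl _)
    simp only [Finset.mem_Icc]; omega

lemma parityAux_subset_lowcol (i : ℕ) (acc : Set V) :
    Gm.parityAux col i acc ⊆ acc ∪ lowcol col i := by
  induction i generalizing acc with
  | zero => exact Set.subset_union_left
  | succ i ih =>
      rw [parityAux_diag]
      refine (ih _).trans ?_
      refine Set.union_subset ?_ ?_
      · refine Set.union_subset Set.subset_union_left ?_
        exact (Gm.Tterm_subset_lowcol col (i+1) (by omega) _ _).trans Set.subset_union_right
      · exact (lowcol_mono col (Nat.le_succ i)).trans Set.subset_union_right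

lemma mem_lowcol_succ_cases {v : V} {i : ℕ} (h : v ∈ lowcol col (i + 1)) :
    v ∈ lowcol col i ∨ v ∈ col (2 * i + 1) ∨ v ∈ col (2 * (i + 1)) := by
  simp only [lowcol, Set.mem_iUnion, Finset.mem_Icc, exists_prop] at h ⊢
  obtain ⟨c, ⟨h1, h2⟩, hc⟩ := h
  rcases Nat.lt_or_ge c (2 * i + 1) with h3 | h3
  · exact Or.inl ⟨c, ⟨h1, by omega⟩, hc⟩
  · rcases Nat.eq_or_lt_of_le h3 with h4 | h4
    · exact Or.inr (Or.inl (h4 ▸ hc))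
    · have : c = 2 * (i + 1) := by omega
      exact Or.inr (Or.inr (this ▸ hc))

/-- Closure: a low-colored vertex in `Cpre` of the fixpoint is itself in the fixpoint. -/
lemma lowcol_cpre_subset (i : ℕ) (acc : Set V) :
    lowcol col i ∩ Gm.cpre (Gm.parityAux col i acc) ⊆ Gm.parityAux col i acc := by
  induction i generalizing acc with
  | zero =>
      have : lowcol col 0 = (∅ : Set V) := by
        simp [lowcol]
      rw [this]; simp
  | succ i ih =>
      rintro v ⟨hvc, hvp⟩
      set Z := Gm.parityAux col (i + 1) acc with hZdef
      set acc2 := acc ∪ Gm.Tterm col (i + 1) Z Z with hacc2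
      have hdiag : Z = Gm.parityAux col i acc2 := Gm.parityAux_diag col i acc
      rcases mem_lowcol_succ_cases col hvc with hlow | hodd | heven
      · rw [hdiag]
        exact ih acc2 ⟨hlow, by rw [← hdiag]; exact hvp⟩
      · have hT : v ∈ Gm.Tterm col (i + 1) Z Z := by
          refine Or.inr ⟨?_, Gm.cpre_subset_apre hvp⟩
          refine Set.mem_iUnion₂.2 ⟨2 * i + 1, ?_, hodd⟩
          simp only [Finset.mem_Icc]; omega
        rw [hdiag]
        exact Gm.acc_subset_parityAux col i acc2 (Or.inr hT)
      · have hT : v ∈ Gm.Tterm col (i + 1) Z Z := Or.inl ⟨heven, hvp⟩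
        rw [hdiag]
        exact Gm.acc_subset_parityAux col i acc2 (Or.inr hT)

lemma closure_V0 {i : ℕ} {acc : Set V} {v w : V} (hvc : v ∈ lowcol col i)
    (hv : v ∉ Gm.parityAux col i acc) (hv0 : v ∈ Gm.V0) (hE : Gm.E v w) :
    w ∉ Gm.parityAux col i acc := by
  intro hw
  exact hv (Gm.lowcol_cpre_subset col i acc ⟨hvc, Or.inl ⟨hv0, w, hE, hw⟩⟩)

lemma closure_V1 {i : ℕ} {acc : Set V} {v : V} (hvc : v ∈ lowcol col i)
    (hv : v ∉ Gm.parityAux col i acc) (hv1 : v ∈ Gm.V1) :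
    ∃ w, Gm.E v w ∧ w ∉ Gm.parityAux col i acc := by
  by_contra hcon
  push_neg at hcon
  exact hv (Gm.lowcol_cpre_subset col i acc ⟨hvc, Or.inr ⟨hv1, fun w hw => hcon w hw⟩⟩)

/-- default successor -/
noncomputable def dflt (v : V) : V := Classical.choose (Gm.succ_nonempty v)

lemma dflt_E (v : V) : Gm.E v (Gm.dflt v) := Classical.choose_spec (Gm.succ_nonempty v)

/-- pick an E-successor satisfying P, if possible -/
noncomputable def pick (v : V) (P : V → Prop) : V :=
  if h : ∃ w, Gm.E v w ∧ P w then Classical.choose h else Gm.dflt v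

lemma pick_E (v : V) (P : V → Prop) : Gm.E v (Gm.pick v P) := by
  unfold pick
  split
  · next h => exact (Classical.choose_spec h).1
  · exact Gm.dflt_E v

lemma pick_spec {v : V} {P : V → Prop} (h : ∃ w, Gm.E v w ∧ P w) : P (Gm.pick v P) := by
  unfold pick
  rw [dif_pos h]
  exact (Classical.choose_spec h).2

end LiveGameGraph

section Misc

variable {V : Type*}

lemma infinite_unbdd {S : Set ℕ} : S.Infinite ↔ ∀ N, ∃ n, N ≤ n ∧ n ∈ S := by
  constructor
  · intro h N
    by_contra hc
    push_neg at hc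
    refine h (Set.Finite.subset (Set.finite_Iio N) ?_)
    intro n hn
    by_contra hlt
    exact hc n (le_of_not_gt (fun h' => hlt h')) hn
  · intro h hfin
    obtain ⟨B, hB⟩ := hfin.bddAbove
    obtain ⟨n, hn1, hn2⟩ := h (B + 1)
    exact absurd (hB hn2) (by omega)

lemma infinite_tail {S : Set ℕ} (h : S.Infinite) (N : ℕ) : {n | n ∈ S ∧ N ≤ n}.Infinite := by
  have h2 := h.diff (Set.finite_Iio N)
  refine h2.mono ?_
  intro n hn
  simp only [Set.mem_diff, Set.mem_Iio, not_lt] at hn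
  exact ⟨hn.1, hn.2⟩

lemma exists_ge_of_infinite {S : Set ℕ} (h : S.Infinite) (N : ℕ) : ∃ n, N ≤ n ∧ n ∈ S :=
  infinite_unbdd.1 h N

lemma exists_infinite_fiber_within [Fintype V] {π : ℕ → V} {T : Set ℕ} (hT : T.Infinite) :
    ∃ v, {n | n ∈ T ∧ π n = v}.Infinite := by
  by_contra hc
  push_neg at hc
  have : T ⊆ ⋃ (v : V), {n | n ∈ T ∧ π n = v} := by
    intro n hn
    exact Set.mem_iUnion.2 ⟨π n, hn, rfl⟩
  exact hT (Set.Finite.subset (Set.finite_iUnion hc) this)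

/-- vertices visited infinitely often -/
def ioSet (π : ℕ → V) : Set V := {v | {n | π n = v}.Infinite}

lemma eventually_mem_ioSet [Fintype V] (π : ℕ → V) : ∃ N, ∀ n, N ≤ n → π n ∈ ioSet π := by
  by_contra hc
  push_neg at hc
  have hbad : {n | π n ∉ ioSet π}.Infinite := by
    rw [infinite_unbdd]
    intro N
    obtain ⟨n, hn1, hn2⟩ := hc N
    exact ⟨n, hn1, hn2⟩
  obtain ⟨v, hv⟩ := exists_infinite_fiber_within (π := π) hbad
  have hvio : v ∈ ioSet π := (hv.mono (fun n hn => hn.2) : {n | π n = v}.Infinite)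
  obtain ⟨n, -, hn⟩ := exists_ge_of_infinite hv 0
  exact hn.1 (hn.2 ▸ hvio)

lemma ioSet_occurrence {π : ℕ → V} {v : V} (h : v ∈ ioSet π) (N : ℕ) :
    ∃ n, N ≤ n ∧ π n = v := by
  obtain ⟨n, hn1, hn2⟩ := exists_ge_of_infinite h N
  exact ⟨n, hn1, hn2⟩

lemma eventually_constant_of_antitone (f : ℕ → ℕ) (N : ℕ) (hf : ∀ n, N ≤ n → f (n + 1) ≤ f n) :
    ∃ M, N ≤ M ∧ ∀ n, M ≤ n → f n = f M := by
  have hstep0 : ∀ a b, N ≤ a → f (a + b) ≤ f a := by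
    intro a b ha
    induction b with
    | zero => simp
    | succ b ih =>
        have h3 := hf (a + b) (by omega)
        have : a + (b + 1) = (a + b) + 1 := by omega
        rw [this]
        exact le_trans h3 ih
  have hstep : ∀ a b, N ≤ a → a ≤ b → f b ≤ f a := by
    intro a b ha hab
    have := hstep0 a (b - a) ha
    rwa [Nat.add_sub_cancel' hab] at this
  have hne : (f '' {n | N ≤ n}).Nonempty := ⟨f N, N, le_refl N, rfl⟩
  obtain ⟨M, hM1, hM2⟩ := Nat.sInf_mem hne
  refine ⟨M, hM1, fun n hn => le_antisymm ?_ ?_⟩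
  · exact hstep M n hM1 hn
  · rw [hM2]; exact Nat.sInf_le ⟨n, le_trans hM1 hn, rfl⟩

end Misc

namespace LiveGameGraph

variable {V : Type*} [Fintype V] (Gm : LiveGameGraph V) (col : ℕ → Set V)

/-- the function whose least fixed point is the level-(i+1) fixpoint, with the
outer ν-variable instantiated at its fixpoint value. -/
def pfun (i : ℕ) (acc : Set V) (X : Set V) : Set V :=
  Gm.parityAux col i (acc ∪ Gm.Tterm col (i + 1) (Gm.parityAux col (i + 1) acc) X)

lemma pfun_mono (i : ℕ) (acc : Set V) : Monotone (Gm.pfun col i acc) :=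
  Gm.parityAux_inner_mono col i acc _

lemma parityAux_eq_lfp_pfun (i : ℕ) (acc : Set V) :
    Gm.parityAux col (i + 1) acc = lfpSet (Gm.pfun col i acc) :=
  Gm.parityAux_gfp_unfold col i acc

/-- μ-stages of the level-(i+1) fixpoint -/
def pstage (i : ℕ) (acc : Set V) (n : ℕ) : Set V := (Gm.pfun col i acc)^[n] ∅

lemma pstage_zero (i : ℕ) (acc : Set V) : Gm.pstage col i acc 0 = ∅ := rfl

lemma pstage_succ (i : ℕ) (acc : Set V) (n : ℕ) :
    Gm.pstage col i acc (n + 1) = Gm.pfun col i acc (Gm.pstage col i acc n) :=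
  Function.iterate_succ_apply' _ n ∅

lemma pstage_mono (i : ℕ) (acc : Set V) {n m : ℕ} (h : n ≤ m) :
    Gm.pstage col i acc n ⊆ Gm.pstage col i acc m :=
  iterate_empty_mono (Gm.pfun_mono col i acc) h

lemma pstage_subset (i : ℕ) (acc : Set V) (n : ℕ) :
    Gm.pstage col i acc n ⊆ Gm.parityAux col (i + 1) acc := by
  rw [parityAux_eq_lfp_pfun]
  exact iterate_empty_subset_lfpSet (Gm.pfun_mono col i acc) n

lemma exists_pstage (i : ℕ) (acc : Set V) {v : V} (hv : v ∈ Gm.parityAux col (i + 1) acc) :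
    ∃ n, v ∈ Gm.pstage col i acc n := by
  obtain ⟨N, hN⟩ := exists_iterate_lfpSet (Gm.pfun_mono col i acc)
  refine ⟨N, ?_⟩
  show v ∈ (Gm.pfun col i acc)^[N] ∅
  rw [hN, ← parityAux_eq_lfp_pfun]
  exact hv

/-- μ-rank of a vertex of the level-(i+1) fixpoint -/
noncomputable def prank (i : ℕ) (acc : Set V) (v : V) : ℕ :=
  sInf {n | v ∈ Gm.pstage col i acc n}

lemma prank_mem {i : ℕ} {acc : Set V} {v : V} (hv : v ∈ Gm.parityAux col (i + 1) acc) :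
    v ∈ Gm.pstage col i acc (Gm.prank col i acc v) :=
  Nat.sInf_mem (Set.nonempty_def.2 (Gm.exists_pstage col i acc hv))

lemma prank_le {i n : ℕ} {acc : Set V} {v : V} (h : v ∈ Gm.pstage col i acc n) :
    Gm.prank col i acc v ≤ n := Nat.sInf_le h

lemma prank_pos {i : ℕ} {acc : Set V} {v : V} (hv : v ∈ Gm.parityAux col (i + 1) acc) :
    1 ≤ Gm.prank col i acc v := by
  by_contra hc
  have h0 : Gm.prank col i acc v = 0 := by omega
  have := Gm.prank_mem col hv
  rw [h0, pstage_zero] at this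
  exact this

/-- the `acc` to be used at the level below, for a vertex of μ-rank `prank v` -/
def paccn (i : ℕ) (acc : Set V) (v : V) : Set V :=
  acc ∪ Gm.Tterm col (i + 1) (Gm.parityAux col (i + 1) acc)
    (Gm.pstage col i acc (Gm.prank col i acc v - 1))

lemma pstage_prank_eq {i : ℕ} {acc : Set V} {v : V} (hv : v ∈ Gm.parityAux col (i + 1) acc) :
    Gm.pstage col i acc (Gm.prank col i acc v) = Gm.parityAux col i (Gm.paccn col i acc v) := by
  have h1 := Gm.prank_pos col hv
  have h2 : Gm.prank col i acc v = (Gm.prank col i acc v - 1) + 1 := by omega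
  rw [h2, pstage_succ]
  rfl

/-- The memoryless Player-0 strategy on the parity fixpoint. -/
noncomputable def PStrat : ℕ → Set V → V → V
  | 0, _ => fun v => Gm.dflt v
  | i + 1, acc => fun v =>
      if v ∈ Gm.parityAux col (i + 1) acc then
        if v ∈ Gm.paccn col i acc v then
          if v ∈ Gm.pre0 (Gm.pstage col i acc (Gm.prank col i acc v - 1)) then
            Gm.pick v (· ∈ Gm.pstage col i acc (Gm.prank col i acc v - 1))
          else if v ∈ col (2 * (i + 1)) ∩ Gm.cpre (Gm.parityAux col (i + 1) acc) then
            Gm.pick v (· ∈ Gm.parityAux col (i + 1) acc)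
          else Gm.dflt v
        else PStrat i (Gm.paccn col i acc v) v
      else Gm.dflt v

lemma PStrat_E (i : ℕ) (acc : Set V) (v : V) : Gm.E v (Gm.PStrat col i acc v) := by
  induction i generalizing acc with
  | zero => exact Gm.dflt_E v
  | succ i ih =>
      show Gm.E v (if _ then _ else _)
      split
      · split
        · split
          · exact Gm.pick_E v _
          · split
            · exact Gm.pick_E v _
            · exact Gm.dflt_E v
        · exact ih _
      · exact Gm.dflt_E v

end LiveGameGraph

namespace LiveGameGraph

variable {V : Type*} [Fintype V] (Gm : LiveGameGraph V) (col : ℕ → Set V)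

lemma not_V1_of_V0 {v : V} (h : v ∈ Gm.V0) : v ∉ Gm.V1 := by
  intro h1
  have : v ∈ Gm.V0 ∩ Gm.V1 := ⟨h, h1⟩
  rw [Gm.disj] at this
  exact this

lemma mem_V0_or_V1 (v : V) : v ∈ Gm.V0 ∨ v ∈ Gm.V1 := by
  have : v ∈ Gm.V0 ∪ Gm.V1 := by rw [Gm.cover]; trivial
  exact this

lemma cpre_V0 {v : V} {S : Set V} (h : v ∈ Gm.cpre S) (h0 : v ∈ Gm.V0) :
    ∃ w, Gm.E v w ∧ w ∈ S := by
  rcases h with h | h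
  · exact h.2
  · exact absurd h.1 (Gm.not_V1_of_V0 h0)

lemma cpre_V1 {v : V} {S : Set V} (h : v ∈ Gm.cpre S) (h1 : v ∈ Gm.V1) :
    ∀ w, Gm.E v w → w ∈ S := by
  rcases h with h | h
  · exact absurd h1 (Gm.not_V1_of_V0 h.1)
  · exact h.2

lemma apre_V0 {v : V} {S T : Set V} (h : v ∈ Gm.apre S T) (h0 : v ∈ Gm.V0) :
    ∃ w, Gm.E v w ∧ w ∈ T := by
  rcases h with h | h
  · exact Gm.cpre_V0 h h0
  · exact absurd h.2.1 (Gm.not_V1_of_V0 h0)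

lemma apre_V1 {v : V} {S T : Set V} (h : v ∈ Gm.apre S T) (h1 : v ∈ Gm.V1) :
    (∀ w, Gm.E v w → w ∈ T) ∨ ((∃ w, Gm.El v w ∧ w ∈ T) ∧ ∀ w, Gm.E v w → w ∈ S) := by
  rcases h with h | h
  · exact Or.inl (Gm.cpre_V1 h h1)
  · exact Or.inr ⟨h.1, h.2.2⟩

lemma PStrat_succ_def (i : ℕ) (acc : Set V) (v : V) :
    Gm.PStrat col (i + 1) acc v =
      if v ∈ Gm.parityAux col (i + 1) acc then
        if v ∈ Gm.paccn col i acc v then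
          if v ∈ Gm.pre0 (Gm.pstage col i acc (Gm.prank col i acc v - 1)) then
            Gm.pick v (· ∈ Gm.pstage col i acc (Gm.prank col i acc v - 1))
          else if v ∈ col (2 * (i + 1)) ∩ Gm.cpre (Gm.parityAux col (i + 1) acc) then
            Gm.pick v (· ∈ Gm.parityAux col (i + 1) acc)
          else Gm.dflt v
        else Gm.PStrat col i (Gm.paccn col i acc v) v
      else Gm.dflt v := rfl

lemma Pstep (i : ℕ) (acc : Set V) (v : V) (hv : v ∈ Gm.parityAux col i acc) (hvacc : v ∉ acc) :
    (v ∈ Gm.V0 → Gm.PStrat col i acc v ∈ Gm.parityAux col i acc) ∧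
    (v ∈ Gm.V1 → ∀ w, Gm.E v w → w ∈ Gm.parityAux col i acc) := by
  induction i generalizing acc with
  | zero => exact absurd hv hvacc
  | succ i ih =>
      have hZn : v ∈ Gm.pstage col i acc (Gm.prank col i acc v) := Gm.prank_mem col hv
      have hAn : v ∈ Gm.parityAux col i (Gm.paccn col i acc v) := by
        rw [← Gm.pstage_prank_eq col hv]; exact hZn
      by_cases hacc : v ∈ Gm.paccn col i acc v
      · have hT : v ∈ Gm.Tterm col (i + 1) (Gm.parityAux col (i + 1) acc)
            (Gm.pstage col i acc (Gm.prank col i acc v - 1)) := by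
          rcases hacc with h | h
          · exact absurd h hvacc
          · exact h
        constructor
        · intro hv0
          rw [Gm.PStrat_succ_def col, if_pos hv, if_pos hacc]
          by_cases hg : v ∈ Gm.pre0 (Gm.pstage col i acc (Gm.prank col i acc v - 1))
          · rw [if_pos hg]
            exact Gm.pstage_subset col i acc _ (Gm.pick_spec hg.2)
          · rw [if_neg hg]
            by_cases hb : v ∈ col (2 * (i + 1)) ∩ Gm.cpre (Gm.parityAux col (i + 1) acc)
            · rw [if_pos hb]
              exact Gm.pick_spec (Gm.cpre_V0 hb.2 hv0)
            · exfalso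
              rcases hT with h | h
              · exact hb h
              · obtain ⟨w, hw, hwS⟩ := Gm.apre_V0 h.2 hv0
                exact hg ⟨hv0, w, hw, hwS⟩
        · intro hv1 w hw
          rcases hT with h | h
          · exact Gm.cpre_V1 h.2 hv1 w hw
          · rcases Gm.apre_V1 h.2 hv1 with h2 | h2
            · exact Gm.pstage_subset col i acc _ (h2 w hw)
            · exact h2.2 w hw
      · have hIH := ih (Gm.paccn col i acc v) hAn hacc
        have hsub : Gm.parityAux col i (Gm.paccn col i acc v) ⊆ Gm.parityAux col (i + 1) acc := by
          rw [← Gm.pstage_prank_eq col hv]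
          exact Gm.pstage_subset col i acc _
        constructor
        · intro hv0
          rw [Gm.PStrat_succ_def col, if_pos hv, if_neg hacc]
          exact hsub (hIH.1 hv0)
        · intro hv1 w hw
          exact hsub (hIH.2 hv1 w hw)

end LiveGameGraph

namespace LiveGameGraph

variable {V : Type*} [Fintype V] (Gm : LiveGameGraph V) (col : ℕ → Set V)

lemma col_unique {k : ℕ}
    (hdisj : ∀ i ∈ Finset.Icc 1 (2 * k), ∀ j ∈ Finset.Icc 1 (2 * k),
      i ≠ j → col i ∩ col j = ∅)
    {v : V} {c c' : ℕ} (hv : v ∈ col c) (hv' : v ∈ col c')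
    (h1 : 1 ≤ c) (h2 : c ≤ 2 * k) (h3 : 1 ≤ c') (h4 : c' ≤ 2 * k) : c = c' := by
  by_contra hne
  have := hdisj c (by simp only [Finset.mem_Icc]; omega) c'
    (by simp only [Finset.mem_Icc]; omega) hne
  have hmem : v ∈ col c ∩ col c' := ⟨hv, hv'⟩
  rw [this] at hmem
  exact hmem

lemma Pplay (k : ℕ)
    (hdisj : ∀ i ∈ Finset.Icc 1 (2 * k), ∀ j ∈ Finset.Icc 1 (2 * k),
      i ≠ j → col i ∩ col j = ∅) :
    ∀ i, i ≤ k → ∀ (acc : Set V) (π : ℕ → V),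
    (∀ n, Gm.E (π n) (π (n + 1))) → ∀ n0 : ℕ,
    (∀ n, n0 ≤ n → π n ∈ Gm.parityAux col i acc ∧ π n ∉ acc) →
    (∀ n, n0 ≤ n → π n ∈ Gm.V0 → π (n + 1) = Gm.PStrat col i acc (π n)) →
    Gm.StronglyFair π →
    ∀ t, 1 ≤ t → t ≤ k → {n | π n ∈ col (2 * t - 1)}.Infinite →
    ∃ s, t ≤ s ∧ s ≤ k ∧ {n | π n ∈ col (2 * s)}.Infinite := by
  intro i
  induction i with
  | zero =>
      intro _ acc π _ n0 hin _ _ t _ _ _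
      exact absurd (hin n0 le_rfl).1 (hin n0 le_rfl).2
  | succ i ih =>
      intro hik acc π hE n0 hin hcomp hfair t ht1 htk hodd
      set Z := Gm.parityAux col (i + 1) acc with hZdef
      obtain ⟨N1, hN1⟩ := eventually_mem_ioSet π
      set N2 := max n0 N1 with hN2def
      have htail : ∀ n, N2 ≤ n → π n ∈ ioSet π ∧ π n ∈ Z ∧ π n ∉ acc := by
        intro n hn
        refine ⟨hN1 n (le_trans (le_max_right _ _) hn), (hin n (le_trans (le_max_left _ _) hn)).1,
          (hin n (le_trans (le_max_left _ _) hn)).2⟩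
      have hDfacts : ∀ v, v ∈ ioSet π → v ∈ Z ∧ v ∉ acc := by
        intro v hv
        obtain ⟨n, hn1, hn2⟩ := ioSet_occurrence hv N2
        exact hn2 ▸ ⟨(htail n hn1).2.1, (htail n hn1).2.2⟩
      -- t is a low color
      have hlowt : 2 * t - 1 ≤ 2 * (i + 1) := by
        obtain ⟨v', hv'⟩ := exists_infinite_fiber_within (π := π)
          (infinite_tail hodd N2)
        obtain ⟨n', hn'1, hn'2⟩ := hv'.nonempty
        have hv'col : v' ∈ col (2 * t - 1) := hn'2 ▸ hn'1.1
        have hv'Z : v' ∈ Z ∧ v' ∉ acc := hn'2 ▸ ⟨(htail n' hn'1.2).2.1, (htail n' hn'1.2).2.2⟩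
        have hv'low : v' ∈ lowcol col (i + 1) := by
          rcases Gm.parityAux_subset_lowcol col (i + 1) acc hv'Z.1 with h | h
          · exact absurd h hv'Z.2
          · exact h
        simp only [lowcol, Set.mem_iUnion, Finset.mem_Icc, exists_prop] at hv'low
        obtain ⟨c, ⟨hc1, hc2⟩, hcc⟩ := hv'low
        have := col_unique col hdisj hv'col hcc (by omega) (by omega) (by omega) (by omega)
        omega
      by_cases hbeta : ∃ v, v ∈ ioSet π ∧ v ∈ col (2 * (i + 1))
      · obtain ⟨v, hvD, hvcol⟩ := hbeta
        refine ⟨i + 1, by omega, hik, ?_⟩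
        refine hvD.mono ?_
        intro n hn
        simp only [Set.mem_setOf_eq] at hn ⊢
        exact hn ▸ hvcol
      · -- no vertex of the top even color is visited infinitely often
        push_neg at hbeta
        have hDne : (ioSet π).Nonempty := ⟨π N2, (htail N2 le_rfl).1⟩
        have hRne : (Gm.prank col i acc '' ioSet π).Nonempty := hDne.image _
        set nstar := sInf (Gm.prank col i acc '' ioSet π) with hnstar
        obtain ⟨vstar, hvsD, hvsrk⟩ := Nat.sInf_mem hRne
        have hminD : ∀ v, v ∈ ioSet π → nstar ≤ Gm.prank col i acc v := by
          intro v hv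
          exact Nat.sInf_le ⟨v, hv, rfl⟩
        have hns1 : 1 ≤ nstar := by
          have h := Gm.prank_pos col (hDfacts vstar hvsD).1
          rw [hvsrk] at h
          rw [hnstar]
          exact h
        -- every io vertex of minimal rank lies outside its `paccn`
        have hAclaim : ∀ v, v ∈ ioSet π → Gm.prank col i acc v = nstar →
            v ∉ Gm.paccn col i acc v := by
          intro v hvD hvrk hpacc
          have hvZ := (hDfacts v hvD).1
          have hT : v ∈ Gm.Tterm col (i + 1) Z (Gm.pstage col i acc (nstar - 1)) := by
            rcases hpacc with h | h
            · exact absurd h (hDfacts v hvD).2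
            · rw [hvrk] at h; exact h
          -- a successor of rank < nstar is taken infinitely often: contradiction
          have hcontra : ∀ w, w ∈ ioSet π → w ∈ Gm.pstage col i acc (nstar - 1) → False := by
            intro w hwD hwS
            have h1 := hminD w hwD
            have h2 := Gm.prank_le col hwS
            omega
          rcases hT with h | h
          · exact hbeta v hvD h.1
          · rcases Gm.mem_V0_or_V1 v with hv0 | hv1
            · -- Player 0 vertex: the strategy moves into the lower stage
              obtain ⟨n, hn1, hn2⟩ := ioSet_occurrence hvD N2
              have hg : π n ∈ Gm.pre0 (Gm.pstage col i acc (Gm.prank col i acc (π n) - 1)) := by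
                rw [hn2, hvrk]
                obtain ⟨w, hw1, hw2⟩ := Gm.apre_V0 h.2 hv0
                exact ⟨hv0, w, hw1, hw2⟩
              have hmove := hcomp n (le_trans (le_max_left _ _) hn1) (hn2 ▸ hv0)
              rw [Gm.PStrat_succ_def col, if_pos (hn2 ▸ hvZ : π n ∈ Z),
                if_pos (by rw [hn2]; exact hpacc), if_pos hg] at hmove
              have hnext : π (n + 1) ∈ Gm.pstage col i acc (nstar - 1) := by
                rw [hmove]
                have := Gm.pick_spec (v := π n)
                  (P := (· ∈ Gm.pstage col i acc (Gm.prank col i acc (π n) - 1))) hg.2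
                rw [hn2, hvrk] at this ⊢
                exact this
              exact hcontra (π (n + 1)) (htail (n + 1) (by omega)).1 hnext
            · rcases Gm.apre_V1 h.2 hv1 with h2 | h2
              · -- all successors drop in rank
                obtain ⟨n, hn1, hn2⟩ := ioSet_occurrence hvD N2
                have hnext : π (n + 1) ∈ Gm.pstage col i acc (nstar - 1) :=
                  h2 (π (n + 1)) (hn2 ▸ hE n)
                exact hcontra (π (n + 1)) (htail (n + 1) (by omega)).1 hnext
              · -- live edge into the lower stage, taken infinitely often by fairness
                obtain ⟨⟨w, hlw, hwS⟩, -⟩ := h2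
                have hinf := hfair v w hlw hvD
                obtain ⟨n, hn1, hn2⟩ := exists_ge_of_infinite hinf N2
                have : π (n + 1) ∈ Gm.pstage col i acc (nstar - 1) := hn2.2 ▸ hwS
                exact hcontra (π (n + 1)) (htail (n + 1) (by omega)).1 this
        -- the common inner accumulator
        set acc' := acc ∪ Gm.Tterm col (i + 1) Z (Gm.pstage col i acc (nstar - 1)) with hacc'
        have hpaccn_eq : ∀ v : V, Gm.prank col i acc v = nstar → Gm.paccn col i acc v = acc' := by
          intro v hv
          rw [hacc', paccn, hv]
        -- forward invariance from the first occurrence of vstar in the tail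
        obtain ⟨n3, hn31, hn32⟩ := ioSet_occurrence hvsD N2
        have hfwd : ∀ n, n3 ≤ n →
            Gm.prank col i acc (π n) = nstar ∧ π n ∉ Gm.paccn col i acc (π n) := by
          intro n hn
          induction n, hn using Nat.le_induction with
          | base =>
              rw [hn32]
              exact ⟨hvsrk, hAclaim vstar hvsD hvsrk⟩
          | succ n hn ihn =>
              have htl := htail n (le_trans hn31 hn)
              have htl1 := htail (n + 1) (by omega)
              have hAn : π n ∈ Gm.parityAux col i (Gm.paccn col i acc (π n)) := by
                rw [← Gm.pstage_prank_eq col htl.2.1]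
                exact Gm.prank_mem col htl.2.1
              have hstep := Gm.Pstep col i (Gm.paccn col i acc (π n)) (π n) hAn ihn.2
              have hnextS : π (n + 1) ∈ Gm.pstage col i acc nstar := by
                rcases Gm.mem_V0_or_V1 (π n) with hv0 | hv1
                · have hmove := hcomp n (le_trans (le_max_left _ _) (le_trans hn31 hn)) hv0
                  rw [Gm.PStrat_succ_def col, if_pos htl.2.1, if_neg ihn.2] at hmove
                  have := hstep.1 hv0
                  rw [← hmove] at this
                  rw [← ihn.1, Gm.pstage_prank_eq col htl.2.1]
                  exact this
                · have := hstep.2 hv1 (π (n + 1)) (hE n)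
                  rw [← ihn.1, Gm.pstage_prank_eq col htl.2.1]
                  exact this
              have hrk1 : Gm.prank col i acc (π (n + 1)) = nstar :=
                le_antisymm (Gm.prank_le col hnextS) (hminD _ htl1.1)
              exact ⟨hrk1, hAclaim _ htl1.1 hrk1⟩
        -- apply the induction hypothesis on the inner game
        have hsucceq : Gm.pstage col i acc nstar = Gm.parityAux col i acc' := by
          have : nstar = (nstar - 1) + 1 := by omega
          rw [this, Gm.pstage_succ col]
          rfl
        refine ih (by omega) acc' π hE n3 ?_ ?_ hfair t ht1 htk hodd
        · intro n hn
          have htl := htail n (le_trans hn31 hn)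
          constructor
          · have hm := Gm.prank_mem col htl.2.1
            rw [(hfwd n hn).1] at hm
            rw [← hsucceq]
            exact hm
          · rw [← hpaccn_eq _ (hfwd n hn).1]
            exact (hfwd n hn).2
        · intro n hn hv0
          have htl := htail n (le_trans hn31 hn)
          have hmove := hcomp n (le_trans (le_max_left _ _) (le_trans hn31 hn)) hv0
          rw [Gm.PStrat_succ_def col, if_pos htl.2.1, if_neg (hfwd n hn).2] at hmove
          rw [hmove, hpaccn_eq _ (hfwd n hn).1]

end LiveGameGraph

namespace LiveGameGraph

variable {V : Type*} [Fintype V] (Gm : LiveGameGraph V) (col : ℕ → Set V)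

lemma primal_main (k : ℕ)
    (hdisj : ∀ i ∈ Finset.Icc 1 (2 * k), ∀ j ∈ Finset.Icc 1 (2 * k),
      i ≠ j → col i ∩ col j = ∅) :
    (∀ v ∈ Gm.V0, Gm.E v (Gm.PStrat col k ∅ v)) ∧
    ∀ v0 ∈ Gm.parityZ col k,
      Gm.WinsFrom
        (fun π => ∀ i ∈ Finset.Icc 1 k,
          (∀ N, ∃ n ≥ N, π n ∈ col (2 * i - 1)) →
          ∃ j ∈ Finset.Icc i k, ∀ N, ∃ n ≥ N, π n ∈ col (2 * j))
        (fun _ v => Gm.PStrat col k ∅ v) v0 := by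
  constructor
  · intro v _
    exact Gm.PStrat_E col k ∅ v
  · intro v0 hv0
    constructor
    · intro h v _
      exact Gm.PStrat_E col k ∅ v
    · intro ρ1 hρ1 π hπ hfair
      have hEplay : ∀ n, Gm.E (π n) (π (n + 1)) := by
        intro n
        rcases Gm.mem_V0_or_V1 (π n) with h0 | h1
        · rw [(hπ.2 n).1 h0]
          exact Gm.PStrat_E col k ∅ (π n)
        · rw [(hπ.2 n).2 h1]
          exact hρ1 _ _ h1
      have hinv : ∀ n, π n ∈ Gm.parityAux col k ∅ := by
        intro n
        induction n with
        | zero => rw [hπ.1]; exact hv0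
        | succ n ihn =>
            have hstep := Gm.Pstep col k ∅ (π n) ihn (Set.notMem_empty _)
            rcases Gm.mem_V0_or_V1 (π n) with h0 | h1
            · rw [(hπ.2 n).1 h0]
              exact hstep.1 h0
            · exact hstep.2 h1 (π (n + 1)) (hEplay n)
      intro t htmem hoddt
      simp only [Finset.mem_Icc] at htmem
      have hodd : {n | π n ∈ col (2 * t - 1)}.Infinite := by
        rw [infinite_unbdd]
        intro N
        obtain ⟨n, hn1, hn2⟩ := hoddt N
        exact ⟨n, hn1, hn2⟩
      have hcomp : ∀ n, 0 ≤ n → π n ∈ Gm.V0 → π (n + 1) = Gm.PStrat col k ∅ (π n) := by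
        intro n _ h0
        exact (hπ.2 n).1 h0
      obtain ⟨s, hs1, hs2, hs3⟩ := Gm.Pplay col k hdisj k le_rfl ∅ π hEplay 0
        (fun n _ => ⟨hinv n, Set.notMem_empty _⟩) hcomp hfair t htmem.1 htmem.2 hodd
      refine ⟨s, by simp only [Finset.mem_Icc]; omega, ?_⟩
      intro N
      obtain ⟨n, hn1, hn2⟩ := exists_ge_of_infinite hs3 N
      exact ⟨n, hn1, hn2⟩

end LiveGameGraph

/-- history of a play -/
def hist {V : Type*} (π : ℕ → V) (n : ℕ) : List V := List.ofFn (fun j : Fin n => π j)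

lemma hist_length {V : Type*} (π : ℕ → V) (n : ℕ) : (hist π n).length = n := by
  simp [hist]

lemma hist_get {V : Type*} (π : ℕ → V) {j n : ℕ} (h : j < n) :
    (hist π n)[j]? = some (π j) := by
  simp [hist, List.getElem?_ofFn, h]

/-- count of the number of times edge (v,w) has been taken in history h -/
noncomputable def taken {V : Type*} (h : List V) (v w : V) : ℕ :=
  ((Finset.range (h.length - 1)).filter
    (fun n => h[n]? = some v ∧ h[n + 1]? = some w)).card

lemma taken_hist_eq {V : Type*} (π : ℕ → V) (n : ℕ) (v w : V) :
    taken (hist π n) v w =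
      ((Finset.range (n - 1)).filter (fun j => π j = v ∧ π (j + 1) = w)).card := by
  unfold taken
  rw [hist_length]
  congr 1
  apply Finset.filter_congr
  intro j hj
  simp only [Finset.mem_range] at hj
  rw [hist_get π (by omega : j < n), hist_get π (by omega : j + 1 < n)]
  simp

/-- the vertex was preceded by a high-colored vertex more recently than its last visit -/
def suspected {V : Type*} (col : ℕ → Set V) (i : ℕ) (h : List V) (v : V) : Prop :=
  ∃ n, n < h.length ∧ (∀ u, h[n]? = some u → u ∉ LiveGameGraph.lowcol col i) ∧
    ∀ n', n < n' → n' < h.length → h[n']? ≠ some v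

namespace LiveGameGraph

variable {V : Type*} [Fintype V] (Gm : LiveGameGraph V) (col : ℕ → Set V)

noncomputable def liveFinset (v : V) : Finset V := Finset.univ.filter (fun w => Gm.El v w)

lemma mem_liveFinset {v w : V} : w ∈ Gm.liveFinset v ↔ Gm.El v w := by
  simp [liveFinset]

noncomputable def leastTaken (h : List V) (v : V) : V :=
  if hne : (Gm.liveFinset v).Nonempty then
    Classical.choose (Finset.exists_min_image (Gm.liveFinset v) (fun w => taken h v w) hne)
  else Gm.dflt v

lemma leastTaken_mem {v : V} (hne : (Gm.liveFinset v).Nonempty) (h : List V) :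
    Gm.leastTaken h v ∈ Gm.liveFinset v := by
  unfold leastTaken
  rw [dif_pos hne]
  exact (Classical.choose_spec (Finset.exists_min_image _ _ hne)).1

lemma leastTaken_min {v : V} (hne : (Gm.liveFinset v).Nonempty) (h : List V)
    {w : V} (hw : w ∈ Gm.liveFinset v) :
    taken h v (Gm.leastTaken h v) ≤ taken h v w := by
  unfold leastTaken
  rw [dif_pos hne]
  exact (Classical.choose_spec (Finset.exists_min_image _ _ hne)).2 w hw

lemma leastTaken_E (h : List V) (v : V) : Gm.E v (Gm.leastTaken h v) := by
  unfold leastTaken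
  split
  · next hne =>
      have := (Classical.choose_spec
        (Finset.exists_min_image (Gm.liveFinset v) (fun w => taken h v w) hne)).1
      rw [Gm.mem_liveFinset] at this
      exact (Gm.live_sub _ _ this).2
  · exact Gm.dflt_E v

/-- ν-approximant function at level i+1 -/
def dfun (i : ℕ) (acc : Set V) (Y : Set V) : Set V :=
  lfpSet fun X => Gm.parityAux col i (acc ∪ Gm.Tterm col (i + 1) Y X)

lemma dfun_mono (i : ℕ) (acc : Set V) : Monotone (Gm.dfun col i acc) :=
  Gm.parityAux_outer_mono col i acc

lemma parityAux_eq_gfp_dfun (i : ℕ) (acc : Set V) :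
    Gm.parityAux col (i + 1) acc = gfpSet (Gm.dfun col i acc) := rfl

/-- ν-stages from above -/
def dstage (i : ℕ) (acc : Set V) (m : ℕ) : Set V := (Gm.dfun col i acc)^[m] Set.univ

lemma dstage_zero (i : ℕ) (acc : Set V) : Gm.dstage col i acc 0 = Set.univ := rfl

lemma dstage_succ (i : ℕ) (acc : Set V) (m : ℕ) :
    Gm.dstage col i acc (m + 1) = Gm.dfun col i acc (Gm.dstage col i acc m) :=
  Function.iterate_succ_apply' _ m _

lemma dstage_anti (i : ℕ) (acc : Set V) {m m' : ℕ} (h : m ≤ m') :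
    Gm.dstage col i acc m' ⊆ Gm.dstage col i acc m :=
  iterate_univ_anti (Gm.dfun_mono col i acc) h

lemma parityAux_subset_dstage (i : ℕ) (acc : Set V) (m : ℕ) :
    Gm.parityAux col (i + 1) acc ⊆ Gm.dstage col i acc m := by
  rw [parityAux_eq_gfp_dfun]
  exact gfpSet_subset_iterate_univ (Gm.dfun_mono col i acc) m

lemma dstage_succ_unfold (i : ℕ) (acc : Set V) (m : ℕ) :
    Gm.dstage col i acc (m + 1) =
      Gm.parityAux col i (acc ∪ Gm.Tterm col (i + 1) (Gm.dstage col i acc m)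
        (Gm.dstage col i acc (m + 1))) := by
  rw [dstage_succ]
  show Gm.dfun col i acc _ = _
  conv_lhs => rw [dfun, ← lfpSet_fixed (Gm.parityAux_inner_mono col i acc (Gm.dstage col i acc m))]
  rfl

lemma exists_dstage_not (i : ℕ) (acc : Set V) {v : V} (hv : v ∉ Gm.parityAux col (i + 1) acc) :
    ∃ m, v ∉ Gm.dstage col i acc (m + 1) := by
  obtain ⟨M, hM⟩ := exists_iterate_gfpSet (Gm.dfun_mono col i acc)
  have hMv : v ∉ Gm.dstage col i acc M := by
    show v ∉ (Gm.dfun col i acc)^[M] Set.univ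
    rw [hM, ← parityAux_eq_gfp_dfun]
    exact hv
  cases M with
  | zero => exact absurd (by trivial : v ∈ Gm.dstage col i acc 0) hMv
  | succ m => exact ⟨m, hMv⟩

/-- ν-rank of a vertex outside the level-(i+1) fixpoint -/
noncomputable def mrank (i : ℕ) (acc : Set V) (v : V) : ℕ :=
  sInf {m | v ∉ Gm.dstage col i acc (m + 1)}

lemma mrank_not {i : ℕ} {acc : Set V} {v : V} (hv : v ∉ Gm.parityAux col (i + 1) acc) :
    v ∉ Gm.dstage col i acc (Gm.mrank col i acc v + 1) :=
  Nat.sInf_mem (Set.nonempty_def.2 (Gm.exists_dstage_not col i acc hv))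

lemma mrank_mem {i : ℕ} {acc : Set V} {v : V} :
    v ∈ Gm.dstage col i acc (Gm.mrank col i acc v) := by
  by_cases h0 : Gm.mrank col i acc v = 0
  · rw [h0, dstage_zero]; trivial
  · by_contra hc
    have hmem : Gm.mrank col i acc v - 1 ∈ {m | v ∉ Gm.dstage col i acc (m + 1)} := by
      show v ∉ Gm.dstage col i acc (Gm.mrank col i acc v - 1 + 1)
      have heq : Gm.mrank col i acc v - 1 + 1 = Gm.mrank col i acc v := by omega
      rw [heq]; exact hc
    have hle : Gm.mrank col i acc v ≤ Gm.mrank col i acc v - 1 := Nat.sInf_le hmem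
    omega

lemma mrank_le_of_not {i m : ℕ} {acc : Set V} {w : V} (h : w ∉ Gm.dstage col i acc (m + 1)) :
    Gm.mrank col i acc w ≤ m := Nat.sInf_le h

lemma mrank_lt_of_not_mem {i m : ℕ} {acc : Set V} {w : V} (h : w ∉ Gm.dstage col i acc m) :
    Gm.mrank col i acc w < m := by
  cases m with
  | zero => exact absurd (by trivial : w ∈ Gm.dstage col i acc 0) h
  | succ m => exact Nat.lt_succ_of_le (Gm.mrank_le_of_not col h)

lemma not_parityAux_of_not_dstage {i m : ℕ} {acc : Set V} {w : V}
    (h : w ∉ Gm.dstage col i acc m) : w ∉ Gm.parityAux col (i + 1) acc :=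
  fun hc => h (Gm.parityAux_subset_dstage col i acc m hc)

/-- the inner accumulator for a vertex outside the fixpoint -/
def dacc (i : ℕ) (acc : Set V) (v : V) : Set V :=
  acc ∪ Gm.Tterm col (i + 1) (Gm.dstage col i acc (Gm.mrank col i acc v))
    (Gm.dstage col i acc (Gm.mrank col i acc v + 1))

lemma dacc_eq_dstage {i : ℕ} {acc : Set V} (v : V) :
    Gm.parityAux col i (Gm.dacc col i acc v) =
      Gm.dstage col i acc (Gm.mrank col i acc v + 1) :=
  (Gm.dstage_succ_unfold col i acc (Gm.mrank col i acc v)).symm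

lemma dmem {i : ℕ} {acc : Set V} {v : V} (hv : v ∉ Gm.parityAux col (i + 1) acc) :
    v ∉ Gm.parityAux col i (Gm.dacc col i acc v) := by
  rw [dacc_eq_dstage]
  exact Gm.mrank_not col hv

lemma dnotT {i : ℕ} {acc : Set V} {v : V} (hv : v ∉ Gm.parityAux col (i + 1) acc) :
    v ∉ Gm.Tterm col (i + 1) (Gm.dstage col i acc (Gm.mrank col i acc v))
      (Gm.dstage col i acc (Gm.mrank col i acc v + 1)) := by
  intro hc
  exact Gm.dmem col hv (Gm.acc_subset_parityAux col i _ (Or.inr hc))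

lemma dnotacc {i : ℕ} {acc : Set V} {v : V} (hv : v ∉ Gm.parityAux col (i + 1) acc) :
    v ∉ acc := by
  intro hc
  exact Gm.dmem col hv (Gm.acc_subset_parityAux col i _ (Or.inl hc))

lemma dcond_even {i : ℕ} {acc : Set V} {v : V} (hv : v ∉ Gm.parityAux col (i + 1) acc)
    (hcol : v ∈ col (2 * (i + 1))) :
    v ∉ Gm.cpre (Gm.dstage col i acc (Gm.mrank col i acc v)) := by
  intro hc
  exact Gm.dnotT col hv (Or.inl ⟨hcol, hc⟩)

lemma dcond_odd {i c : ℕ} {acc : Set V} {v : V} (hv : v ∉ Gm.parityAux col (i + 1) acc)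
    (hcol : v ∈ col c) (h1 : 1 ≤ c) (h2 : c ≤ 2 * i + 1) :
    v ∉ Gm.apre (Gm.dstage col i acc (Gm.mrank col i acc v))
      (Gm.dstage col i acc (Gm.mrank col i acc v + 1)) := by
  intro hc
  refine Gm.dnotT col hv (Or.inr ⟨?_, hc⟩)
  refine Set.mem_iUnion₂.2 ⟨c, ?_, hcol⟩
  simp only [Finset.mem_Icc]; omega

/-- The Player-1 spoiling strategy. -/
noncomputable def DStrat : ℕ → Set V → List V → V → V
  | 0, _ => fun _ v => Gm.dflt v
  | i + 1, acc => fun h v =>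
      if v ∈ Gm.parityAux col (i + 1) acc then Gm.dflt v
      else if v ∈ col (2 * (i + 1)) then
        Gm.pick v (· ∉ Gm.dstage col i acc (Gm.mrank col i acc v))
      else if v ∈ lowcol col i ∧ ¬ suspected col i h v then
        DStrat i (Gm.dacc col i acc v) h v
      else if ∀ w, Gm.El v w → w ∉ Gm.dstage col i acc (Gm.mrank col i acc v + 1) then
        if (Gm.liveFinset v).Nonempty then Gm.leastTaken h v
        else Gm.pick v (· ∉ Gm.dstage col i acc (Gm.mrank col i acc v + 1))
      else Gm.pick v (· ∉ Gm.dstage col i acc (Gm.mrank col i acc v))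

lemma DStrat_succ_def (i : ℕ) (acc : Set V) (h : List V) (v : V) :
    Gm.DStrat col (i + 1) acc h v =
      if v ∈ Gm.parityAux col (i + 1) acc then Gm.dflt v
      else if v ∈ col (2 * (i + 1)) then
        Gm.pick v (· ∉ Gm.dstage col i acc (Gm.mrank col i acc v))
      else if v ∈ lowcol col i ∧ ¬ suspected col i h v then
        Gm.DStrat col i (Gm.dacc col i acc v) h v
      else if ∀ w, Gm.El v w → w ∉ Gm.dstage col i acc (Gm.mrank col i acc v + 1) then
        if (Gm.liveFinset v).Nonempty then Gm.leastTaken h v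
        else Gm.pick v (· ∉ Gm.dstage col i acc (Gm.mrank col i acc v + 1))
      else Gm.pick v (· ∉ Gm.dstage col i acc (Gm.mrank col i acc v)) := rfl

lemma DStrat_E (i : ℕ) (acc : Set V) (h : List V) (v : V) :
    Gm.E v (Gm.DStrat col i acc h v) := by
  induction i generalizing acc with
  | zero => exact Gm.dflt_E v
  | succ i ih =>
      rw [DStrat_succ_def]
      split
      · exact Gm.dflt_E v
      split
      · exact Gm.pick_E v _
      split
      · exact ih _
      split
      · split
        · exact Gm.leastTaken_E h v
        · exact Gm.pick_E v _
      · exact Gm.pick_E v _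

end LiveGameGraph

namespace LiveGameGraph

variable {V : Type*} [Fintype V] (Gm : LiveGameGraph V) (col : ℕ → Set V)

lemma not_cpre_V1 {v : V} {S : Set V} (hv1 : v ∈ Gm.V1) (h : v ∉ Gm.cpre S) :
    ∃ w, Gm.E v w ∧ w ∉ S := by
  by_contra hc
  push_neg at hc
  exact h (Or.inr ⟨hv1, hc⟩)

lemma not_pre1_V1 {v : V} {S : Set V} (hv1 : v ∈ Gm.V1) (h : v ∉ Gm.pre1 S) :
    ∃ w, Gm.E v w ∧ w ∉ S := by
  by_contra hc
  push_neg at hc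
  exact h ⟨hv1, hc⟩

lemma not_apre_parts {v : V} {S T : Set V} (h : v ∉ Gm.apre S T) :
    v ∉ Gm.cpre T ∧ (v ∉ Gm.lpre T ∨ v ∉ Gm.pre1 S) := by
  constructor
  · intro hc; exact h (Or.inl hc)
  · by_contra hc
    push_neg at hc
    exact h (Or.inr ⟨hc.1, hc.2⟩)

lemma lowcol_zero : lowcol col 0 = (∅ : Set V) := by
  simp [lowcol]

/-- one-step lemma: the Player-1 strategy never enters the opponent's region -/
lemma Dc0 (i : ℕ) (acc : Set V) (h : List V) (v : V) (hv1 : v ∈ Gm.V1)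
    (hlow : v ∈ lowcol col i) (hv : v ∉ Gm.parityAux col i acc) :
    Gm.DStrat col i acc h v ∉ Gm.parityAux col i acc := by
  induction i generalizing acc with
  | zero =>
      rw [lowcol_zero] at hlow
      exact absurd hlow (Set.notMem_empty v)
  | succ i ih =>
      rw [DStrat_succ_def, if_neg hv]
      by_cases hec : v ∈ col (2 * (i + 1))
      · rw [if_pos hec]
        have hex : ∃ w, Gm.E v w ∧ w ∉ Gm.dstage col i acc (Gm.mrank col i acc v) := by
          refine Gm.not_cpre_V1 hv1 ?_
          exact Gm.dcond_even col hv hec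
        exact Gm.not_parityAux_of_not_dstage col (Gm.pick_spec hex)
      rw [if_neg hec]
      obtain ⟨c, hc1, hc2, hcc⟩ : ∃ c, 1 ≤ c ∧ c ≤ 2 * i + 1 ∧ v ∈ col c := by
        rcases mem_lowcol_succ_cases col hlow with hl | hl | hl
        · simp only [lowcol, Set.mem_iUnion, Finset.mem_Icc, exists_prop] at hl
          obtain ⟨c, ⟨hca, hcb⟩, hcc⟩ := hl
          exact ⟨c, hca, by omega, hcc⟩
        · exact ⟨2 * i + 1, by omega, le_rfl, hl⟩
        · exact absurd hl hec
      have hapre := Gm.dcond_odd col hv hcc hc1 hc2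
      have hparts := Gm.not_apre_parts hapre
      by_cases hinner : v ∈ lowcol col i ∧ ¬ suspected col i h v
      · rw [if_pos hinner]
        have h1 := ih (Gm.dacc col i acc v) hinner.1 (Gm.dmem col hv)
        rw [dacc_eq_dstage] at h1
        exact Gm.not_parityAux_of_not_dstage col h1
      rw [if_neg hinner]
      by_cases hsafe : ∀ w, Gm.El v w → w ∉ Gm.dstage col i acc (Gm.mrank col i acc v + 1)
      · rw [if_pos hsafe]
        by_cases hne : (Gm.liveFinset v).Nonempty
        · rw [if_pos hne]
          have hmem := Gm.leastTaken_mem hne h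
          rw [Gm.mem_liveFinset] at hmem
          exact Gm.not_parityAux_of_not_dstage col (hsafe _ hmem)
        · rw [if_neg hne]
          have hex : ∃ w, Gm.E v w ∧ w ∉ Gm.dstage col i acc (Gm.mrank col i acc v + 1) :=
            Gm.not_cpre_V1 hv1 hparts.1
          exact Gm.not_parityAux_of_not_dstage col (Gm.pick_spec hex)
      · rw [if_neg hsafe]
        push_neg at hsafe
        obtain ⟨w0, hlw0, hw0⟩ := hsafe
        have hnpre1 : v ∉ Gm.pre1 (Gm.dstage col i acc (Gm.mrank col i acc v)) := by
          rcases hparts.2 with hp | hp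
          · exact absurd ⟨w0, hlw0, hw0⟩ hp
          · exact hp
        have hex : ∃ w, Gm.E v w ∧ w ∉ Gm.dstage col i acc (Gm.mrank col i acc v) :=
          Gm.not_pre1_V1 hv1 hnpre1
        exact Gm.not_parityAux_of_not_dstage col (Gm.pick_spec hex)

/-- if high-colored vertices and `v` both recur, `v` is suspected at infinitely many visits -/
lemma suspected_io (π : ℕ → V) (i : ℕ) (v : V)
    (hvio : {n | π n = v}.Infinite)
    (hhi : {n | π n ∉ lowcol col i}.Infinite) :
    ∀ N, ∃ n, N ≤ n ∧ π n = v ∧ suspected col i (hist π n) v := by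
  intro N
  obtain ⟨g, hgN, hg⟩ := exists_ge_of_infinite hhi N
  have hS : {n | π n = v ∧ g < n}.Nonempty := by
    obtain ⟨n, hn1, hn2⟩ := exists_ge_of_infinite hvio (g + 1)
    exact ⟨n, hn2, by omega⟩
  obtain ⟨hnv, hgn⟩ := Nat.sInf_mem hS
  set n := sInf {n | π n = v ∧ g < n} with hndef
  refine ⟨n, by omega, hnv, ⟨g, ?_, ?_, ?_⟩⟩
  · rw [hist_length]; exact hgn
  · intro u hu
    rw [hist_get π hgn] at hu
    cases hu
    exact hg
  · intro n' h1 h2 hc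
    rw [hist_length] at h2
    rw [hist_get π h2] at hc
    cases hc
    have : n ≤ n' := Nat.sInf_le ⟨rfl, by omega⟩
    omega

/-- round-robin fairness: if the least-taken live successor is chosen at infinitely
many visits, then every live edge is taken infinitely often -/
lemma RR_fair (π : ℕ → V) (v w : V) (hlw : Gm.El v w)
    (hio : {n | π n = v ∧ π (n + 1) = Gm.leastTaken (hist π n) v}.Infinite) :
    {n | π n = v ∧ π (n + 1) = w}.Infinite := by
  by_contra hfin
  rw [Set.not_infinite] at hfin
  set B := hfin.toFinset.card with hBdef
  have hne : (Gm.liveFinset v).Nonempty := ⟨w, Gm.mem_liveFinset.2 hlw⟩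
  have htakenw : ∀ n, taken (hist π n) v w ≤ B := by
    intro n
    rw [taken_hist_eq]
    refine Finset.card_le_card ?_
    intro j hj
    simp only [Finset.mem_filter, Finset.mem_range] at hj
    rw [Set.Finite.mem_toFinset]
    exact ⟨hj.2.1, hj.2.2⟩
  obtain ⟨w', hw'⟩ := exists_infinite_fiber_within (π := fun n => π (n + 1)) hio
  have hw'mem : w' ∈ Gm.liveFinset v := by
    obtain ⟨n, hn⟩ := hw'.nonempty
    have : w' = Gm.leastTaken (hist π n) v := by
      rw [← hn.2]; exact hn.1.2
    rw [this]
    exact Gm.leastTaken_mem hne _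
  obtain ⟨tset, htsub, htcard⟩ := hw'.exists_subset_card_eq (B + 1)
  set M := tset.sup id with hMdef
  obtain ⟨n, hnM, hnC⟩ := exists_ge_of_infinite hw' (M + 2)
  have hcount : B + 1 ≤ taken (hist π n) v w' := by
    rw [taken_hist_eq]
    rw [← htcard]
    refine Finset.card_le_card ?_
    intro j hj
    have hjs := htsub hj
    have hjM : j ≤ M := Finset.le_sup (f := id) hj
    simp only [Finset.mem_filter, Finset.mem_range]
    exact ⟨by omega, hjs.1.1, hjs.2⟩
  have hlast : taken (hist π n) v w' ≤ B := by
    have heq : w' = Gm.leastTaken (hist π n) v := by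
      rw [← hnC.2]; exact hnC.1.2
    rw [heq]
    exact le_trans (Gm.leastTaken_min hne (hist π n) (Gm.mem_liveFinset.2 hlw)) (htakenw n)
  omega

end LiveGameGraph

namespace LiveGameGraph

variable {V : Type*} [Fintype V] (Gm : LiveGameGraph V) (col : ℕ → Set V)

lemma Dplay (k : ℕ)
    (hdisj : ∀ i ∈ Finset.Icc 1 (2 * k), ∀ j ∈ Finset.Icc 1 (2 * k),
      i ≠ j → col i ∩ col j = ∅) :
    ∀ i, i ≤ k → ∀ (acc : Set V) (π : ℕ → V),
    (∀ n, Gm.E (π n) (π (n + 1))) → ∀ n0 : ℕ,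
    (∀ n, n0 ≤ n → π n ∉ Gm.parityAux col i acc) →
    (∀ n, n0 ≤ n → π n ∈ Gm.V1 → π (n + 1) = Gm.DStrat col i acc (hist π n) (π n)) →
    (∀ n, n0 ≤ n → π n ∈ lowcol col i) →
    ((∃ t, 1 ≤ t ∧ t ≤ k ∧ {n | π n ∈ col (2 * t - 1)}.Infinite ∧
        ∀ s, t ≤ s → s ≤ k → ¬ {n | π n ∈ col (2 * s)}.Infinite) ∧
      ∀ v w, Gm.El v w → {n | π n = v}.Infinite → {n | π n = v ∧ π (n + 1) = w}.Infinite) := by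
  intro i
  induction i with
  | zero =>
      intro _ acc π _ n0 _ _ h3
      have := h3 n0 le_rfl
      rw [lowcol_zero] at this
      exact absurd this (Set.notMem_empty _)
  | succ i ih =>
      intro hik acc π hE n0 h1 h2 h3
      -- odd-ish color of any tail non-top-even vertex
      have hoddc : ∀ n, n0 ≤ n → π n ∉ col (2 * (i + 1)) →
          ∃ c, 1 ≤ c ∧ c ≤ 2 * i + 1 ∧ π n ∈ col c := by
        intro n hn hec
        rcases mem_lowcol_succ_cases col (h3 n hn) with hl | hl | hl
        · simp only [lowcol, Set.mem_iUnion, Finset.mem_Icc, exists_prop] at hl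
          obtain ⟨c, ⟨hca, hcb⟩, hcc⟩ := hl
          exact ⟨c, hca, by omega, hcc⟩
        · exact ⟨2 * i + 1, by omega, le_rfl, hl⟩
        · exact absurd hl hec
      -- the one-step lemma
      have hstep : ∀ n, n0 ≤ n →
          π (n + 1) ∉ Gm.dstage col i acc (Gm.mrank col i acc (π n) + 1) ∧
          (π n ∈ col (2 * (i + 1)) →
            π (n + 1) ∉ Gm.dstage col i acc (Gm.mrank col i acc (π n))) := by
        intro n hn
        have hvA := h1 n hn
        rcases Gm.mem_V0_or_V1 (π n) with hv0 | hv1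
        · by_cases hec : π n ∈ col (2 * (i + 1))
          · have hcpre := Gm.dcond_even col hvA hec
            have hstrict : π (n + 1) ∉ Gm.dstage col i acc (Gm.mrank col i acc (π n)) :=
              fun hmem => hcpre (Or.inl ⟨hv0, π (n + 1), hE n, hmem⟩)
            exact ⟨fun hmem => hstrict (Gm.dstage_anti col i acc (Nat.le_succ _) hmem),
              fun _ => hstrict⟩
          · obtain ⟨c, hc1, hc2, hcc⟩ := hoddc n hn hec
            have hparts := Gm.not_apre_parts (Gm.dcond_odd col hvA hcc hc1 hc2)
            exact ⟨fun hmem => hparts.1 (Or.inl ⟨hv0, π (n + 1), hE n, hmem⟩),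
              fun hec' => absurd hec' hec⟩
        · have hmove := h2 n hn hv1
          rw [DStrat_succ_def, if_neg hvA] at hmove
          by_cases hec : π n ∈ col (2 * (i + 1))
          · rw [if_pos hec] at hmove
            have hex := Gm.not_cpre_V1 hv1 (Gm.dcond_even col hvA hec)
            have hstrict := Gm.pick_spec hex
            rw [← hmove] at hstrict
            exact ⟨fun hmem => hstrict (Gm.dstage_anti col i acc (Nat.le_succ _) hmem),
              fun _ => hstrict⟩
          rw [if_neg hec] at hmove
          obtain ⟨c, hc1, hc2, hcc⟩ := hoddc n hn hec
          have hparts := Gm.not_apre_parts (Gm.dcond_odd col hvA hcc hc1 hc2)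
          by_cases hinner : π n ∈ lowcol col i ∧ ¬ suspected col i (hist π n) (π n)
          · rw [if_pos hinner] at hmove
            have hstep1 := Gm.Dc0 col i (Gm.dacc col i acc (π n)) (hist π n) (π n)
              hv1 hinner.1 (Gm.dmem col hvA)
            rw [dacc_eq_dstage] at hstep1
            rw [← hmove] at hstep1
            exact ⟨hstep1, fun hec' => absurd hec' hec⟩
          rw [if_neg hinner] at hmove
          by_cases hsafe : ∀ w, Gm.El (π n) w →
              w ∉ Gm.dstage col i acc (Gm.mrank col i acc (π n) + 1)
          · rw [if_pos hsafe] at hmove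
            by_cases hne : (Gm.liveFinset (π n)).Nonempty
            · rw [if_pos hne] at hmove
              have hmem := Gm.leastTaken_mem hne (hist π n)
              rw [Gm.mem_liveFinset] at hmem
              have := hsafe _ hmem
              rw [← hmove] at this
              exact ⟨this, fun hec' => absurd hec' hec⟩
            · rw [if_neg hne] at hmove
              have hex := Gm.not_cpre_V1 hv1 hparts.1
              have := Gm.pick_spec hex
              rw [← hmove] at this
              exact ⟨this, fun hec' => absurd hec' hec⟩
          · rw [if_neg hsafe] at hmove
            push_neg at hsafe
            obtain ⟨w0, hlw0, hw0⟩ := hsafe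
            have hnpre1 : π n ∉ Gm.pre1 (Gm.dstage col i acc (Gm.mrank col i acc (π n))) := by
              rcases hparts.2 with hp | hp
              · exact absurd ⟨w0, hlw0, hw0⟩ hp
              · exact hp
            have hstrict := Gm.pick_spec (Gm.not_pre1_V1 hv1 hnpre1)
            rw [← hmove] at hstrict
            exact ⟨fun hmem => hstrict (Gm.dstage_anti col i acc (Nat.le_succ _) hmem),
              fun _ => hstrict⟩
      -- V1 move analysis away from the inner branch
      have hV1case : ∀ n, n0 ≤ n → π n ∈ Gm.V1 → π n ∉ col (2 * (i + 1)) →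
          ¬ (π n ∈ lowcol col i ∧ ¬ suspected col i (hist π n) (π n)) →
          ((∀ w, Gm.El (π n) w → w ∉ Gm.dstage col i acc (Gm.mrank col i acc (π n) + 1)) ∧
            ((Gm.liveFinset (π n)).Nonempty → π (n + 1) = Gm.leastTaken (hist π n) (π n)))
          ∨ π (n + 1) ∉ Gm.dstage col i acc (Gm.mrank col i acc (π n)) := by
        intro n hn hv1 hec hni
        have hmove := h2 n hn hv1
        rw [DStrat_succ_def, if_neg (h1 n hn), if_neg hec, if_neg hni] at hmove
        by_cases hsafe : ∀ w, Gm.El (π n) w →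
            w ∉ Gm.dstage col i acc (Gm.mrank col i acc (π n) + 1)
        · rw [if_pos hsafe] at hmove
          refine Or.inl ⟨hsafe, fun hne => ?_⟩
          rw [if_pos hne] at hmove
          exact hmove
        · rw [if_neg hsafe] at hmove
          push_neg at hsafe
          obtain ⟨w0, hlw0, hw0⟩ := hsafe
          obtain ⟨c, hc1, hc2, hcc⟩ := hoddc n hn hec
          have hparts := Gm.not_apre_parts (Gm.dcond_odd col (h1 n hn) hcc hc1 hc2)
          have hnpre1 : π n ∉ Gm.pre1 (Gm.dstage col i acc (Gm.mrank col i acc (π n))) := by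
            rcases hparts.2 with hp | hp
            · exact absurd ⟨w0, hlw0, hw0⟩ hp
            · exact hp
          have hstrict := Gm.pick_spec (Gm.not_pre1_V1 hv1 hnpre1)
          rw [← hmove] at hstrict
          exact Or.inr hstrict
      -- stabilization of the ν-rank
      obtain ⟨T1, hT1n0, hT1⟩ := eventually_constant_of_antitone
        (fun n => Gm.mrank col i acc (π n)) n0
        (fun n hn => Gm.mrank_le_of_not col (hstep n hn).1)
      set minf := Gm.mrank col i acc (π T1) with hminf
      have hm : ∀ n, T1 ≤ n → Gm.mrank col i acc (π n) = minf := hT1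
      have hnoeven : ∀ n, T1 ≤ n → π n ∉ col (2 * (i + 1)) := by
        intro n hn hec
        have hstrict := (hstep n (le_trans hT1n0 hn)).2 hec
        rw [hm n hn] at hstrict
        have hlt := Gm.mrank_lt_of_not_mem col hstrict
        rw [hm (n + 1) (by omega)] at hlt
        omega
      set acc' := acc ∪ Gm.Tterm col (i + 1) (Gm.dstage col i acc minf)
        (Gm.dstage col i acc (minf + 1)) with hacc'
      have hdacc_eq : ∀ n, T1 ≤ n → Gm.dacc col i acc (π n) = acc' := by
        intro n hn
        rw [hacc', dacc, hm n hn]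
      have hAacc' : Gm.parityAux col i acc' = Gm.dstage col i acc (minf + 1) := by
        rw [hacc']
        exact (Gm.dstage_succ_unfold col i acc minf).symm
      have h1' : ∀ n, T1 + 1 ≤ n → π n ∉ Gm.parityAux col i acc' := by
        intro n hn
        rw [hAacc']
        have hh := (hstep (n - 1) (by omega)).1
        rw [hm (n - 1) (by omega), (by omega : n - 1 + 1 = n)] at hh
        exact hh
      -- the rank-drop contradiction after stabilization
      have hnostrict : ∀ n, T1 ≤ n →
          π (n + 1) ∉ Gm.dstage col i acc (Gm.mrank col i acc (π n)) → False := by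
        intro n hn hstrict
        rw [hm n hn] at hstrict
        have hlt := Gm.mrank_lt_of_not_mem col hstrict
        rw [hm (n + 1) (by omega)] at hlt
        omega
      by_cases hhi : {n | T1 ≤ n ∧ π n ∉ lowcol col i}.Infinite
      · -- Case A : high-colored (odd) vertices recur forever
        have hhi' : {n | π n ∉ lowcol col i}.Infinite := hhi.mono (fun n hn => hn.2)
        have hhicol : ∀ n, T1 ≤ n → π n ∉ lowcol col i → π n ∈ col (2 * i + 1) := by
          intro n hn hl
          rcases mem_lowcol_succ_cases col (h3 n (le_trans hT1n0 hn)) with h | h | h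
          · exact absurd h hl
          · exact h
          · exact absurd h (hnoeven n hn)
        constructor
        · refine ⟨i + 1, by omega, hik, ?_, ?_⟩
          · have h21 : 2 * (i + 1) - 1 = 2 * i + 1 := by omega
            rw [h21]
            refine hhi.mono ?_
            intro n hn
            exact hhicol n hn.1 hn.2
          · intro s hs1 hs2 hio
            obtain ⟨n, hn1, hn2⟩ := exists_ge_of_infinite hio T1
            rcases Nat.eq_or_lt_of_le hs1 with hseq | hslt
            · refine hnoeven n hn1 ?_
              rw [hseq]
              exact hn2
            · have hlow := h3 n (le_trans hT1n0 hn1)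
              simp only [lowcol, Set.mem_iUnion, Finset.mem_Icc, exists_prop] at hlow
              obtain ⟨c, ⟨hca, hcb⟩, hcc⟩ := hlow
              have := col_unique col hdisj (hn2 : π n ∈ col (2 * s)) hcc
                (by omega) (by omega) (by omega) (by omega)
              omega
        · -- fairness
          intro v w hlw hvio
          have hv1 := (Gm.live_sub v w hlw).1
          have hneF : (Gm.liveFinset v).Nonempty := ⟨w, Gm.mem_liveFinset.2 hlw⟩
          by_cases hsafe : ∀ w', Gm.El v w' → w' ∉ Gm.dstage col i acc (minf + 1)
          · refine Gm.RR_fair π v w hlw ?_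
            rw [infinite_unbdd]
            intro N
            by_cases hvlow : v ∈ lowcol col i
            · obtain ⟨n, hnN, hnv, hsusp⟩ := suspected_io col π i v hvio hhi' (max N T1)
              have hnT1 : T1 ≤ n := le_trans (le_max_right _ _) hnN
              subst hnv
              have hni : ¬ (π n ∈ lowcol col i ∧ ¬ suspected col i (hist π n) (π n)) :=
                fun hcon => hcon.2 hsusp
              rcases hV1case n (le_trans hT1n0 hnT1) hv1 (hnoeven n hnT1) hni with
                ⟨_, hRR⟩ | hstrict
              · exact ⟨n, le_trans (le_max_left _ _) hnN, rfl, hRR hneF⟩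
              · exact absurd hstrict (fun hs => hnostrict n hnT1 hs)
            · obtain ⟨n, hnN, hnv⟩ := exists_ge_of_infinite hvio (max N T1)
              have hnT1 : T1 ≤ n := le_trans (le_max_right _ _) hnN
              have hnv' : π n = v := hnv
              subst hnv'
              have hni : ¬ (π n ∈ lowcol col i ∧ ¬ suspected col i (hist π n) (π n)) :=
                fun hcon => hvlow hcon.1
              rcases hV1case n (le_trans hT1n0 hnT1) hv1 (hnoeven n hnT1) hni with
                ⟨_, hRR⟩ | hstrict
              · exact ⟨n, le_trans (le_max_left _ _) hnN, rfl, hRR hneF⟩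
              · exact absurd hstrict (fun hs => hnostrict n hnT1 hs)
          · exfalso
            by_cases hvlow : v ∈ lowcol col i
            · obtain ⟨n, hnN, hnv, hsusp⟩ := suspected_io col π i v hvio hhi' T1
              subst hnv
              have hni : ¬ (π n ∈ lowcol col i ∧ ¬ suspected col i (hist π n) (π n)) :=
                fun hcon => hcon.2 hsusp
              rcases hV1case n (le_trans hT1n0 hnN) hv1 (hnoeven n hnN) hni with
                ⟨hsafe', _⟩ | hstrict
              · refine hsafe ?_
                rw [← hm n hnN]
                exact hsafe'
              · exact hnostrict n hnN hstrict
            · obtain ⟨n, hnN, hnv⟩ := exists_ge_of_infinite hvio T1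
              have hnv' : π n = v := hnv
              subst hnv'
              have hni : ¬ (π n ∈ lowcol col i ∧ ¬ suspected col i (hist π n) (π n)) :=
                fun hcon => hvlow hcon.1
              rcases hV1case n (le_trans hT1n0 hnN) hv1 (hnoeven n hnN) hni with
                ⟨hsafe', _⟩ | hstrict
              · refine hsafe ?_
                rw [← hm n hnN]
                exact hsafe'
              · exact hnostrict n hnN hstrict
      · -- Case B : eventually only low colors; defer to the inner level
        rw [Set.not_infinite] at hhi
        have hHfin : {n | π n ∉ lowcol col i}.Finite := by
          refine Set.Finite.subset (hhi.union (Set.finite_Iio T1)) ?_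
          intro n hn
          by_cases h : T1 ≤ n
          · exact Or.inl ⟨h, hn⟩
          · exact Or.inr (by simp only [Set.mem_Iio]; omega)
        obtain ⟨L0, hL0⟩ := hHfin.bddAbove
        have hLlow : ∀ n, max (L0 + 1) (T1 + 1) ≤ n → π n ∈ lowcol col i := by
          intro n hn
          by_contra hc
          have := hL0 hc
          simp only [max_le_iff] at hn
          omega
        set L := max (L0 + 1) (T1 + 1) with hLdef
        set T3 := max L (Finset.univ.sup (fun v => sInf {n' | L ≤ n' ∧ π n' = v} + 1))
          with hT3def
        have hnosusp : ∀ n, T3 ≤ n → ¬ suspected col i (hist π n) (π n) := by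
          intro n hn hsusp
          obtain ⟨j, hjlen, hjhigh, hnov⟩ := hsusp
          rw [hist_length] at hjlen
          have hjval := hjhigh (π j) (hist_get π hjlen)
          have hjL : j < L := by
            by_contra hc
            exact hjval (hLlow j (by omega))
          have hLn : L ≤ n := le_trans (le_max_left _ _) hn
          have hSmem := Nat.sInf_mem (⟨n, hLn, rfl⟩ :
            {n' | L ≤ n' ∧ π n' = π n}.Nonempty)
          have hsup : sInf {n' | L ≤ n' ∧ π n' = π n} + 1 ≤
              Finset.univ.sup (fun v => sInf {n' | L ≤ n' ∧ π n' = v} + 1) :=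
            Finset.le_sup (f := fun v => sInf {n' | L ≤ n' ∧ π n' = v} + 1)
              (Finset.mem_univ (π n))
          have hFn : sInf {n' | L ≤ n' ∧ π n' = π n} < n := by
            have h2 : T3 ≤ n := hn
            rw [hT3def] at h2
            simp only [max_le_iff] at h2
            omega
          exact hnov (sInf {n' | L ≤ n' ∧ π n' = π n}) (by have h5 := hSmem.1; omega)
            (by rw [hist_length]; exact hFn)
            (by rw [hist_get π hFn, hSmem.2])
        refine ih (by omega) acc' π hE (max (T1 + 1) T3) ?_ ?_ ?_
        · intro n hn
          exact h1' n (le_trans (le_max_left _ _) hn)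
        · intro n hn hv1
          have hT3n : T3 ≤ n := le_trans (le_max_right _ _) hn
          have hLn : L ≤ n := le_trans (le_max_left _ _) hT3n
          have hnT1 : T1 ≤ n := by
            have := le_trans (le_max_left _ _) hn
            omega
          have hmove := h2 n (le_trans hT1n0 hnT1) hv1
          rw [DStrat_succ_def, if_neg (h1 n (le_trans hT1n0 hnT1)),
            if_neg (hnoeven n hnT1),
            if_pos ⟨hLlow n hLn, hnosusp n hT3n⟩,
            hdacc_eq n hnT1] at hmove
          exact hmove
        · intro n hn
          refine hLlow n ?_
          have h2 := le_trans (le_max_right (T1+1) T3) hn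
          have h3 : L ≤ T3 := le_max_left _ _
          omega

end LiveGameGraph

namespace LiveGameGraph

variable {V : Type*} (Gm : LiveGameGraph V)

lemma not_V0_of_V1 {v : V} (h : v ∈ Gm.V1) : v ∉ Gm.V0 := by
  intro h0
  have : v ∈ Gm.V0 ∩ Gm.V1 := ⟨h0, h⟩
  rw [Gm.disj] at this
  exact this

noncomputable def playP (ρ0 ρ1 : List V → V → V) (v0 : V) : ℕ → List V × V
  | 0 => ([], v0)
  | n + 1 =>
      let p := playP ρ0 ρ1 v0 n
      (p.1 ++ [p.2], if p.2 ∈ Gm.V0 then ρ0 p.1 p.2 else ρ1 p.1 p.2)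

noncomputable def playFn (ρ0 ρ1 : List V → V → V) (v0 : V) (n : ℕ) : V :=
  (Gm.playP ρ0 ρ1 v0 n).2

lemma playP_fst (ρ0 ρ1 : List V → V → V) (v0 : V) (n : ℕ) :
    (Gm.playP ρ0 ρ1 v0 n).1 = hist (Gm.playFn ρ0 ρ1 v0) n := by
  induction n with
  | zero => simp [playP, hist]
  | succ n ihn =>
      show (Gm.playP ρ0 ρ1 v0 n).1 ++ [(Gm.playP ρ0 ρ1 v0 n).2] = _
      rw [ihn]
      have h1 : hist (Gm.playFn ρ0 ρ1 v0) (n + 1) =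
          (List.ofFn fun i : Fin n => Gm.playFn ρ0 ρ1 v0 (i.castSucc : Fin (n+1)).1) ++
            [Gm.playFn ρ0 ρ1 v0 ((Fin.last n : Fin (n+1)).1)] := by
        show List.ofFn (fun j : Fin (n+1) => Gm.playFn ρ0 ρ1 v0 j.1) = _
        rw [List.ofFn_succ', List.concat_eq_append]
      rw [h1]
      have h2 : (fun j : Fin n => Gm.playFn ρ0 ρ1 v0 j.1) =
          (fun j : Fin n => Gm.playFn ρ0 ρ1 v0 ((j.castSucc : Fin (n+1)).1)) := by
        funext j
        rw [Fin.coe_castSucc]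
      show List.ofFn (fun j : Fin n => Gm.playFn ρ0 ρ1 v0 j.1) ++
        [(Gm.playP ρ0 ρ1 v0 n).2] = _
      rw [h2, Fin.val_last]
      rfl

lemma play_compliant (ρ0 ρ1 : List V → V → V) (v0 : V) :
    Gm.Compliant ρ0 ρ1 v0 (Gm.playFn ρ0 ρ1 v0) := by
  refine ⟨rfl, fun i => ⟨fun h0 => ?_, fun h1 => ?_⟩⟩
  · show (Gm.playP ρ0 ρ1 v0 (i + 1)).2 = _
    show (if (Gm.playP ρ0 ρ1 v0 i).2 ∈ Gm.V0 then
        ρ0 (Gm.playP ρ0 ρ1 v0 i).1 (Gm.playP ρ0 ρ1 v0 i).2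
      else ρ1 (Gm.playP ρ0 ρ1 v0 i).1 (Gm.playP ρ0 ρ1 v0 i).2) = _
    rw [if_pos (show (Gm.playP ρ0 ρ1 v0 i).2 ∈ Gm.V0 from h0), Gm.playP_fst]
    rfl
  · show (Gm.playP ρ0 ρ1 v0 (i + 1)).2 = _
    show (if (Gm.playP ρ0 ρ1 v0 i).2 ∈ Gm.V0 then
        ρ0 (Gm.playP ρ0 ρ1 v0 i).1 (Gm.playP ρ0 ρ1 v0 i).2
      else ρ1 (Gm.playP ρ0 ρ1 v0 i).1 (Gm.playP ρ0 ρ1 v0 i).2) = _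
    rw [if_neg (show ¬ (Gm.playP ρ0 ρ1 v0 i).2 ∈ Gm.V0 from Gm.not_V0_of_V1 h1),
      Gm.playP_fst]
    rfl

end LiveGameGraph

namespace LiveGameGraph

variable {V : Type*} [Fintype V] (Gm : LiveGameGraph V) (col : ℕ → Set V)

lemma dual_main (k : ℕ)
    (hcover : (⋃ i ∈ Finset.Icc 1 (2 * k), col i) = Set.univ)
    (hdisj : ∀ i ∈ Finset.Icc 1 (2 * k), ∀ j ∈ Finset.Icc 1 (2 * k),
      i ≠ j → col i ∩ col j = ∅) :
    Gm.WinningRegion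
        (fun π => ∀ i ∈ Finset.Icc 1 k,
          (∀ N, ∃ n ≥ N, π n ∈ col (2 * i - 1)) →
          ∃ j ∈ Finset.Icc i k, ∀ N, ∃ n ≥ N, π n ∈ col (2 * j)) ⊆
      Gm.parityZ col k := by
  intro v0 hv0
  by_contra hv0Z
  obtain ⟨ρ0, hS0, hwin⟩ := hv0
  have hρ1 : Gm.Strategy1 (fun h v => Gm.DStrat col k ∅ h v) :=
    fun h v _ => Gm.DStrat_E col k ∅ h v
  set π := Gm.playFn ρ0 (fun h v => Gm.DStrat col k ∅ h v) v0 with hπdef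
  have hcmp : Gm.Compliant ρ0 (fun h v => Gm.DStrat col k ∅ h v) v0 π :=
    Gm.play_compliant _ _ v0
  have huniv : ∀ v : V, v ∈ lowcol col k := by
    intro v
    have hl : lowcol col k = Set.univ := hcover
    rw [hl]
    trivial
  have hEplay : ∀ n, Gm.E (π n) (π (n + 1)) := by
    intro n
    rcases Gm.mem_V0_or_V1 (π n) with h0 | h1
    · rw [(hcmp.2 n).1 h0]
      exact hS0 _ _ h0
    · rw [(hcmp.2 n).2 h1]
      exact Gm.DStrat_E col k ∅ _ _
  have hninv : ∀ n, π n ∉ Gm.parityAux col k ∅ := by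
    intro n
    induction n with
    | zero =>
        rw [hcmp.1]
        exact hv0Z
    | succ n ihn =>
        rcases Gm.mem_V0_or_V1 (π n) with h0 | h1
        · exact Gm.closure_V0 col (huniv _) ihn h0 (hEplay n)
        · rw [(hcmp.2 n).2 h1]
          exact Gm.Dc0 col k ∅ _ _ h1 (huniv _) ihn
  have hcompD : ∀ n, (0:ℕ) ≤ n → π n ∈ Gm.V1 →
      π (n + 1) = Gm.DStrat col k ∅ (hist π n) (π n) := by
    intro n _ h1
    exact (hcmp.2 n).2 h1
  obtain ⟨⟨t, ht1, htk, hodd, hnoev⟩, hfairC⟩ := Gm.Dplay col k hdisj k le_rfl ∅ π hEplay 0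
    (fun n _ => hninv n) hcompD (fun n _ => huniv _)
  have hfair : Gm.StronglyFair π := hfairC
  have hφ := hwin _ hρ1 π hcmp hfair
  have h2t := hφ t (by simp only [Finset.mem_Icc]; omega) (fun N => by
    obtain ⟨n, hn1, hn2⟩ := exists_ge_of_infinite hodd N
    exact ⟨n, hn1, hn2⟩)
  obtain ⟨s, hsmem, hsio⟩ := h2t
  simp only [Finset.mem_Icc] at hsmem
  refine hnoev s hsmem.1 hsmem.2 ?_
  rw [infinite_unbdd]
  intro N
  obtain ⟨n, hn1, hn2⟩ := hsio N
  exact ⟨n, hn1, hn2⟩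

end LiveGameGraph

/-- the parity fixpoint equals the winning region of Player 0 in
the fair adversarial parity game (maximal color visited infinitely often is
even), and a memoryless winning Player-0 strategy exists on it. -/
theorem fair_adversarial_parity {V : Type*} [Fintype V]
    (Gm : LiveGameGraph V) (k : ℕ) (col : ℕ → Set V)
    (hcover : (⋃ i ∈ Finset.Icc 1 (2 * k), col i) = Set.univ)
    (hdisj : ∀ i ∈ Finset.Icc 1 (2 * k), ∀ j ∈ Finset.Icc 1 (2 * k),
      i ≠ j → col i ∩ col j = ∅)
    (Zstar : Set V) (hZ : Zstar = Gm.parityZ col k) :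
    Zstar = Gm.WinningRegion
        (fun π => ∀ i ∈ Finset.Icc 1 k,
          (∀ N, ∃ n ≥ N, π n ∈ col (2 * i - 1)) →
          ∃ j ∈ Finset.Icc i k, ∀ N, ∃ n ≥ N, π n ∈ col (2 * j)) ∧
    ∃ σ : V → V, (∀ v ∈ Gm.V0, Gm.E v (σ v)) ∧
      ∀ v0 ∈ Zstar,
        Gm.WinsFrom
          (fun π => ∀ i ∈ Finset.Icc 1 k,
            (∀ N, ∃ n ≥ N, π n ∈ col (2 * i - 1)) →
            ∃ j ∈ Finset.Icc i k, ∀ N, ∃ n ≥ N, π n ∈ col (2 * j))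
          (fun _ v => σ v) v0 := by
  subst hZ
  have hprim := Gm.primal_main col k hdisj
  constructor
  · refine Set.eq_of_subset_of_subset ?_ (Gm.dual_main col k hcover hdisj)
    intro v0 hv0
    exact ⟨_, hprim.2 v0 hv0⟩
  · exact ⟨Gm.PStrat col k ∅, hprim.1, hprim.2⟩
end

section
/- Let ⟨G, Eℓ⟩ be a two-player game graph with live edges and let A = {A_1, …, A_r} be a generalized co-Büchi winning condition, where each A_a ⊆ V. Define Z* := νY_0. μX_0. ⋃_{a=1}^{r} νY_a. [ Apre(Y_0, X_0) ∪ (A_a ∩ Cpre(Y_a)) ]. Then Z* equals the winning region W of Player 0 in the fair adversarial game over ⟨G, Eℓ⟩ for the winning condition φ = ⋁_{a=1}^{r} ◇□A_a (i.e. the set of plays π such that for some a, π(i) ∈ A_a for all but finitely many i). Moreover, there exists a memoryless Player-0 strategy that wins the fair adversarial game for φ from every vertex of Z*. -/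
namespace FairAux
open LiveGameGraph
open scoped Classical

variable {V : Type*}

/-! ### Fixed point infrastructure -/

theorem lfp_le {f : Set V → Set V} {S : Set V} (h : f S ⊆ S) : lfpSet f ⊆ S := sInf_le h

theorem le_gfp {f : Set V → Set V} {S : Set V} (h : S ⊆ f S) : S ⊆ gfpSet f := le_sSup h

theorem lfp_fixed {f : Set V → Set V} (hf : Monotone f) : f (lfpSet f) = lfpSet f := by
  have h1 : f (lfpSet f) ⊆ lfpSet f := by
    refine le_sInf fun X hX => ?_
    exact (hf (sInf_le hX)).trans hX
  exact h1.antisymm (sInf_le (α := Set V) (hf h1))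

theorem gfp_fixed {f : Set V → Set V} (hf : Monotone f) : f (gfpSet f) = gfpSet f := by
  have h1 : gfpSet f ⊆ f (gfpSet f) := by
    refine sSup_le fun X hX => ?_
    exact Set.Subset.trans hX (hf (le_sSup hX))
  exact Set.Subset.antisymm (le_sSup (α := Set V) (hf h1)) h1

theorem lfp_mono {f g : Set V → Set V} (h : ∀ S, f S ⊆ g S) : lfpSet f ⊆ lfpSet g := by
  refine le_sInf fun X hX => sInf_le ?_
  exact Set.Subset.trans (h X) hX

theorem gfp_mono {f g : Set V → Set V} (h : ∀ S, f S ⊆ g S) : gfpSet f ⊆ gfpSet g := by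
  refine sSup_le fun X hX => le_sSup ?_
  exact Set.Subset.trans hX (h X)

theorem compl_gfp (f : Set V → Set V) :
    (gfpSet f)ᶜ = lfpSet (fun S => (f Sᶜ)ᶜ) := by
  apply Set.Subset.antisymm
  · refine le_sInf fun X hX => ?_
    have hX' : Xᶜ ⊆ f Xᶜ := Set.compl_subset_comm.mpr hX
    simpa using Set.compl_subset_compl.mpr (le_gfp hX')
  · have key : gfpSet f ⊆ (lfpSet fun S => (f Sᶜ)ᶜ)ᶜ := by
      refine sSup_le fun X hX => ?_
      have : (f X)ᶜ ⊆ Xᶜ := Set.compl_subset_compl.mpr hX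
      have h2 : (lfpSet fun S => (f Sᶜ)ᶜ) ⊆ Xᶜ := lfp_le (by simpa using this)
      exact Set.subset_compl_comm.mp h2
    exact Set.subset_compl_comm.mp key

theorem compl_lfp (f : Set V → Set V) :
    (lfpSet f)ᶜ = gfpSet (fun S => (f Sᶜ)ᶜ) := by
  have := compl_gfp (fun S => (f Sᶜ)ᶜ)
  simp only [compl_compl] at this
  have h2 : lfpSet f = lfpSet (fun S => f S) := rfl
  rw [← this, compl_compl]

/-! ### Iterates of a monotone map -/

theorem iter_succ' (f : Set V → Set V) (n : ℕ) : f^[n+1] ∅ = f (f^[n] ∅) :=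
  Function.iterate_succ_apply' f n ∅

theorem iter_mono_step {f : Set V → Set V} (hf : Monotone f) (n : ℕ) :
    f^[n] ∅ ⊆ f^[n+1] ∅ := by
  induction n with
  | zero => simp
  | succ n ih => rw [iter_succ', iter_succ']; exact hf ih

theorem iter_mono {f : Set V → Set V} (hf : Monotone f) {m n : ℕ} (h : m ≤ n) :
    f^[m] ∅ ⊆ f^[n] ∅ := by
  induction n with
  | zero => simp_all
  | succ n ih =>
    rcases Nat.lt_or_ge m (n+1) with h' | h'
    · exact (ih (Nat.lt_succ_iff.mp h')).trans (iter_mono_step hf n)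
    · have : m = n + 1 := le_antisymm h h'
      subst this; rfl

theorem iter_le_lfp {f : Set V → Set V} (hf : Monotone f) (n : ℕ) :
    f^[n] ∅ ⊆ lfpSet f := by
  induction n with
  | zero => simp
  | succ n ih => rw [iter_succ']; rw [← lfp_fixed hf]; exact hf ih

theorem exists_iter_eq_lfp [Fintype V] {f : Set V → Set V} (hf : Monotone f) :
    ∃ n, f^[n] ∅ = lfpSet f := by
  by_contra hcon
  push_neg at hcon
  have hne : ∀ n, f (f^[n] ∅) ≠ f^[n] ∅ := by
    intro n h
    exact hcon n (Set.Subset.antisymm (iter_le_lfp hf n) (lfp_le h.le))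
  have hcard : ∀ n, n ≤ (f^[n] ∅).ncard := by
    intro n
    induction n with
    | zero => simp
    | succ n ih =>
      have hss : f^[n] ∅ ⊂ f^[n+1] ∅ := by
        refine Set.ssubset_iff_subset_ne.mpr ⟨iter_mono_step hf n, ?_⟩
        rw [iter_succ']
        intro h; exact hne n h.symm
      have := Set.ncard_lt_ncard hss (Set.toFinite _)
      omega
  have h1 := hcard (Fintype.card V + 1)
  have h2 : (f^[Fintype.card V + 1] ∅).ncard ≤ Fintype.card V := by
    have := Set.ncard_le_ncard (Set.subset_univ (f^[Fintype.card V + 1] ∅)) (Set.toFinite _)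
    simpa [Set.ncard_univ] using this
  omega

theorem mem_lfp_iff_iter [Fintype V] {f : Set V → Set V} (hf : Monotone f) {v : V} :
    v ∈ lfpSet f ↔ ∃ n, v ∈ f^[n] ∅ := by
  constructor
  · intro h
    obtain ⟨n, hn⟩ := exists_iter_eq_lfp hf
    exact ⟨n, hn ▸ h⟩
  · rintro ⟨n, hn⟩
    exact iter_le_lfp hf n hn

/-- The rank of `v` with respect to the iterates of `f` from `∅`. -/
noncomputable def rkOf (f : Set V → Set V) (v : V) : ℕ := sInf {n | v ∈ f^[n] ∅}

theorem rkOf_mem {f : Set V → Set V} {v : V} {n : ℕ} (h : v ∈ f^[n] ∅) :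
    v ∈ f^[rkOf f v] ∅ := by
  have : sInf {n | v ∈ f^[n] ∅} ∈ {n | v ∈ f^[n] ∅} := Nat.sInf_mem ⟨n, h⟩
  exact this

theorem rkOf_le {f : Set V → Set V} {v : V} {n : ℕ} (h : v ∈ f^[n] ∅) :
    rkOf f v ≤ n := Nat.sInf_le h

theorem rkOf_pos {f : Set V → Set V} {v : V} {n : ℕ} (h : v ∈ f^[n] ∅) :
    1 ≤ rkOf f v := by
  rcases Nat.eq_zero_or_pos (rkOf f v) with h0 | h1
  · have := rkOf_mem h
    rw [h0] at this
    simp at this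
  · exact h1

theorem rkOf_unfold {f : Set V → Set V} {v : V} {n : ℕ} (h : v ∈ f^[n] ∅) :
    v ∈ f (f^[rkOf f v - 1] ∅) := by
  have h1 := rkOf_pos h
  have := rkOf_mem h
  rwa [show rkOf f v = (rkOf f v - 1) + 1 by omega, iter_succ'] at this

/-! ### Arithmetic and combinatorial helpers -/

theorem exists_infinite_fiber (g : ℕ → ℕ) (c : ℕ) (h : ∀ i, g i ≤ c) :
    ∃ m, {i | g i = m}.Infinite := by
  by_contra hcon
  push_neg at hcon
  have : (Set.univ : Set ℕ) = ⋃ m ∈ Finset.range (c+1), {i | g i = m} := by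
    ext i
    simp only [Set.mem_univ, Set.mem_iUnion, Set.mem_setOf_eq, true_iff]
    exact ⟨g i, by simpa using Nat.lt_succ_of_le (h i), rfl⟩
  have hfin : (Set.univ : Set ℕ).Finite := by
    rw [this]
    exact Set.Finite.biUnion (Finset.range (c+1)).finite_toSet (fun m _ => hcon m)
  exact Set.infinite_univ hfin

theorem finite_bound {S : Set ℕ} (h : S.Finite) : ∃ N, ∀ i ∈ S, i < N := by
  obtain ⟨N, hN⟩ := h.bddAbove
  exact ⟨N + 1, fun i hi => Nat.lt_succ_of_le (hN hi)⟩

theorem infinite_exists_ge {S : Set ℕ} (h : S.Infinite) (N : ℕ) : ∃ i ∈ S, N ≤ i := by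
  by_contra hcon
  push_neg at hcon
  exact h (Set.Finite.subset (Set.finite_Iio N) (fun i hi => hcon i hi))

/-- An eventually-antitone ℕ-valued sequence is eventually constant. -/
theorem eventually_const_of_antitone (b : ℕ → ℕ) (i0 : ℕ)
    (h : ∀ i, i0 ≤ i → b (i+1) ≤ b i) :
    ∃ i1, i0 ≤ i1 ∧ ∀ i, i1 ≤ i → b i = b i1 := by
  have hanti : ∀ i j, i0 ≤ i → i ≤ j → b j ≤ b i := by
    intro i j hi
    induction j with
    | zero => intro hij
              have : i = 0 := by omega
              subst this; rfl
    | succ j ih =>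
      intro hij
      rcases Nat.lt_or_ge i (j+1) with h' | h'
      · exact (h j (by omega)).trans (ih (by omega))
      · have : i = j + 1 := by omega
        subst this; rfl
  have hne : {m | ∃ i, i0 ≤ i ∧ b i = m}.Nonempty := ⟨b i0, i0, le_rfl, rfl⟩
  obtain ⟨i1, hi1, hbi1⟩ := Nat.sInf_mem hne
  refine ⟨i1, hi1, fun i hi => ?_⟩
  have h1 : b i ≤ b i1 := hanti i1 i hi1 hi
  have h2 : sInf {m | ∃ i, i0 ≤ i ∧ b i = m} ≤ b i := Nat.sInf_le ⟨i, hi1.trans hi, rfl⟩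
  rw [← hbi1] at h2
  omega

end FairAux
namespace FairAux
open LiveGameGraph
open scoped Classical

variable {V : Type*}

/-! ### Basic membership and monotonicity lemmas for the game operators -/

theorem mem_pre0 {Gm : LiveGameGraph V} {S : Set V} {v : V} :
    v ∈ Gm.pre0 S ↔ v ∈ Gm.V0 ∧ ∃ w, Gm.E v w ∧ w ∈ S := Iff.rfl

theorem mem_pre1 {Gm : LiveGameGraph V} {S : Set V} {v : V} :
    v ∈ Gm.pre1 S ↔ v ∈ Gm.V1 ∧ ∀ w, Gm.E v w → w ∈ S := Iff.rfl

theorem mem_lpre {Gm : LiveGameGraph V} {S : Set V} {v : V} :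
    v ∈ Gm.lpre S ↔ ∃ w, Gm.El v w ∧ w ∈ S := Iff.rfl

theorem not_in_both {Gm : LiveGameGraph V} {v : V} (h0 : v ∈ Gm.V0) (h1 : v ∈ Gm.V1) : False := by
  have := Gm.disj
  rw [Set.eq_empty_iff_forall_notMem] at this
  exact this v ⟨h0, h1⟩

theorem mem_V0_or_V1 (Gm : LiveGameGraph V) (v : V) : v ∈ Gm.V0 ∨ v ∈ Gm.V1 := by
  have := Gm.cover
  have hv : v ∈ Gm.V0 ∪ Gm.V1 := by rw [this]; trivial
  exact hv

theorem pre0_mono (Gm : LiveGameGraph V) {S T : Set V} (h : S ⊆ T) : Gm.pre0 S ⊆ Gm.pre0 T := by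
  rintro v ⟨h0, w, hw, hwS⟩; exact ⟨h0, w, hw, h hwS⟩

theorem pre1_mono (Gm : LiveGameGraph V) {S T : Set V} (h : S ⊆ T) : Gm.pre1 S ⊆ Gm.pre1 T := by
  rintro v ⟨h1, hall⟩; exact ⟨h1, fun w hw => h (hall w hw)⟩

theorem cpre_mono (Gm : LiveGameGraph V) {S T : Set V} (h : S ⊆ T) : Gm.cpre S ⊆ Gm.cpre T :=
  Set.union_subset_union (pre0_mono Gm h) (pre1_mono Gm h)

theorem lpre_mono (Gm : LiveGameGraph V) {S T : Set V} (h : S ⊆ T) : Gm.lpre S ⊆ Gm.lpre T := by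
  rintro v ⟨w, hw, hwS⟩; exact ⟨w, hw, h hwS⟩

theorem apre_mono (Gm : LiveGameGraph V) {S S' T T' : Set V} (hS : S ⊆ S') (hT : T ⊆ T') :
    Gm.apre S T ⊆ Gm.apre S' T' :=
  Set.union_subset_union (cpre_mono Gm hT)
    (Set.inter_subset_inter (lpre_mono Gm hT) (pre1_mono Gm hS))

/-! ### The fixpoint structure -/

variable (Gm : LiveGameGraph V) (r : ℕ) (A : ℕ → Set V)

def Ybody (Y0 X0 : Set V) (a : ℕ) : Set V → Set V :=
  fun Ya => Gm.apre Y0 X0 ∪ (A a ∩ Gm.cpre Ya)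

def Ystar (Y0 X0 : Set V) (a : ℕ) : Set V := gfpSet (Ybody Gm A Y0 X0 a)

def fXop (Y0 X0 : Set V) : Set V := ⋃ a ∈ Finset.Icc 1 r, Ystar Gm A Y0 X0 a

def gYop (Y0 : Set V) : Set V := lfpSet (fXop Gm r A Y0)

variable {Gm r A}

theorem Ybody_mono (Y0 X0 : Set V) (a : ℕ) : Monotone (Ybody Gm A Y0 X0 a) := by
  intro S T h
  exact Set.union_subset_union (subset_rfl) (Set.inter_subset_inter subset_rfl (cpre_mono Gm h))

theorem Ystar_unfold (Y0 X0 : Set V) (a : ℕ) :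
    Ystar Gm A Y0 X0 a = Gm.apre Y0 X0 ∪ (A a ∩ Gm.cpre (Ystar Gm A Y0 X0 a)) :=
  (gfp_fixed (Ybody_mono Y0 X0 a)).symm

theorem Ystar_mono {Y0 Y0' X0 X0' : Set V} (hY : Y0 ⊆ Y0') (hX : X0 ⊆ X0') (a : ℕ) :
    Ystar Gm A Y0 X0 a ⊆ Ystar Gm A Y0' X0' a := by
  refine gfp_mono fun S => ?_
  exact Set.union_subset_union (apre_mono Gm hY hX) subset_rfl

theorem mem_fXop {Y0 X0 : Set V} {v : V} :
    v ∈ fXop Gm r A Y0 X0 ↔ ∃ a ∈ Finset.Icc 1 r, v ∈ Ystar Gm A Y0 X0 a := by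
  simp [fXop]

theorem fXop_mono (Y0 : Set V) : Monotone (fXop Gm r A Y0) := by
  intro S T h v hv
  rw [mem_fXop] at hv ⊢
  obtain ⟨a, ha, hva⟩ := hv
  exact ⟨a, ha, Ystar_mono subset_rfl h a hva⟩

theorem fXop_mono_left {Y0 Y0' : Set V} (h : Y0 ⊆ Y0') (X0 : Set V) :
    fXop Gm r A Y0 X0 ⊆ fXop Gm r A Y0' X0 := by
  intro v hv
  rw [mem_fXop] at hv ⊢
  obtain ⟨a, ha, hva⟩ := hv
  exact ⟨a, ha, Ystar_mono h subset_rfl a hva⟩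

theorem gYop_mono : Monotone (gYop Gm r A) := by
  intro S T h
  refine lfp_mono fun X => fXop_mono_left h X

theorem Zfix {Z : Set V} (hZ : Z = gfpSet (gYop Gm r A)) : Z = lfpSet (fXop Gm r A Z) := by
  conv_lhs => rw [hZ, ← gfp_fixed gYop_mono]
  rw [← hZ]; rfl

end FairAux
namespace FairAux
open LiveGameGraph
open scoped Classical

variable {V : Type*}

section Sound
variable (Gm : LiveGameGraph V) (r : ℕ) (A : ℕ → Set V) (Z : Set V)

/-- Iterates of the inner least fixpoint (with outer parameter `Z`). -/
def XI (n : ℕ) : Set V := (fXop Gm r A Z)^[n] ∅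

/-- Rank of a vertex w.r.t. the inner μ-iteration. -/
noncomputable def rkS (v : V) : ℕ := rkOf (fXop Gm r A Z) v

/-- The chosen co-Büchi index for a vertex. -/
noncomputable def idxS (v : V) : ℕ :=
  sInf {a | a ∈ Finset.Icc 1 r ∧ v ∈ Ystar Gm A Z (XI Gm r A Z (rkS Gm r A Z v - 1)) a}

/-- The ν-set to which the memoryless strategy confines the play. -/
noncomputable def YvS (v : V) : Set V :=
  Ystar Gm A Z (XI Gm r A Z (rkS Gm r A Z v - 1)) (idxS Gm r A Z v)

/-- The memoryless Player-0 strategy. -/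
noncomputable def sigS : V → V := fun v =>
  if h1 : v ∈ Gm.pre0 (XI Gm r A Z (rkS Gm r A Z v - 1)) then
    (mem_pre0.mp h1).2.choose
  else if h2 : v ∈ Gm.pre0 (YvS Gm r A Z v) then
    (mem_pre0.mp h2).2.choose
  else
    (Gm.succ_nonempty v).choose

variable {Gm r A Z}

theorem sigS_E (v : V) : Gm.E v (sigS Gm r A Z v) := by
  unfold sigS
  split_ifs with h1 h2
  · exact (mem_pre0.mp h1).2.choose_spec.1
  · exact (mem_pre0.mp h2).2.choose_spec.1
  · exact (Gm.succ_nonempty v).choose_spec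

section WithFix
variable (hfix : Z = lfpSet (fXop Gm r A Z))
include hfix
set_option linter.unusedSectionVars false

omit hfix in
theorem XI_succ (n : ℕ) : XI Gm r A Z (n + 1) = fXop Gm r A Z (XI Gm r A Z n) :=
  iter_succ' _ n

theorem XI_subset_Z (n : ℕ) : XI Gm r A Z n ⊆ Z := by
  conv_rhs => rw [hfix]
  exact iter_le_lfp (fXop_mono Z) n

omit hfix in
theorem XI_mono {m n : ℕ} (h : m ≤ n) : XI Gm r A Z m ⊆ XI Gm r A Z n :=
  iter_mono (fXop_mono Z) h

variable [Fintype V]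

theorem mem_Z_iter {v : V} (hv : v ∈ Z) : ∃ n, v ∈ XI Gm r A Z n := by
  rw [hfix] at hv
  exact (mem_lfp_iff_iter (fXop_mono Z)).mp hv

theorem rkS_mem {v : V} (hv : v ∈ Z) : v ∈ XI Gm r A Z (rkS Gm r A Z v) := by
  obtain ⟨n, hn⟩ := mem_Z_iter hfix hv
  exact rkOf_mem hn

theorem rkS_le {v : V} {n : ℕ} (h : v ∈ XI Gm r A Z n) : rkS Gm r A Z v ≤ n := rkOf_le h

theorem rkS_pos {v : V} (hv : v ∈ Z) : 1 ≤ rkS Gm r A Z v := by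
  obtain ⟨n, hn⟩ := mem_Z_iter hfix hv
  exact rkOf_pos hn

theorem rkS_unfold {v : V} (hv : v ∈ Z) :
    v ∈ fXop Gm r A Z (XI Gm r A Z (rkS Gm r A Z v - 1)) := by
  obtain ⟨n, hn⟩ := mem_Z_iter hfix hv
  exact rkOf_unfold hn

theorem idxS_spec {v : V} (hv : v ∈ Z) :
    idxS Gm r A Z v ∈ Finset.Icc 1 r ∧ v ∈ YvS Gm r A Z v := by
  have h := rkS_unfold hfix hv
  rw [mem_fXop] at h
  obtain ⟨a, ha, hva⟩ := h
  have hne : {a | a ∈ Finset.Icc 1 r ∧ v ∈ Ystar Gm A Z (XI Gm r A Z (rkS Gm r A Z v - 1)) a}.Nonempty :=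
    ⟨a, ha, hva⟩
  have := Nat.sInf_mem hne
  exact ⟨this.1, this.2⟩

theorem YvS_subset {v : V} (hv : v ∈ Z) : YvS Gm r A Z v ⊆ XI Gm r A Z (rkS Gm r A Z v) := by
  have hrk := rkS_pos hfix hv
  have h3 : rkS Gm r A Z v - 1 + 1 = rkS Gm r A Z v := by omega
  rw [← h3, XI_succ]
  intro w hw
  rw [mem_fXop]
  exact ⟨idxS Gm r A Z v, (idxS_spec hfix hv).1, hw⟩

theorem rk_le_of_mem_YvS {v w : V} (hv : v ∈ Z) (hw : w ∈ YvS Gm r A Z v) :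
    rkS Gm r A Z w ≤ rkS Gm r A Z v := rkS_le hfix (YvS_subset hfix hv hw)

theorem idx_le_of_mem_YvS {v w : V} (hv : v ∈ Z) (hw : w ∈ YvS Gm r A Z v)
    (heq : rkS Gm r A Z w = rkS Gm r A Z v) :
    idxS Gm r A Z w ≤ idxS Gm r A Z v := by
  refine Nat.sInf_le ⟨(idxS_spec hfix hv).1, ?_⟩
  rw [heq]
  exact hw

/-- Case analysis for a Player-0 vertex in `Z`: the strategy makes progress
or stays inside the ν-set. -/
theorem sigS_progress {v : V} (hv : v ∈ Z) (hv0 : v ∈ Gm.V0) :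
    sigS Gm r A Z v ∈ XI Gm r A Z (rkS Gm r A Z v - 1) ∨
      (v ∈ A (idxS Gm r A Z v) ∧ sigS Gm r A Z v ∈ YvS Gm r A Z v) := by
  unfold sigS
  split_ifs with h1 h2
  · exact Or.inl (mem_pre0.mp h1).2.choose_spec.2
  · have hY := (idxS_spec hfix hv).2
    rw [YvS, Ystar_unfold] at hY
    rcases hY with hA | hA
    · -- apre case: for a V0 vertex this forces pre0 into XI, contradicting ¬h1
      exfalso
      rcases hA with hc | ⟨hl, hp1⟩
      · rcases hc with hp0 | hp1
        · exact h1 hp0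
        · exact not_in_both hv0 (mem_pre1.mp hp1).1
      · obtain ⟨w, hw, -⟩ := mem_lpre.mp hl
        exact not_in_both hv0 (Gm.live_sub v w hw).1
    · rcases hA.2 with hp0 | hp1
      · exact Or.inr ⟨hA.1, (mem_pre0.mp hp0).2.choose_spec.2⟩
      · exact absurd (mem_pre1.mp hp1).1 (fun h => not_in_both hv0 h)
  · -- neither: impossible for v ∈ V0 ∩ Z
    exfalso
    have hY := (idxS_spec hfix hv).2
    rw [YvS, Ystar_unfold] at hY
    rcases hY with hA | hA
    · rcases hA with hc | ⟨hl, hp1⟩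
      · rcases hc with hp0 | hp1
        · exact h1 hp0
        · exact not_in_both hv0 (mem_pre1.mp hp1).1
      · obtain ⟨w, hw, -⟩ := mem_lpre.mp hl
        exact not_in_both hv0 (Gm.live_sub v w hw).1
    · rcases hA.2 with hp0 | hp1
      · exact h2 hp0
      · exact not_in_both hv0 (mem_pre1.mp hp1).1

/-- Case analysis for a Player-1 vertex in `Z`. -/
theorem v1_cases {v : V} (hv : v ∈ Z) (hv1 : v ∈ Gm.V1) :
    (∀ w, Gm.E v w → w ∈ XI Gm r A Z (rkS Gm r A Z v - 1)) ∨
    ((∃ w, Gm.El v w ∧ w ∈ XI Gm r A Z (rkS Gm r A Z v - 1)) ∧ ∀ w, Gm.E v w → w ∈ Z) ∨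
    (v ∈ A (idxS Gm r A Z v) ∧ ∀ w, Gm.E v w → w ∈ YvS Gm r A Z v) := by
  have hY := (idxS_spec hfix hv).2
  rw [YvS, Ystar_unfold] at hY
  rcases hY with hA | hA
  · rcases hA with hc | ⟨hl, hp1⟩
    · rcases hc with hp0 | hp1
      · exact absurd (mem_pre0.mp hp0).1 (fun h => not_in_both h hv1)
      · exact Or.inl (mem_pre1.mp hp1).2
    · exact Or.inr (Or.inl ⟨mem_lpre.mp hl, (mem_pre1.mp hp1).2⟩)
  · rcases hA.2 with hp0 | hp1
    · exact absurd (mem_pre0.mp hp0).1 (fun h => not_in_both h hv1)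
    · exact Or.inr (Or.inr ⟨hA.1, (mem_pre1.mp hp1).2⟩)

end WithFix
end Sound
end FairAux
namespace FairAux
open LiveGameGraph
open scoped Classical

variable {V : Type*}

theorem sound_winsFrom [Fintype V] {Gm : LiveGameGraph V} {r : ℕ} {A : ℕ → Set V} {Z : Set V}
    (hfix : Z = lfpSet (fXop Gm r A Z)) {v0 : V} (hv0 : v0 ∈ Z) :
    Gm.WinsFrom (fun π => ∃ a ∈ Finset.Icc 1 r, ∃ N, ∀ i ≥ N, π i ∈ A a)
      (fun _ v => sigS Gm r A Z v) v0 := by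
  constructor
  · intro h v _
    exact sigS_E v
  intro ρ1 hρ1 π hcomp hfair
  obtain ⟨h0, hstep⟩ := hcomp
  have hstep0 : ∀ i, π i ∈ Gm.V0 → π (i+1) = sigS Gm r A Z (π i) := fun i h => (hstep i).1 h
  have hstep1 : ∀ i, π i ∈ Gm.V1 → Gm.E (π i) (π (i+1)) := by
    intro i h
    rw [(hstep i).2 h]
    exact hρ1 _ _ h
  -- the play stays in Z
  have hmemstep : ∀ i, π i ∈ Z → π (i+1) ∈ Z := by
    intro i hi
    rcases mem_V0_or_V1 Gm (π i) with h0v | h1v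
    · rw [hstep0 i h0v]
      rcases sigS_progress hfix hi h0v with h | h
      · exact XI_subset_Z hfix _ h
      · exact XI_subset_Z hfix _ (YvS_subset hfix hi h.2)
    · rcases v1_cases hfix hi h1v with h | h | h
      · exact XI_subset_Z hfix _ (h _ (hstep1 i h1v))
      · exact h.2 _ (hstep1 i h1v)
      · exact XI_subset_Z hfix _ (YvS_subset hfix hi (h.2 _ (hstep1 i h1v)))
  have hmem : ∀ i, π i ∈ Z := by
    intro i
    induction i with
    | zero => rw [h0]; exact hv0
    | succ i ih => exact hmemstep i ih
  -- the set of "live-mode" vertices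
  set LiveV : Set V := {v | v ∈ Gm.V1 ∧
      ¬(∀ w, Gm.E v w → w ∈ XI Gm r A Z (rkS Gm r A Z v - 1)) ∧
      ∃ w, Gm.El v w ∧ w ∈ XI Gm r A Z (rkS Gm r A Z v - 1)} with hLiveV
  -- classification of each step
  have hcase : ∀ i, (π (i+1) ∈ XI Gm r A Z (rkS Gm r A Z (π i) - 1)) ∨ (π i ∈ LiveV) ∨
      (π i ∈ A (idxS Gm r A Z (π i)) ∧ π (i+1) ∈ YvS Gm r A Z (π i)) := by
    intro i
    rcases mem_V0_or_V1 Gm (π i) with h0v | h1v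
    · rw [hstep0 i h0v]
      rcases sigS_progress hfix (hmem i) h0v with h | h
      · exact Or.inl h
      · exact Or.inr (Or.inr h)
    · rcases v1_cases hfix (hmem i) h1v with h | h | h
      · exact Or.inl (h _ (hstep1 i h1v))
      · by_cases hD : ∀ w, Gm.E (π i) w → w ∈ XI Gm r A Z (rkS Gm r A Z (π i) - 1)
        · exact Or.inl (hD _ (hstep1 i h1v))
        · exact Or.inr (Or.inl ⟨h1v, hD, h.1⟩)
      · exact Or.inr (Or.inr ⟨h.1, h.2 _ (hstep1 i h1v)⟩)
  -- ranks are bounded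
  obtain ⟨NZ, hNZ⟩ := exists_iter_eq_lfp (fXop_mono (Gm := Gm) (r := r) (A := A) Z)
  have hbound : ∀ i, rkS Gm r A Z (π i) ≤ NZ := by
    intro i
    refine rkS_le hfix (n := NZ) ?_
    show π i ∈ (fXop Gm r A Z)^[NZ] ∅
    rw [hNZ, ← hfix]
    exact hmem i
  -- minimal rank occurring infinitely often
  obtain ⟨m0, hm0⟩ := exists_infinite_fiber (fun i => rkS Gm r A Z (π i)) NZ hbound
  set m := sInf {k | {i | rkS Gm r A Z (π i) = k}.Infinite} with hm_def
  have hm_inf : {i | rkS Gm r A Z (π i) = m}.Infinite := by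
    have : sInf {k | {i | rkS Gm r A Z (π i) = k}.Infinite} ∈
        {k | {i | rkS Gm r A Z (π i) = k}.Infinite} := Nat.sInf_mem ⟨m0, hm0⟩
    exact this
  have hm_min : ∀ k, k < m → {i | rkS Gm r A Z (π i) = k}.Finite := by
    intro k hk
    by_contra hc
    have hc' : k ∈ {k | {i | rkS Gm r A Z (π i) = k}.Infinite} := hc
    exact absurd (Nat.sInf_le hc') (by omega)
  have hm_pos : 1 ≤ m := by
    obtain ⟨i, hi⟩ := hm_inf.nonempty
    simp only [Set.mem_setOf_eq] at hi
    have := rkS_pos hfix (hmem i)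
    omega
  -- positions of rank < m are finitely many
  have hlow_fin : {i | rkS Gm r A Z (π i) < m}.Finite := by
    have : {i | rkS Gm r A Z (π i) < m} = ⋃ k ∈ Finset.range m, {i | rkS Gm r A Z (π i) = k} := by
      ext i
      simp only [Set.mem_setOf_eq, Set.mem_iUnion, Finset.mem_range]
      exact ⟨fun h => ⟨_, h, rfl⟩, fun ⟨k, hk, he⟩ => by omega⟩
    rw [this]
    exact Set.Finite.biUnion (Finset.range m).finite_toSet (fun k hk => hm_min k (Finset.mem_range.mp hk))
  obtain ⟨T0, hT0'⟩ := finite_bound hlow_fin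
  have hT0 : ∀ i, T0 ≤ i → m ≤ rkS Gm r A Z (π i) := by
    intro i hi
    by_contra hc
    exact absurd (hT0' i (by simpa using Nat.lt_of_not_le hc)) (by omega)
  -- rank-m live-mode positions are finitely many (by fairness)
  have hlive_fin : {i | π i ∈ LiveV ∧ rkS Gm r A Z (π i) = m}.Finite := by
    have hsub : {i | π i ∈ LiveV ∧ rkS Gm r A Z (π i) = m} ⊆
        ⋃ v ∈ {v : V | v ∈ LiveV ∧ rkS Gm r A Z v = m}, {i | π i = v} := by
      intro i hi
      simp only [Set.mem_iUnion, Set.mem_setOf_eq]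
      exact ⟨π i, ⟨hi.1, hi.2⟩, rfl⟩
    refine Set.Finite.subset (Set.Finite.biUnion (Set.toFinite _) ?_) hsub
    intro v hv
    by_contra hc
    have hc : {i | π i = v}.Infinite := hc
    obtain ⟨hv1, hnd, w, hw, hwX⟩ := hv.1
    have hinf2 := hfair v w hw hc
    have himg : (fun i => i + 1) '' {i | π i = v ∧ π (i+1) = w} ⊆
        {j | rkS Gm r A Z (π j) < m} := by
      rintro j ⟨i, ⟨hiv, hiw⟩, rfl⟩
      have : rkS Gm r A Z (π (i+1)) ≤ rkS Gm r A Z v - 1 := by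
        rw [hiw]; exact rkS_le hfix hwX
      have hvm : rkS Gm r A Z v = m := hv.2
      simp only [Set.mem_setOf_eq]
      omega
    have : ((fun i => i + 1) '' {i | π i = v ∧ π (i+1) = w}).Infinite :=
      Set.Infinite.image (Set.injOn_of_injective (add_left_injective 1)) hinf2
    exact this (Set.Finite.subset hlow_fin himg)
  obtain ⟨T1, hT1'⟩ := finite_bound hlive_fin
  set T := max T0 T1 with hT_def
  -- after T, rank-m positions keep rank m, stay in A, and the index decreases
  have hstaym : ∀ i, T ≤ i → rkS Gm r A Z (π i) = m →
      rkS Gm r A Z (π (i+1)) = m ∧ idxS Gm r A Z (π (i+1)) ≤ idxS Gm r A Z (π i) ∧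
        π i ∈ A (idxS Gm r A Z (π i)) := by
    intro i hi hrm
    rcases hcase i with h | h | h
    · exfalso
      have h1 : rkS Gm r A Z (π (i+1)) ≤ rkS Gm r A Z (π i) - 1 := rkS_le hfix h
      have h2 : m ≤ rkS Gm r A Z (π (i+1)) := hT0 (i+1) (by omega)
      omega
    · exfalso
      have hmem2 : i ∈ {i | π i ∈ LiveV ∧ rkS Gm r A Z (π i) = m} := ⟨h, hrm⟩
      have := hT1' i hmem2
      omega
    · have h1 : rkS Gm r A Z (π (i+1)) ≤ m := by
        rw [← hrm]; exact rk_le_of_mem_YvS hfix (hmem i) h.2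
      have h2 : m ≤ rkS Gm r A Z (π (i+1)) := hT0 (i+1) (by omega)
      have heq : rkS Gm r A Z (π (i+1)) = m := le_antisymm h1 h2
      refine ⟨heq, ?_, h.1⟩
      exact idx_le_of_mem_YvS hfix (hmem i) h.2 (by rw [heq, hrm])
  -- pick a rank-m position after T
  obtain ⟨i0, hi0mem, hi0ge⟩ := infinite_exists_ge hm_inf T
  have hconst : ∀ i, i0 ≤ i → rkS Gm r A Z (π i) = m := by
    intro i hi
    obtain ⟨d, rfl⟩ := Nat.exists_eq_add_of_le hi
    induction d with
    | zero => exact hi0mem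
    | succ d ih =>
      have := hstaym (i0 + d) (by omega) (ih (by omega))
      rw [show i0 + (d+1) = (i0 + d) + 1 by omega]
      exact this.1
  -- the index stabilizes
  obtain ⟨i1, hi1ge, hi1⟩ := eventually_const_of_antitone (fun i => idxS Gm r A Z (π i)) i0
    (fun i hi => (hstaym i (by omega) (hconst i hi)).2.1)
  refine ⟨idxS Gm r A Z (π i1), (idxS_spec hfix (hmem i1)).1, i1, fun i hi => ?_⟩
  have hA := (hstaym i (by omega) (hconst i (by omega))).2.2
  rwa [hi1 i hi] at hA
end FairAux
namespace FairAux
open LiveGameGraph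
open scoped Classical

variable {V : Type*}

section Comp

variable (Gm : LiveGameGraph V) (r : ℕ) (A : ℕ → Set V)

/-- The dual (Player-1) outer operator. -/
def gdop : Set V → Set V := fun Bt => (gYop Gm r A Btᶜ)ᶜ

/-- Iterates of the dual outer μ-computation. -/
def BXI (n : ℕ) : Set V := (gdop Gm r A)^[n] ∅

/-- Outer rank of a vertex in the dual computation. -/
noncomputable def ork (v : V) : ℕ := rkOf (gdop Gm r A) v

/-- The dual inner operator (for level `L` and target `t`). -/
def hYop (L t : ℕ) : Set V → Set V :=
  fun Yt => (Gm.apre (BXI Gm r A (L-1))ᶜ (BXI Gm r A L)ᶜ ∪ (A t ∩ Gm.cpre Ytᶜ))ᶜ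

/-- Union of all iterates of the dual inner operator. -/
def ItM (L t : ℕ) : Set V := ⋃ n, (hYop Gm r A L t)^[n] ∅

/-- Inner rank. -/
noncomputable def irk (L t : ℕ) (v : V) : ℕ := rkOf (hYop Gm r A L t) v

variable {Gm r A}

theorem gdop_mono : Monotone (gdop Gm r A) := by
  intro S T h
  have : Tᶜ ⊆ Sᶜ := Set.compl_subset_compl.mpr h
  exact Set.compl_subset_compl.mpr (gYop_mono this)

theorem hYop_mono (L t : ℕ) : Monotone (hYop Gm r A L t) := by
  intro S T h
  refine Set.compl_subset_compl.mpr ?_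
  refine Set.union_subset_union subset_rfl (Set.inter_subset_inter subset_rfl ?_)
  exact cpre_mono Gm (Set.compl_subset_compl.mpr h)

theorem compl_Z_eq {Z : Set V} (hZ : Z = gfpSet (gYop Gm r A)) :
    Zᶜ = lfpSet (gdop Gm r A) := by
  rw [hZ, compl_gfp]; rfl

theorem BXI_subset_compl_Z {Z : Set V} (hZ : Z = gfpSet (gYop Gm r A)) (n : ℕ) :
    BXI Gm r A n ⊆ Zᶜ := by
  rw [compl_Z_eq hZ]
  exact iter_le_lfp gdop_mono n

theorem BXI_mono {m n : ℕ} (h : m ≤ n) : BXI Gm r A m ⊆ BXI Gm r A n :=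
  iter_mono gdop_mono h

theorem mem_compl_Z_iff [Fintype V] {Z : Set V} (hZ : Z = gfpSet (gYop Gm r A)) {v : V} :
    v ∉ Z ↔ ∃ n, v ∈ BXI Gm r A n := by
  have : v ∉ Z ↔ v ∈ Zᶜ := Iff.rfl
  rw [this, compl_Z_eq hZ]
  exact mem_lfp_iff_iter gdop_mono

theorem ork_mem {v : V} {n : ℕ} (h : v ∈ BXI Gm r A n) : v ∈ BXI Gm r A (ork Gm r A v) :=
  rkOf_mem h

theorem ork_le {v : V} {n : ℕ} (h : v ∈ BXI Gm r A n) : ork Gm r A v ≤ n := rkOf_le h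

theorem ork_pos {v : V} {n : ℕ} (h : v ∈ BXI Gm r A n) : 1 ≤ ork Gm r A v := rkOf_pos h

/-- `BXI (n+1)` is the greatest fixpoint of the dual inner ν-operator. -/
theorem BXI_succ_gfp (n : ℕ) :
    BXI Gm r A (n+1) = gfpSet (fun Xt => (fXop Gm r A (BXI Gm r A n)ᶜ Xtᶜ)ᶜ) := by
  have h1 : BXI Gm r A (n+1) = gdop Gm r A (BXI Gm r A n) := iter_succ' _ n
  rw [h1]
  show (lfpSet (fXop Gm r A (BXI Gm r A n)ᶜ))ᶜ = _
  rw [compl_lfp]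

theorem BXI_unfold (n : ℕ) :
    BXI Gm r A (n+1) = (fXop Gm r A (BXI Gm r A n)ᶜ (BXI Gm r A (n+1))ᶜ)ᶜ := by
  conv_lhs => rw [BXI_succ_gfp n]
  rw [← gfp_fixed (f := fun Xt => (fXop Gm r A (BXI Gm r A n)ᶜ Xtᶜ)ᶜ)]
  · rw [← BXI_succ_gfp n]
  · intro S T h
    refine Set.compl_subset_compl.mpr (fXop_mono _ ?_)
    exact Set.compl_subset_compl.mpr h

/-- Members of `BXI L` (for `L ≥ 1`) belong to the inner dual least fixpoint
for every target index. -/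
theorem mem_BXI_NS {L t : ℕ} (hL : 1 ≤ L) (ht : t ∈ Finset.Icc 1 r) {v : V}
    (hv : v ∈ BXI Gm r A L) : v ∈ lfpSet (hYop Gm r A L t) := by
  obtain ⟨n, rfl⟩ : ∃ n, L = n + 1 := ⟨L - 1, by omega⟩
  have h1 := BXI_unfold (Gm := Gm) (r := r) (A := A) n
  rw [h1] at hv
  have hv2 : v ∉ fXop Gm r A (BXI Gm r A n)ᶜ (BXI Gm r A (n+1))ᶜ := hv
  rw [mem_fXop] at hv2
  push_neg at hv2
  have hv3 : v ∉ Ystar Gm A (BXI Gm r A n)ᶜ (BXI Gm r A (n+1))ᶜ t := hv2 t ht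
  have hc : v ∈ (Ystar Gm A (BXI Gm r A n)ᶜ (BXI Gm r A (n+1))ᶜ t)ᶜ := hv3
  rw [Ystar, compl_gfp] at hc
  have : (fun S => (Ybody Gm A (BXI Gm r A n)ᶜ (BXI Gm r A (n+1))ᶜ t Sᶜ)ᶜ) =
      hYop Gm r A (n+1) t := by
    funext S
    show (Gm.apre _ _ ∪ (A t ∩ Gm.cpre Sᶜ))ᶜ = _
    simp only [hYop, Nat.add_sub_cancel]
  rwa [this] at hc

theorem lfp_subset_ItM [Fintype V] (L t : ℕ) :
    lfpSet (hYop Gm r A L t) ⊆ ItM Gm r A L t := by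
  obtain ⟨n, hn⟩ := exists_iter_eq_lfp (hYop_mono (Gm := Gm) (r := r) (A := A) L t)
  rw [← hn]
  exact Set.subset_iUnion (fun n => (hYop Gm r A L t)^[n] ∅) n

theorem mem_ItM_iff {L t : ℕ} {v : V} :
    v ∈ ItM Gm r A L t ↔ ∃ n, v ∈ (hYop Gm r A L t)^[n] ∅ := Set.mem_iUnion

theorem irk_mem {L t : ℕ} {v : V} (h : v ∈ ItM Gm r A L t) :
    v ∈ (hYop Gm r A L t)^[irk Gm r A L t v] ∅ := by
  obtain ⟨n, hn⟩ := mem_ItM_iff.mp h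
  exact rkOf_mem hn

theorem irk_pos {L t : ℕ} {v : V} (h : v ∈ ItM Gm r A L t) : 1 ≤ irk Gm r A L t v := by
  obtain ⟨n, hn⟩ := mem_ItM_iff.mp h
  exact rkOf_pos hn

theorem irk_le {L t : ℕ} {v w : V} {n : ℕ} (h : w ∈ (hYop Gm r A L t)^[n] ∅) :
    irk Gm r A L t w ≤ n := rkOf_le h

theorem irk_unfold {L t : ℕ} {v : V} (h : v ∈ ItM Gm r A L t) :
    v ∈ hYop Gm r A L t ((hYop Gm r A L t)^[irk Gm r A L t v - 1] ∅) := by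
  obtain ⟨n, hn⟩ := mem_ItM_iff.mp h
  exact rkOf_unfold hn

theorem not_mem_pre0_iff {S : Set V} {v : V} :
    v ∉ Gm.pre0 S ↔ (v ∈ Gm.V0 → ∀ w, Gm.E v w → w ∉ S) := by
  rw [mem_pre0]; push_neg; rfl

theorem not_mem_pre1_iff {S : Set V} {v : V} :
    v ∉ Gm.pre1 S ↔ (v ∈ Gm.V1 → ∃ w, Gm.E v w ∧ w ∉ S) := by
  rw [mem_pre1]; push_neg; rfl

theorem not_mem_lpre_iff {S : Set V} {v : V} :
    v ∉ Gm.lpre S ↔ ∀ w, Gm.El v w → w ∉ S := by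
  rw [mem_lpre]; push_neg; rfl

theorem not_mem_cpre_iff {S : Set V} {v : V} :
    v ∉ Gm.cpre S ↔
      (v ∈ Gm.V0 → ∀ w, Gm.E v w → w ∉ S) ∧ (v ∈ Gm.V1 → ∃ w, Gm.E v w ∧ w ∉ S) := by
  have : v ∉ Gm.cpre S ↔ v ∉ Gm.pre0 S ∧ v ∉ Gm.pre1 S := by
    rw [LiveGameGraph.cpre]
    simp [not_or]
  rw [this, not_mem_pre0_iff, not_mem_pre1_iff]

theorem not_mem_apre_iff {S T : Set V} {v : V} :
    v ∉ Gm.apre S T ↔ v ∉ Gm.cpre T ∧ (v ∉ Gm.lpre T ∨ v ∉ Gm.pre1 S) := by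
  rw [LiveGameGraph.apre]
  simp only [Set.mem_union, Set.mem_inter_iff, not_or, not_and_or]

/-- The full unfolding of membership in the dual inner operator. -/
theorem mem_hYop_iff {L t : ℕ} {Yt : Set V} {v : V} :
    v ∈ hYop Gm r A L t Yt ↔
      (v ∈ Gm.V0 → ∀ w, Gm.E v w → w ∈ BXI Gm r A L) ∧
      (v ∈ Gm.V1 → ∃ w, Gm.E v w ∧ w ∈ BXI Gm r A L) ∧
      ((∀ w, Gm.El v w → w ∈ BXI Gm r A L) ∨
        (v ∈ Gm.V1 → ∃ w, Gm.E v w ∧ w ∈ BXI Gm r A (L-1))) ∧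
      (v ∈ A t →
        (v ∈ Gm.V0 → ∀ w, Gm.E v w → w ∈ Yt) ∧ (v ∈ Gm.V1 → ∃ w, Gm.E v w ∧ w ∈ Yt)) := by
  have hmain : v ∈ hYop Gm r A L t Yt ↔
      v ∉ Gm.apre (BXI Gm r A (L-1))ᶜ (BXI Gm r A L)ᶜ ∧ ¬(v ∈ A t ∧ v ∈ Gm.cpre Ytᶜ) := by
    show v ∉ (Gm.apre _ _ ∪ (A t ∩ Gm.cpre Ytᶜ)) ↔ _
    simp only [Set.mem_union, Set.mem_inter_iff, not_or]
  rw [hmain, not_mem_apre_iff, not_mem_cpre_iff, not_mem_lpre_iff, not_mem_pre1_iff]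
  simp only [Set.mem_compl_iff, not_not, not_and]
  constructor
  · rintro ⟨⟨⟨h1, h2⟩, h3⟩, h4⟩
    refine ⟨h1, h2, ?_, ?_⟩
    · rcases h3 with h3 | h3
      · exact Or.inl h3
      · exact Or.inr h3
    · intro hA
      have h5 := h4 hA
      rw [not_mem_cpre_iff] at h5
      simp only [Set.mem_compl_iff, not_not] at h5
      exact h5
  · rintro ⟨h1, h2, h3, h4⟩
    refine ⟨⟨⟨h1, h2⟩, ?_⟩, ?_⟩
    · rcases h3 with h3 | h3
      · exact Or.inl h3
      · exact Or.inr h3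
    · intro hA
      rw [not_mem_cpre_iff]
      simp only [Set.mem_compl_iff, not_not]
      exact h4 hA

/-- Degenerate case: with no co-Büchi pairs the dual region is everything. -/
theorem BXI_univ_of_r0 (hr : r = 0) {n : ℕ} (hn : 1 ≤ n) :
    BXI Gm r A n = Set.univ := by
  have h1 : ∀ S : Set V, gdop Gm r A S = Set.univ := by
    intro S
    have h2 : gYop Gm r A Sᶜ = ∅ := by
      have : fXop Gm r A Sᶜ = fun _ => (∅ : Set V) := by
        funext X
        simp [fXop, hr]
      rw [gYop, this]
      refine Set.eq_empty_iff_forall_notMem.mpr fun v hv => ?_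
      have := lfp_le (f := fun _ : Set V => (∅ : Set V)) (S := (∅ : Set V)) subset_rfl
      exact this hv
    show (gYop Gm r A Sᶜ)ᶜ = _
    rw [h2, Set.compl_empty]
  obtain ⟨m, rfl⟩ : ∃ m, n = m + 1 := ⟨n - 1, by omega⟩
  have := iter_succ' (gdop Gm r A) m
  rw [BXI, this, h1]

end Comp
end FairAux
namespace FairAux
open LiveGameGraph
open scoped Classical

variable {V : Type*}

/-- Memory state of the Player-1 spoiling strategy. -/
structure PSt (V : Type*) where
  lvl : ℕ
  tgt : ℕ
  ptr : V → ℕ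
  done : Set V
  flag : Bool

section Machine
variable [Fintype V] (Gm : LiveGameGraph V) (r : ℕ) (A : ℕ → Set V)

noncomputable def dflt (v : V) : V := (Gm.succ_nonempty v).choose

noncomputable def liveL (v : V) : List V := (Set.toFinite {w | Gm.El v w}).toFinset.toList

/-- Effective level. -/
noncomputable def effL (s : PSt V) (v : V) : ℕ := if s.flag then ork Gm r A v else s.lvl

/-- Escape condition. -/
noncomputable def escP (s : PSt V) (v : V) : Prop :=
  ∃ w, Gm.El v w ∧ w ∉ BXI Gm r A (effL Gm r A s v)

/-- Phase-end condition. -/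
def peP (s : PSt V) (v : V) : Prop := 1 ≤ r ∧ v ∉ A s.tgt

/-- Fairness-move condition. -/
noncomputable def fairP (s : PSt V) (v : V) : Prop :=
  ¬escP Gm r A s v ∧ liveL Gm v ≠ [] ∧
    (r = 0 ∨ v ∉ (if peP r A s v then (∅ : Set V) else s.done))

/-- The new target. -/
noncomputable def newT (s : PSt V) (v : V) : ℕ :=
  if peP r A s v then (if r ≤ s.tgt then 1 else s.tgt + 1) else s.tgt

/-- The new done-set. -/
noncomputable def newD (s : PSt V) (v : V) : Set V := if peP r A s v then ∅ else s.done

/-- One step of the Player-1 machine: new state and chosen move. -/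
noncomputable def nextSV (s : PSt V) (v : V) : PSt V × V :=
  if escP Gm r A s v then
    (⟨effL Gm r A s v, newT r A s v, s.ptr, newD r A s v, true⟩,
      if h2 : ∃ w, Gm.E v w ∧ w ∈ BXI Gm r A (effL Gm r A s v - 1) then h2.choose
      else dflt Gm v)
  else if hfa : fairP Gm r A s v then
    (⟨effL Gm r A s v, newT r A s v, Function.update s.ptr v (s.ptr v + 1),
        newD r A s v ∪ {v}, true⟩,
      (liveL Gm v).get ⟨s.ptr v % (liveL Gm v).length,
        Nat.mod_lt _ (List.length_pos_iff.mpr hfa.2.1)⟩)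
  else if peP r A s v then
    (⟨effL Gm r A s v, newT r A s v, s.ptr, newD r A s v, true⟩,
      if h4 : ∃ w, Gm.E v w ∧ w ∈ BXI Gm r A (effL Gm r A s v) then h4.choose
      else dflt Gm v)
  else
    (⟨effL Gm r A s v, newT r A s v, s.ptr, newD r A s v, false⟩,
      if h3 : ∃ w, Gm.E v w ∧
          w ∈ (hYop Gm r A (effL Gm r A s v) s.tgt)^[irk Gm r A (effL Gm r A s v) s.tgt v - 1] ∅
        then h3.choose
      else dflt Gm v)

noncomputable def delta (s : PSt V) (v : V) : PSt V := (nextSV Gm r A s v).1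
noncomputable def mv (s : PSt V) (v : V) : V := (nextSV Gm r A s v).2

def st0 : PSt V := ⟨0, 1, fun _ => 0, ∅, true⟩

end Machine

section MachineLemmas
variable [Fintype V] {Gm : LiveGameGraph V} {r : ℕ} {A : ℕ → Set V}

theorem liveL_mem {v w : V} : w ∈ liveL Gm v ↔ Gm.El v w := by
  rw [liveL, Finset.mem_toList, Set.Finite.mem_toFinset]
  rfl

theorem liveL_ne_nil {v w : V} (h : Gm.El v w) : liveL Gm v ≠ [] :=
  List.ne_nil_of_mem (liveL_mem.mpr h)

theorem dflt_E (v : V) : Gm.E v (dflt Gm v) := (Gm.succ_nonempty v).choose_spec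

theorem mv_E (s : PSt V) (v : V) : Gm.E v (mv Gm r A s v) := by
  by_cases h1 : escP Gm r A s v
  · unfold mv nextSV
    rw [if_pos h1]
    by_cases h2 : ∃ w, Gm.E v w ∧ w ∈ BXI Gm r A (effL Gm r A s v - 1)
    · rw [dif_pos h2]; exact h2.choose_spec.1
    · rw [dif_neg h2]; exact dflt_E v
  · by_cases hf : fairP Gm r A s v
    · have : mv Gm r A s v = (liveL Gm v).get ⟨s.ptr v % (liveL Gm v).length,
          Nat.mod_lt _ (List.length_pos_iff.mpr hf.2.1)⟩ := by
        unfold mv nextSV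
        rw [if_neg h1, dif_pos hf]
      rw [this]
      exact (Gm.live_sub _ _ (liveL_mem.mp (List.get_mem _ _))).2
    · unfold mv nextSV
      rw [if_neg h1, dif_neg hf]
      by_cases hp : peP r A s v
      · rw [if_pos hp]
        by_cases h4 : ∃ w, Gm.E v w ∧ w ∈ BXI Gm r A (effL Gm r A s v)
        · rw [dif_pos h4]; exact h4.choose_spec.1
        · rw [dif_neg h4]; exact dflt_E v
      · rw [if_neg hp]
        by_cases h3 : ∃ w, Gm.E v w ∧
            w ∈ (hYop Gm r A (effL Gm r A s v) s.tgt)^[irk Gm r A (effL Gm r A s v) s.tgt v - 1] ∅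
        · rw [dif_pos h3]; exact h3.choose_spec.1
        · rw [dif_neg h3]; exact dflt_E v

theorem delta_tgt (s : PSt V) (v : V) : (delta Gm r A s v).tgt = newT r A s v := by
  unfold delta nextSV
  split_ifs <;> rfl

theorem delta_lvl (s : PSt V) (v : V) : (delta Gm r A s v).lvl = effL Gm r A s v := by
  unfold delta nextSV
  split_ifs <;> rfl

theorem delta_done (s : PSt V) (v : V) :
    (delta Gm r A s v).done =
      newD r A s v ∪ (if fairP Gm r A s v then {v} else ∅) := by
  by_cases hf : fairP Gm r A s v
  · rw [if_pos hf]
    unfold delta nextSV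
    rw [if_neg hf.1, dif_pos hf]
  · rw [if_neg hf]
    unfold delta nextSV
    by_cases h1 : escP Gm r A s v
    · rw [if_pos h1]; simp
    · rw [if_neg h1, dif_neg hf]
      split_ifs <;> simp

theorem delta_ptr (s : PSt V) (v : V) :
    (delta Gm r A s v).ptr =
      if fairP Gm r A s v then Function.update s.ptr v (s.ptr v + 1) else s.ptr := by
  by_cases hf : fairP Gm r A s v
  · rw [if_pos hf]
    unfold delta nextSV
    rw [if_neg hf.1, dif_pos hf]
  · rw [if_neg hf]
    unfold delta nextSV
    by_cases h1 : escP Gm r A s v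
    · rw [if_pos h1]
    · rw [if_neg h1, dif_neg hf]
      split_ifs <;> rfl

theorem delta_flag (s : PSt V) (v : V) :
    (delta Gm r A s v).flag =
      if ¬escP Gm r A s v ∧ ¬fairP Gm r A s v ∧ ¬peP r A s v then false else true := by
  unfold delta nextSV
  split_ifs <;> simp_all

theorem mv_esc (s : PSt V) (v : V) (h : escP Gm r A s v)
    (hex : ∃ w, Gm.E v w ∧ w ∈ BXI Gm r A (effL Gm r A s v - 1)) :
    mv Gm r A s v ∈ BXI Gm r A (effL Gm r A s v - 1) := by
  unfold mv nextSV
  rw [if_pos h, dif_pos hex]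
  exact hex.choose_spec.2

theorem mv_fair (s : PSt V) (v : V) (h1 : ¬escP Gm r A s v) (h2 : fairP Gm r A s v) :
    mv Gm r A s v =
      (liveL Gm v).get ⟨s.ptr v % (liveL Gm v).length,
        Nat.mod_lt _ (List.length_pos_iff.mpr h2.2.1)⟩ := by
  unfold mv nextSV
  rw [if_neg h1, dif_pos h2]

theorem mv_fair_live (s : PSt V) (v : V) (h1 : ¬escP Gm r A s v) (h2 : fairP Gm r A s v) :
    Gm.El v (mv Gm r A s v) := by
  rw [mv_fair s v h1 h2]
  exact liveL_mem.mp (List.get_mem _ _)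

theorem mv_pe (s : PSt V) (v : V) (h1 : ¬escP Gm r A s v) (h2 : ¬fairP Gm r A s v)
    (h3 : peP r A s v) (hex : ∃ w, Gm.E v w ∧ w ∈ BXI Gm r A (effL Gm r A s v)) :
    mv Gm r A s v ∈ BXI Gm r A (effL Gm r A s v) := by
  unfold mv nextSV
  rw [if_neg h1, dif_neg h2, if_pos h3, dif_pos hex]
  exact hex.choose_spec.2

theorem mv_prog (s : PSt V) (v : V) (h1 : ¬escP Gm r A s v) (h2 : ¬fairP Gm r A s v)
    (h3 : ¬peP r A s v)
    (hex : ∃ w, Gm.E v w ∧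
      w ∈ (hYop Gm r A (effL Gm r A s v) s.tgt)^[irk Gm r A (effL Gm r A s v) s.tgt v - 1] ∅) :
    mv Gm r A s v ∈
      (hYop Gm r A (effL Gm r A s v) s.tgt)^[irk Gm r A (effL Gm r A s v) s.tgt v - 1] ∅ := by
  unfold mv nextSV
  rw [if_neg h1, dif_neg h2, if_neg h3, dif_pos hex]
  exact hex.choose_spec.2

end MachineLemmas
end FairAux
namespace FairAux
open LiveGameGraph
open scoped Classical

variable {V : Type*}

section Play
variable (Gm : LiveGameGraph V) (ρ0 ρ1 : List V → V → V) (v0 : V)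

noncomputable def playF : ℕ → List V × V
  | 0 => ([], v0)
  | n+1 =>
      let p := playF n
      (p.1 ++ [p.2], if p.2 ∈ Gm.V0 then ρ0 p.1 p.2 else ρ1 p.1 p.2)

noncomputable def playP (n : ℕ) : V := (playF Gm ρ0 ρ1 v0 n).2

theorem playF_fst (n : ℕ) :
    (playF Gm ρ0 ρ1 v0 n).1 = List.ofFn (fun j : Fin n => playP Gm ρ0 ρ1 v0 j.1) := by
  induction n with
  | zero => simp [playF]
  | succ n ih =>
    show ((playF Gm ρ0 ρ1 v0 n).1 ++ [(playF Gm ρ0 ρ1 v0 n).2]) = _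
    rw [List.ofFn_succ', List.concat_eq_append, ih]
    rfl

theorem playP_zero : playP Gm ρ0 ρ1 v0 0 = v0 := rfl

theorem playP_succ (n : ℕ) :
    playP Gm ρ0 ρ1 v0 (n+1) =
      if playP Gm ρ0 ρ1 v0 n ∈ Gm.V0 then
        ρ0 (List.ofFn fun j : Fin n => playP Gm ρ0 ρ1 v0 j.1) (playP Gm ρ0 ρ1 v0 n)
      else ρ1 (List.ofFn fun j : Fin n => playP Gm ρ0 ρ1 v0 j.1) (playP Gm ρ0 ρ1 v0 n) := by
  show (playF Gm ρ0 ρ1 v0 (n+1)).2 = _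
  rw [show playF Gm ρ0 ρ1 v0 (n+1) = (let p := playF Gm ρ0 ρ1 v0 n;
    (p.1 ++ [p.2], if p.2 ∈ Gm.V0 then ρ0 p.1 p.2 else ρ1 p.1 p.2)) from rfl]
  simp only []
  rw [playF_fst]
  rfl

theorem play_compliant : Gm.Compliant ρ0 ρ1 v0 (playP Gm ρ0 ρ1 v0) := by
  refine ⟨rfl, fun i => ⟨fun h0 => ?_, fun h1 => ?_⟩⟩
  · rw [playP_succ, if_pos h0]
  · rw [playP_succ, if_neg (fun h0 => not_in_both h0 h1)]

end Play

/-- No infinite strictly decreasing sequence of naturals. -/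
theorem no_strict_anti (f : ℕ → ℕ) (h : ∀ d, f (d+1) < f d) : False := by
  have : ∀ d, f d + d ≤ f 0 := by
    intro d
    induction d with
    | zero => omega
    | succ d ih => have := h d; omega
  have := this (f 0 + 1)
  omega

/-- Minimal enumeration of an infinite set of naturals. -/
noncomputable def enumOf (S : Set ℕ) (hS : S.Infinite) : ℕ → ℕ
  | 0 => sInf S
  | k+1 => sInf {m | m ∈ S ∧ enumOf S hS k < m}

theorem enumOf_mem (S : Set ℕ) (hS : S.Infinite) (k : ℕ) : enumOf S hS k ∈ S := by
  cases k with
  | zero => exact Nat.sInf_mem hS.nonempty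
  | succ k =>
    have hne : {m | m ∈ S ∧ enumOf S hS k < m}.Nonempty := by
      obtain ⟨i, hi, hge⟩ := infinite_exists_ge hS (enumOf S hS k + 1)
      exact ⟨i, hi, by omega⟩
    exact (Nat.sInf_mem hne).1

theorem enumOf_lt (S : Set ℕ) (hS : S.Infinite) (k : ℕ) :
    enumOf S hS k < enumOf S hS (k+1) := by
  have hne : {m | m ∈ S ∧ enumOf S hS k < m}.Nonempty := by
    obtain ⟨i, hi, hge⟩ := infinite_exists_ge hS (enumOf S hS k + 1)
    exact ⟨i, hi, by omega⟩
  exact (Nat.sInf_mem hne).2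

theorem enumOf_min (S : Set ℕ) (hS : S.Infinite) (k : ℕ) {m : ℕ} (hm : m ∈ S)
    (hlt : enumOf S hS k < m) : enumOf S hS (k+1) ≤ m :=
  Nat.sInf_le ⟨hm, hlt⟩

theorem enumOf_strictMono (S : Set ℕ) (hS : S.Infinite) : StrictMono (enumOf S hS) :=
  strictMono_nat_of_lt_succ (enumOf_lt S hS)

section RR
variable [Fintype V] {Gm : LiveGameGraph V} {r : ℕ} {A : ℕ → Set V}

private theorem getcongr (l : List V) (a b : ℕ) (ha : a < l.length) (hb : b < l.length)
    (h : a = b) : l.get ⟨a, ha⟩ = l.get ⟨b, hb⟩ := by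
  subst h; rfl

/-- If infinitely many fairness moves happen at `v`, every live edge from `v`
is taken infinitely often. -/
theorem rr_fair {st : ℕ → PSt V} {π : ℕ → V}
    (hst : ∀ i, st (i+1) = delta Gm r A (st i) (π i))
    (hmv : ∀ i, π i ∈ Gm.V1 → π (i+1) = mv Gm r A (st i) (π i))
    {v w0 : V} (hlive : Gm.El v w0)
    (hF : {i | π i = v ∧ fairP Gm r A (st i) (π i)}.Infinite) :
    {i | π i = v ∧ π (i+1) = w0}.Infinite := by
  set F := {i | π i = v ∧ fairP Gm r A (st i) (π i)} with hFdef
  set L := (liveL Gm v).length with hLdef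
  have hLpos : 0 < L := List.length_pos_iff.mpr (liveL_ne_nil hlive)
  -- pointer changes
  have hchange : ∀ i ∈ F, (st (i+1)).ptr v = (st i).ptr v + 1 := by
    rintro i ⟨hiv, hif⟩
    rw [hst i, delta_ptr, if_pos hif, hiv, Function.update_self]
  have hsame : ∀ i, i ∉ F → (st (i+1)).ptr v = (st i).ptr v := by
    intro i hi
    rw [hst i, delta_ptr]
    split_ifs with hf
    · have hne : π i ≠ v := fun he => hi ⟨he, hf⟩
      rw [Function.update_of_ne (fun he => hne he.symm)]
    · rfl
  -- moves at fairness positions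
  have hmove : ∀ i ∈ F, π (i+1) = (liveL Gm v).get
      ⟨(st i).ptr v % L, by rw [hLdef]; exact Nat.mod_lt _ hLpos⟩ := by
    rintro i ⟨hiv, hif⟩
    have hV1 : π i ∈ Gm.V1 := by
      obtain ⟨u, hu⟩ := List.exists_mem_of_ne_nil _ hif.2.1
      exact (Gm.live_sub _ _ (liveL_mem.mp hu)).1
    rw [hmv i hV1, mv_fair _ _ hif.1 hif]
    subst hiv
    rfl
  set e := enumOf F hF with hedef
  have heF : ∀ k, e k ∈ F := enumOf_mem F hF
  have hemono : StrictMono e := enumOf_strictMono F hF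
  -- pointer along the enumeration
  have hbetween : ∀ k j, e k < j → j ≤ e (k+1) → (st j).ptr v = (st (e k)).ptr v + 1 := by
    intro k j
    induction j with
    | zero => omega
    | succ j ih =>
      intro h1 h2
      rcases Nat.lt_or_ge (e k) j with h3 | h3
      · have hj : j ∉ F := by
          intro hjF
          have hmin : e (k+1) ≤ j := enumOf_min F hF k hjF h3
          omega
        rw [hsame j hj]
        exact ih h3 (by omega)
      · have : j = e k := by omega
        rw [this]
        exact hchange (e k) (heF k)
  have htot : ∀ k, (st (e k)).ptr v = (st (e 0)).ptr v + k := by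
    intro k
    induction k with
    | zero => rfl
    | succ k ih =>
      rw [hbetween k (e (k+1)) (enumOf_lt F hF k) le_rfl, ih]
      omega
  set p0 := (st (e 0)).ptr v with hp0
  -- index of w0 in the live list
  obtain ⟨⟨c, hc⟩, hgc⟩ := List.mem_iff_get.mp (liveL_mem.mpr hlive)
  -- choose k values hitting residue c
  have key : ∀ q : ℕ, (p0 + ((L - p0 % L) + c + L * q)) % L = c := by
    intro q
    have hd := Nat.div_add_mod p0 L
    have hm : p0 % L < L := Nat.mod_lt _ hLpos
    have h1 : p0 + ((L - p0 % L) + c + L * q) = c + L * (p0 / L + 1 + q) := by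
      rw [Nat.mul_add, Nat.mul_add, Nat.mul_one]
      have hM : L * (p0 / L) + p0 % L = p0 := hd
      omega
    rw [h1, Nat.add_mul_mod_self_left, Nat.mod_eq_of_lt hc]
  have hkmono : StrictMono (fun q => (L - p0 % L) + c + L * q) := by
    intro a b hab
    simp only []
    have : L * a < L * b := by
      exact (Nat.mul_lt_mul_left hLpos).mpr hab
    omega
  refine Set.infinite_of_injective_forall_mem
    (f := fun q : ℕ => e ((L - p0 % L) + c + L * q)) ?_ ?_
  · exact hemono.injective.comp hkmono.injective
  · intro q
    set k := (L - p0 % L) + c + L * q with hk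
    refine ⟨(heF k).1, ?_⟩
    have h2 := hmove (e k) (heF k)
    rw [h2]
    rw [← hgc]
    apply getcongr
    rw [htot k]
    exact key q
end RR
end FairAux
namespace FairAux
open LiveGameGraph
open scoped Classical

variable {V : Type*}

/-- Cyclic successor on `{1, …, r}`. -/
def wrapT (r t : ℕ) : ℕ := if r ≤ t then 1 else t + 1

theorem wrapT_Icc {r t : ℕ} (hr : 1 ≤ r) (ht : t ∈ Finset.Icc 1 r) :
    wrapT r t ∈ Finset.Icc 1 r := by
  rw [Finset.mem_Icc] at ht ⊢
  unfold wrapT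
  split_ifs with h <;> omega

theorem wrapT_climb {r : ℕ} : ∀ d t0, 1 ≤ t0 → t0 + d ≤ r → (wrapT r)^[d] t0 = t0 + d := by
  intro d
  induction d with
  | zero => intro t0 _ _; simp
  | succ d ih =>
    intro t0 h1 h2
    rw [Function.iterate_succ_apply', ih t0 h1 (by omega)]
    unfold wrapT
    rw [if_neg (by omega)]
    omega

theorem wrapT_reach {r t0 a : ℕ} (hr : 1 ≤ r) (ht0 : t0 ∈ Finset.Icc 1 r)
    (ha : a ∈ Finset.Icc 1 r) : ∃ k, (wrapT r)^[k] t0 = a := by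
  rw [Finset.mem_Icc] at ht0 ha
  rcases le_or_gt t0 a with h | h
  · exact ⟨a - t0, by rw [wrapT_climb (a - t0) t0 ht0.1 (by omega)]; omega⟩
  · refine ⟨(a - 1) + (1 + (r - t0)), ?_⟩
    rw [Function.iterate_add_apply, Function.iterate_add_apply,
      wrapT_climb (r - t0) t0 ht0.1 (by omega)]
    have h2 : t0 + (r - t0) = r := by omega
    rw [h2]
    have h3 : (wrapT r)^[1] r = 1 := by
      simp [wrapT, if_pos (le_refl r)]
    rw [h3, wrapT_climb (a - 1) 1 le_rfl (by omega)]
    omega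

theorem newT_eq {r : ℕ} {A : ℕ → Set V} (s : PSt V) (v : V) :
    newT r A s v = if peP r A s v then wrapT r s.tgt else s.tgt := rfl

section Inv
variable [Fintype V] {Gm : LiveGameGraph V} {r : ℕ} {A : ℕ → Set V} {Z : Set V}

/-- The step invariant of the Player-1 machine. -/
def INVp (Gm : LiveGameGraph V) (r : ℕ) (A : ℕ → Set V) (Z : Set V) (s : PSt V) (v : V) : Prop :=
  (s.flag = true → v ∉ Z) ∧
  (s.flag = false → 1 ≤ s.lvl ∧ v ∈ ItM Gm r A s.lvl s.tgt) ∧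
  s.tgt ∈ Finset.Icc 1 r

theorem INVp_derive (hZ : Z = gfpSet (gYop Gm r A)) {s : PSt V} {v : V}
    (h : INVp Gm r A Z s v) :
    1 ≤ effL Gm r A s v ∧ v ∈ ItM Gm r A (effL Gm r A s v) s.tgt ∧
      (s.flag = true → effL Gm r A s v = ork Gm r A v ∧ v ∈ BXI Gm r A (effL Gm r A s v)) := by
  obtain ⟨h1, h2, h3⟩ := h
  cases hfl : s.flag with
  | false =>
    have heq : effL Gm r A s v = s.lvl := by rw [effL, hfl]; rfl
    rw [heq]
    exact ⟨(h2 hfl).1, (h2 hfl).2, by simp [hfl]⟩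
  | true =>
    have heq : effL Gm r A s v = ork Gm r A v := by rw [effL, hfl]; rfl
    have hvZ : v ∉ Z := h1 hfl
    obtain ⟨n, hn⟩ := (mem_compl_Z_iff hZ).mp hvZ
    have hB : v ∈ BXI Gm r A (ork Gm r A v) := ork_mem hn
    have hL : 1 ≤ ork Gm r A v := ork_pos hn
    rw [heq]
    exact ⟨hL, lfp_subset_ItM _ _ (mem_BXI_NS hL h3 hB), fun _ => ⟨rfl, hB⟩⟩

theorem flag_false_iff (s : PSt V) (v : V) :
    (delta Gm r A s v).flag = false ↔
      ¬escP Gm r A s v ∧ ¬fairP Gm r A s v ∧ ¬peP r A s v := by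
  rw [delta_flag]
  split_ifs with h <;> simp [h]

set_option maxHeartbeats 1000000 in
/-- The master step lemma: one step of the machine preserves the invariant,
does not increase the effective level, decreases it on escapes, and makes
inner progress on quiet steps. -/
theorem step_master (hZ : Z = gfpSet (gYop Gm r A)) (hr : 1 ≤ r) {s : PSt V} {v w : V}
    (h : INVp Gm r A Z s v)
    (hw : (¬escP Gm r A s v ∧ ¬fairP Gm r A s v ∧ v ∈ Gm.V0 ∧ Gm.E v w) ∨
      (v ∈ Gm.V1 ∧ w = mv Gm r A s v)) :
    INVp Gm r A Z (delta Gm r A s v) w ∧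
    effL Gm r A (delta Gm r A s v) w ≤ effL Gm r A s v ∧
    (escP Gm r A s v → effL Gm r A (delta Gm r A s v) w < effL Gm r A s v) ∧
    ((delta Gm r A s v).flag = false →
      effL Gm r A (delta Gm r A s v) w = effL Gm r A s v ∧
      (delta Gm r A s v).tgt = s.tgt ∧
      irk Gm r A (effL Gm r A s v) s.tgt w < irk Gm r A (effL Gm r A s v) s.tgt v ∧
      v ∈ A s.tgt) := by
  obtain ⟨hL1, hIt, hflTrue⟩ := INVp_derive hZ h
  obtain ⟨U1, U2, U3, U4⟩ := mem_hYop_iff.mp (irk_unfold hIt)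
  have htgt' : (delta Gm r A s v).tgt ∈ Finset.Icc 1 r := by
    rw [delta_tgt, newT_eq]
    split_ifs with hpe
    · exact wrapT_Icc hr h.2.2
    · exact h.2.2
  have hBnotZ : ∀ {n : ℕ} {u : V}, u ∈ BXI Gm r A n → u ∉ Z := by
    intro n u hu
    exact (BXI_subset_compl_Z hZ n) hu
  -- case analysis on the branch taken
  by_cases hesc : escP Gm r A s v
  · -- escape branch
    have hV1 : v ∈ Gm.V1 := by
      rcases hw with hw | hw
      · exact absurd hesc hw.1
      · exact hw.1
    have hU3r : ∃ w', Gm.E v w' ∧ w' ∈ BXI Gm r A (effL Gm r A s v - 1) := by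
      rcases U3 with U3 | U3
      · obtain ⟨u, hu, hnu⟩ := hesc
        exact absurd (U3 u hu) hnu
      · exact U3 hV1
    have hwb : w ∈ BXI Gm r A (effL Gm r A s v - 1) := by
      rcases hw with hw | hw
      · exact absurd hesc hw.1
      · rw [hw.2]
        exact mv_esc s v hesc hU3r
    have hfl' : (delta Gm r A s v).flag = true := by
      rw [delta_flag, if_neg (by tauto)]
    have heff' : effL Gm r A (delta Gm r A s v) w = ork Gm r A w := by
      rw [effL, hfl']; rfl
    have hlt : ork Gm r A w < effL Gm r A s v := by
      have := ork_le hwb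
      omega
    refine ⟨⟨fun _ => hBnotZ (ork_mem hwb), by simp [hfl'], htgt'⟩, ?_, ?_, ?_⟩
    · rw [heff']; omega
    · intro _; rw [heff']; exact hlt
    · intro hc; rw [hfl'] at hc; exact absurd hc (by simp)
  · by_cases hfa : fairP Gm r A s v
    · -- fairness branch
      have hV1 : v ∈ Gm.V1 := by
        rcases hw with hw | hw
        · exact absurd hfa hw.2.1
        · exact hw.1
      have hwlive : Gm.El v w := by
        rcases hw with hw | hw
        · exact absurd hfa hw.2.1
        · rw [hw.2]; exact mv_fair_live s v hesc hfa
      have hwb : w ∈ BXI Gm r A (effL Gm r A s v) := by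
        by_contra hc
        exact hesc ⟨w, hwlive, hc⟩
      have hfl' : (delta Gm r A s v).flag = true := by
        rw [delta_flag, if_neg (by tauto)]
      have heff' : effL Gm r A (delta Gm r A s v) w = ork Gm r A w := by
        rw [effL, hfl']; rfl
      refine ⟨⟨fun _ => hBnotZ (ork_mem hwb), by simp [hfl'], htgt'⟩, ?_, fun hc => absurd hc hesc, ?_⟩
      · rw [heff']; exact ork_le hwb
      · intro hc; rw [hfl'] at hc; exact absurd hc (by simp)
    · by_cases hpe : peP r A s v
      · -- phase-end branch
        have hwb : w ∈ BXI Gm r A (effL Gm r A s v) := by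
          rcases hw with hw | hw
          · exact U1 hw.2.2.1 w hw.2.2.2
          · rw [hw.2]
            exact mv_pe s v hesc hfa hpe (U2 hw.1)
        have hfl' : (delta Gm r A s v).flag = true := by
          rw [delta_flag, if_neg (by tauto)]
        have heff' : effL Gm r A (delta Gm r A s v) w = ork Gm r A w := by
          rw [effL, hfl']; rfl
        refine ⟨⟨fun _ => hBnotZ (ork_mem hwb), by simp [hfl'], htgt'⟩, ?_, fun hc => absurd hc hesc, ?_⟩
        · rw [heff']; exact ork_le hwb
        · intro hc; rw [hfl'] at hc; exact absurd hc (by simp)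
      · -- progress branch
        have hvA : v ∈ A s.tgt := by
          rw [peP] at hpe
          push_neg at hpe
          exact hpe hr
        have hU4 := U4 hvA
        have hwb : w ∈ (hYop Gm r A (effL Gm r A s v) s.tgt)^[irk Gm r A (effL Gm r A s v) s.tgt v - 1] ∅ := by
          rcases hw with hw | hw
          · exact hU4.1 hw.2.2.1 w hw.2.2.2
          · rw [hw.2]
            exact mv_prog s v hesc hfa hpe (hU4.2 hw.1)
        have hfl' : (delta Gm r A s v).flag = false := by
          rw [delta_flag, if_pos (by tauto)]
        have hlvl' : (delta Gm r A s v).lvl = effL Gm r A s v := delta_lvl s v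
        have heff' : effL Gm r A (delta Gm r A s v) w = effL Gm r A s v := by
          rw [effL, hfl', hlvl']; rfl
        have htgt'' : (delta Gm r A s v).tgt = s.tgt := by
          rw [delta_tgt, newT_eq, if_neg hpe]
        have hirk : irk Gm r A (effL Gm r A s v) s.tgt w < irk Gm r A (effL Gm r A s v) s.tgt v := by
          have h1 := irk_le (v := v) hwb
          have h2 := irk_pos hIt
          omega
        refine ⟨⟨by simp [hfl'], ?_, htgt'⟩, le_of_eq heff', fun hc => absurd hc hesc, ?_⟩
        · intro _
          rw [hlvl', htgt'']
          exact ⟨hL1, Set.mem_iUnion.mpr ⟨_, hwb⟩⟩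
        · intro _
          exact ⟨heff', htgt'', hirk, hvA⟩
end Inv
end FairAux
namespace FairAux
open LiveGameGraph
open scoped Classical

variable {V : Type*}

set_option maxHeartbeats 2000000 in
theorem complete_spoiler [Fintype V] {Gm : LiveGameGraph V} {r : ℕ} {A : ℕ → Set V} {Z : Set V}
    (hZ : Z = gfpSet (gYop Gm r A)) {v0 : V} (hv0 : v0 ∉ Z)
    (ρ0 : List V → V → V) (hρ0 : Gm.Strategy0 ρ0) :
    ∃ ρ1, Gm.Strategy1 ρ1 ∧ ∃ π, Gm.Compliant ρ0 ρ1 v0 π ∧ Gm.StronglyFair π ∧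
      ∀ a ∈ Finset.Icc 1 r, ∀ N, ∃ i, N ≤ i ∧ π i ∉ A a := by
  classical
  set ρ1 : List V → V → V := fun h v => mv Gm r A (h.foldl (delta Gm r A) st0) v with hρ1def
  have hρ1 : Gm.Strategy1 ρ1 := fun h v _ => mv_E _ v
  set π : ℕ → V := playP Gm ρ0 ρ1 v0 with hπdef
  set st : ℕ → PSt V := fun n =>
    (List.ofFn fun j : Fin n => π j.1).foldl (delta Gm r A) st0 with hstdef
  have hcomp : Gm.Compliant ρ0 ρ1 v0 π := play_compliant Gm ρ0 ρ1 v0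
  have hπ0 : π 0 = v0 := hcomp.1
  have hst00 : st 0 = st0 := by simp [hstdef]
  have hstsucc : ∀ n, st (n+1) = delta Gm r A (st n) (π n) := by
    intro n
    show (List.ofFn fun j : Fin (n+1) => π j.1).foldl (delta Gm r A) st0 = _
    rw [List.ofFn_succ', List.concat_eq_append, List.foldl_append]
    rfl
  have hmvstep : ∀ i, π i ∈ Gm.V1 → π (i+1) = mv Gm r A (st i) (π i) := by
    intro i h1
    have h := (hcomp.2 i).2 h1
    rw [h]
  have hEstep : ∀ i, Gm.E (π i) (π (i+1)) := by
    intro i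
    rcases mem_V0_or_V1 Gm (π i) with h | h
    · rw [(hcomp.2 i).1 h]; exact hρ0 _ _ h
    · rw [hmvstep i h]; exact mv_E _ _
  have hV0cond : ∀ i, π i ∈ Gm.V0 →
      ¬escP Gm r A (st i) (π i) ∧ ¬fairP Gm r A (st i) (π i) := by
    intro i h0
    constructor
    · rintro ⟨u, hu, -⟩
      exact not_in_both h0 (Gm.live_sub _ _ hu).1
    · rintro ⟨-, hne, -⟩
      obtain ⟨u, hu⟩ := List.exists_mem_of_ne_nil _ hne
      exact not_in_both h0 (Gm.live_sub _ _ (liveL_mem.mp hu)).1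
  rcases Nat.eq_zero_or_pos r with hr0 | hr
  · -- degenerate case r = 0: only fairness matters
    subst hr0
    have huniv : BXI Gm 0 A 1 = Set.univ := BXI_univ_of_r0 rfl le_rfl
    have horkpos : ∀ v : V, 1 ≤ ork Gm 0 A v := by
      intro v
      exact ork_pos (n := 1) (by rw [huniv]; trivial)
    have hL1 : ∀ i, 1 ≤ effL Gm 0 A (st i) (π i) := by
      intro i
      induction i with
      | zero =>
        rw [hst00]
        exact horkpos (π 0)
      | succ i ih =>
        cases hfl : (st (i+1)).flag with
        | true =>
          rw [effL, hfl]
          exact horkpos (π (i+1))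
        | false =>
          rw [effL, hfl]
          simp only [Bool.false_eq_true, if_false]
          rw [hstsucc i, delta_lvl]
          exact ih
    have hBuniv : ∀ i, BXI Gm 0 A (effL Gm 0 A (st i) (π i)) = Set.univ := by
      intro i
      apply Set.eq_univ_of_univ_subset
      rw [← huniv]
      exact BXI_mono (hL1 i)
    have hnoesc : ∀ i, ¬escP Gm 0 A (st i) (π i) := by
      rintro i ⟨u, -, hu2⟩
      rw [hBuniv i] at hu2
      exact hu2 trivial
    refine ⟨ρ1, hρ1, π, hcomp, ?_, ?_⟩
    · intro v w0 hl hinf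
      refine rr_fair hstsucc hmvstep hl ?_
      refine Set.Infinite.mono ?_ hinf
      intro i hi
      refine ⟨hi, hnoesc i, ?_, Or.inl rfl⟩
      rw [hi]
      exact liveL_ne_nil hl
    · intro a ha
      rw [Finset.mem_Icc] at ha
      omega
  · -- main case r ≥ 1
    have hwch : ∀ i, (¬escP Gm r A (st i) (π i) ∧ ¬fairP Gm r A (st i) (π i) ∧
        π i ∈ Gm.V0 ∧ Gm.E (π i) (π (i+1))) ∨
        (π i ∈ Gm.V1 ∧ π (i+1) = mv Gm r A (st i) (π i)) := by
      intro i
      rcases mem_V0_or_V1 Gm (π i) with h | h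
      · exact Or.inl ⟨(hV0cond i h).1, (hV0cond i h).2, h, hEstep i⟩
      · exact Or.inr ⟨h, hmvstep i h⟩
    have hINV : ∀ i, INVp Gm r A Z (st i) (π i) := by
      intro i
      induction i with
      | zero =>
        rw [hst00, hπ0]
        refine ⟨fun _ => hv0, fun hc => absurd hc (by simp [st0]), ?_⟩
        rw [Finset.mem_Icc]
        exact ⟨le_rfl, hr⟩
      | succ i ih =>
        have h := (step_master hZ hr ih (hwch i)).1
        rwa [← hstsucc i] at h
    set LE : ℕ → ℕ := fun i => effL Gm r A (st i) (π i) with hLEdef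
    have hMS : ∀ i, LE (i+1) ≤ LE i ∧
        (escP Gm r A (st i) (π i) → LE (i+1) < LE i) ∧
        ((st (i+1)).flag = false → LE (i+1) = LE i ∧ (st (i+1)).tgt = (st i).tgt ∧
          irk Gm r A (LE i) ((st i).tgt) (π (i+1)) < irk Gm r A (LE i) ((st i).tgt) (π i) ∧
          π i ∈ A ((st i).tgt)) := by
      intro i
      have h := step_master hZ hr (hINV i) (hwch i)
      rw [← hstsucc i] at h
      exact ⟨h.2.1, h.2.2.1, h.2.2.2⟩
    obtain ⟨istar, -, hLEconst⟩ := eventually_const_of_antitone LE 0 (fun i _ => (hMS i).1)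
    have htstep : ∀ i, (st (i+1)).tgt =
        if peP r A (st i) (π i) then wrapT r (st i).tgt else (st i).tgt := by
      intro i
      rw [hstsucc i, delta_tgt, newT_eq]
    have htconst_seg : ∀ i j, i ≤ j →
        (∀ m, i ≤ m → m < j → ¬peP r A (st m) (π m)) → (st j).tgt = (st i).tgt := by
      intro i j hij hno
      induction j with
      | zero =>
        have : i = 0 := by omega
        rw [this]
      | succ j ihj =>
        rcases Nat.lt_or_ge i (j+1) with h1 | h1
        · rw [htstep j, if_neg (hno j (by omega) (by omega)), ihj (by omega)
            (fun m hm1 hm2 => hno m hm1 (by omega))]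
        · have : i = j + 1 := by omega
          rw [this]
    -- phase ends occur infinitely often
    have hpe_inf : {i | peP r A (st i) (π i)}.Infinite := by
      by_contra hfin
      rw [Set.not_infinite] at hfin
      obtain ⟨N1, hN1⟩ := finite_bound hfin
      have hnope : ∀ i, N1 ≤ i → ¬peP r A (st i) (π i) := by
        intro i hi hpe
        exact absurd (hN1 i hpe) (by omega)
      set N2 := max N1 istar with hN2def
      -- fairness moves are finite after N2 (the done-set grows)
      have hfairfin : {i | N2 ≤ i ∧ fairP Gm r A (st i) (π i)}.Finite := by
        by_contra hinf
        have hdstep : ∀ i, N2 ≤ i → (st (i+1)).done =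
            (st i).done ∪ (if fairP Gm r A (st i) (π i) then {π i} else ∅) := by
          intro i hi
          rw [hstsucc i, delta_done, newD, if_neg (hnope i (by omega))]
        have hdmono : ∀ i j, N2 ≤ i → i ≤ j → (st i).done ⊆ (st j).done := by
          intro i j hi hij
          induction j with
          | zero =>
            have : i = 0 := by omega
            rw [this]
          | succ j ihj =>
            rcases Nat.lt_or_ge i (j+1) with h1 | h1
            · refine (ihj (by omega)).trans ?_
              rw [hdstep j (by omega)]
              exact Set.subset_union_left
            · have : i = j + 1 := by omega
              rw [this]
        have hgrow : ∀ k, ∃ i, N2 ≤ i ∧ k ≤ ((st i).done).ncard := by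
          intro k
          induction k with
          | zero => exact ⟨N2, le_rfl, by omega⟩
          | succ k ihk =>
            obtain ⟨i, hi, hk⟩ := ihk
            obtain ⟨j, ⟨hjN2, hjf⟩, hji⟩ := infinite_exists_ge hinf i
            have hnotmem : π j ∉ (st j).done := by
              have h3 := hjf.2.2
              rcases h3 with h3 | h3
              · omega
              · rwa [if_neg (hnope j (by omega))] at h3
            have hsub : (st i).done ⊆ (st j).done := hdmono i j hi hji
            have hcard1 : k ≤ ((st j).done).ncard :=
              hk.trans (Set.ncard_le_ncard hsub (Set.toFinite _))
            refine ⟨j+1, by omega, ?_⟩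
            rw [hdstep j hjN2, if_pos hjf]
            have : (st j).done ∪ {π j} = insert (π j) (st j).done := by
              rw [Set.union_singleton]
            rw [this, Set.ncard_insert_of_notMem hnotmem (Set.toFinite _)]
            omega
        obtain ⟨i, -, hcard⟩ := hgrow (Fintype.card V + 1)
        have : ((st i).done).ncard ≤ Fintype.card V := by
          have := Set.ncard_le_ncard (Set.subset_univ ((st i).done)) (Set.toFinite _)
          simpa [Set.ncard_univ] using this
        omega
      obtain ⟨N3', hN3'⟩ := finite_bound hfairfin
      set N3 := max N3' N2 with hN3def
      have hnofair : ∀ i, N3 ≤ i → ¬fairP Gm r A (st i) (π i) := by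
        intro i hi hf
        exact absurd (hN3' i ⟨by omega, hf⟩) (by omega)
      have htconst : ∀ i, N3 ≤ i → (st i).tgt = (st N3).tgt := by
        intro i hi
        exact htconst_seg N3 i hi (fun m hm1 _ => hnope m (by omega))
      have hflagf : ∀ i, N3 ≤ i → (st (i+1)).flag = false := by
        intro i hi
        rw [hstsucc i, flag_false_iff]
        refine ⟨?_, hnofair i hi, hnope i (by omega)⟩
        intro hesc
        have h1 := (hMS i).2.1 hesc
        have h2 := hLEconst i (by omega)
        have h3 := hLEconst (i+1) (by omega)
        omega
      have hdec : ∀ d,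
          irk Gm r A (LE N3) ((st N3).tgt) (π (N3 + d + 1)) <
            irk Gm r A (LE N3) ((st N3).tgt) (π (N3 + d)) := by
        intro d
        have h4 := (hMS (N3 + d)).2.2 (hflagf (N3 + d) (by omega))
        have hLeq : LE (N3 + d) = LE N3 := by
          have h5 := hLEconst (N3 + d) (by omega)
          have h6 := hLEconst N3 (by omega)
          omega
        have hteq : (st (N3 + d)).tgt = (st N3).tgt := htconst (N3+d) (by omega)
        rw [hLeq, hteq] at h4
        exact h4.2.2.1
      refine no_strict_anti
        (fun d => irk Gm r A (LE N3) ((st N3).tgt) (π (N3 + d))) (fun d => ?_)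
      have h := hdec d
      simp only [← Nat.add_assoc]
      exact h
    -- finding phase ends with minimality
    have hnext : ∀ N, ∃ i, N ≤ i ∧ peP r A (st i) (π i) ∧
        ∀ m, N ≤ m → m < i → ¬peP r A (st m) (π m) := by
      intro N
      have hne : {i | peP r A (st i) (π i) ∧ N ≤ i}.Nonempty := by
        obtain ⟨i, hi1, hi2⟩ := infinite_exists_ge hpe_inf N
        exact ⟨i, hi1, hi2⟩
      have hmem : sInf {i | peP r A (st i) (π i) ∧ N ≤ i} ∈
          {i | peP r A (st i) (π i) ∧ N ≤ i} := Nat.sInf_mem hne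
      refine ⟨sInf {i | peP r A (st i) (π i) ∧ N ≤ i}, hmem.2, hmem.1, ?_⟩
      intro m hm1 hm2 hmpe
      have := Nat.sInf_le (s := {i | peP r A (st i) (π i) ∧ N ≤ i}) ⟨hmpe, hm1⟩
      omega
    -- phase-end targets cycle through all values
    have hcycle : ∀ N, ∃ i0, N ≤ i0 ∧ peP r A (st i0) (π i0) ∧
        ∀ k, ∃ i, i0 ≤ i ∧ peP r A (st i) (π i) ∧
          (st i).tgt = (wrapT r)^[k] ((st i0).tgt) := by
      intro N
      obtain ⟨i0, hi0N, hi0pe, -⟩ := hnext N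
      refine ⟨i0, hi0N, hi0pe, ?_⟩
      intro k
      induction k with
      | zero => exact ⟨i0, le_rfl, hi0pe, rfl⟩
      | succ k ihk =>
        obtain ⟨i, hi, hipe, hieq⟩ := ihk
        obtain ⟨j, hj, hjpe, hjmin⟩ := hnext (i+1)
        refine ⟨j, by omega, hjpe, ?_⟩
        have h1 : (st j).tgt = (st (i+1)).tgt :=
          htconst_seg (i+1) j hj (fun m hm1 hm2 => hjmin m hm1 hm2)
        rw [h1, htstep i, if_pos hipe, hieq]
        exact (Function.iterate_succ_apply' (wrapT r) k _).symm
    refine ⟨ρ1, hρ1, π, hcomp, ?_, ?_⟩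
    · -- strong transition fairness
      intro v w0 hl hinf
      refine rr_fair hstsucc hmvstep hl ?_
      by_contra hFfin
      rw [Set.not_infinite] at hFfin
      obtain ⟨NF, hNF⟩ := finite_bound hFfin
      set N4 := max NF istar with hN4def
      have hnoesc : ∀ i, N4 ≤ i → π i = v → ¬escP Gm r A (st i) (π i) := by
        intro i hi hiv hesc
        have h1 := (hMS i).2.1 hesc
        have h2 := hLEconst i (by omega)
        have h3 := hLEconst (i+1) (by omega)
        omega
      obtain ⟨j, hjN4, hjpe, -⟩ := hnext N4
      obtain ⟨i, hiv, hij⟩ := infinite_exists_ge hinf (j+1)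
      have hnotdone : ∀ m, j + 1 ≤ m → m ≤ i → v ∉ (st m).done := by
        intro m
        induction m with
        | zero => omega
        | succ m ihm =>
          intro h1 h2 hmem
          rw [hstsucc m, delta_done] at hmem
          rcases hmem with hmem | hmem
          · rw [newD] at hmem
            split_ifs at hmem with hpm
            · exact absurd hmem (Set.notMem_empty v)
            · rcases Nat.lt_or_ge j m with h3 | h3
              · exact ihm (by omega) (by omega) hmem
              · have : m = j := by omega
                rw [this] at hpm
                exact hpm hjpe
          · split_ifs at hmem with hfm
            · have hmv2 : π m = v := by
                have h9 : v ∈ ({π m} : Set V) := hmem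
                simpa using h9.symm
              have : m ∈ {i | π i = v ∧ fairP Gm r A (st i) (π i)} := ⟨hmv2, hfm⟩
              have := hNF m this
              omega
            · exact absurd hmem (Set.notMem_empty v)
      have hfairi : fairP Gm r A (st i) (π i) := by
        refine ⟨hnoesc i (by omega) hiv, ?_, ?_⟩
        · rw [hiv]
          exact liveL_ne_nil hl
        · refine Or.inr ?_
          split_ifs with hpi
          · exact Set.notMem_empty _
          · rw [hiv]
            exact hnotdone i (by omega) le_rfl
      have : i ∈ {i | π i = v ∧ fairP Gm r A (st i) (π i)} := ⟨hiv, hfairi⟩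
      have := hNF i this
      omega
    · -- every A a is left infinitely often
      intro a ha N
      obtain ⟨i0, hi0N, hi0pe, hcyc⟩ := hcycle N
      have ht0 : (st i0).tgt ∈ Finset.Icc 1 r := (hINV i0).2.2
      obtain ⟨k, hk⟩ := wrapT_reach hr ht0 ha
      obtain ⟨i, hi, hipe, hieq⟩ := hcyc k
      refine ⟨i, by omega, ?_⟩
      have := hipe.2
      rwa [hieq, hk] at this
end FairAux
/-- the fixpoint νY_0.μX_0.⋃_a νY_a.[Apre(Y_0,X_0) ∪ (A_a ∩ Cpre(Y_a))]
equals the winning region of Player 0 in the fair adversarial generalized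
co-Büchi game, and a memoryless winning Player-0 strategy exists on it. -/
theorem fair_adversarial_gen_cobuchi {V : Type*} [Fintype V]
    (Gm : LiveGameGraph V) (r : ℕ) (A : ℕ → Set V) (Zstar : Set V)
    (hZ : Zstar = gfpSet fun Y0 => lfpSet fun X0 =>
      ⋃ a ∈ Finset.Icc 1 r, gfpSet fun Ya =>
        Gm.apre Y0 X0 ∪ (A a ∩ Gm.cpre Ya)) :
    Zstar = Gm.WinningRegion
        (fun π => ∃ a ∈ Finset.Icc 1 r, ∃ N, ∀ i ≥ N, π i ∈ A a) ∧
    ∃ σ : V → V, (∀ v ∈ Gm.V0, Gm.E v (σ v)) ∧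
      ∀ v0 ∈ Zstar,
        Gm.WinsFrom
          (fun π => ∃ a ∈ Finset.Icc 1 r, ∃ N, ∀ i ≥ N, π i ∈ A a)
          (fun _ v => σ v) v0 := by
  have hZ' : Zstar = gfpSet (FairAux.gYop Gm r A) := hZ
  have hfix : Zstar = lfpSet (FairAux.fXop Gm r A Zstar) := FairAux.Zfix hZ'
  have hsub2 : Gm.WinningRegion
      (fun π => ∃ a ∈ Finset.Icc 1 r, ∃ N, ∀ i ≥ N, π i ∈ A a) ⊆ Zstar := by
    intro v hvW
    by_contra hvZ
    obtain ⟨ρ0, hρ0, hwin⟩ := hvW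
    obtain ⟨ρ1, hρ1, π, hcompl, hfair, hnot⟩ := FairAux.complete_spoiler hZ' hvZ ρ0 hρ0
    obtain ⟨a, ha, N, hN⟩ := hwin ρ1 hρ1 π hcompl hfair
    obtain ⟨i, hiN, hi⟩ := hnot a ha N
    exact hi (hN i hiN)
  constructor
  · apply Set.Subset.antisymm
    · intro v0 hv0
      exact ⟨_, FairAux.sound_winsFrom hfix hv0⟩
    · exact hsub2
  · exact ⟨FairAux.sigS Gm r A Zstar, fun v _ => FairAux.sigS_E v,
      fun v0 hv0 => FairAux.sound_winsFrom hfix hv0⟩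
end
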